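/- arXiv:2102.02960 — 8 statements merged into one kernel-verified Lean document; each statement's English description precedes it below -/
import Mathlib

section
/- Let V be a real inner product space with inner product ⟨·,·⟩ and norm ‖·‖. Let k ≥ 0 be an integer, σ ∈ [1/2, 1], and let c_0, c_1, …, c_k be reals with 0 < c_k < c_{k−1} < ⋯ < c_0 and, if k ≥ 1, (2σ−1)c_0 − σc_1 ≥ 0. Then for any v^0, v^1, …, v^{k+1} ∈ V: Σ_{l=0}^{k} c_l ⟨v^{k−l+1} − v^{k−l}, σv^{k+1} + (1−σ)v^k⟩ ≥ (1/2) Σ_{l=0}^{k} c_l (‖v^{k−l+1}‖² − ‖v^{k−l}‖²). -/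
open Finset

open Finset

private lemma abel_aux (c b : ℕ → ℝ) (hb : ∀ j, 0 ≤ b j) :
    ∀ n : ℕ, (∀ j, 1 ≤ j → j ≤ n → c (j + 1) ≤ c j) →
    c (n + 1) * b (n + 1) - c 1 * b 0 ≤
      ∑ i ∈ Finset.range (n + 1), c (i + 1) * (b (i + 1) - b i) := by
  intro n
  induction n with
  | zero =>
    intro _
    rw [Finset.sum_range_one]
    nlinarith [le_refl (0:ℝ)]
  | succ n ih =>
    intro hc
    rw [Finset.sum_range_succ]
    have h1 := ih fun j hj1 hj2 => hc j hj1 (by omega)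
    have h2 : c (n + 1 + 1) ≤ c (n + 1) := hc (n + 1) (by omega) le_rfl
    nlinarith [mul_nonneg (sub_nonneg.2 h2) (hb (n + 1))]



/-- Alikhanov's inequality: let `V` be a real inner product space, `k ≥ 0`,
`σ ∈ [1/2, 1]`, and `c_0 > c_1 > ⋯ > c_k > 0` reals with
`(2σ−1)c_0 − σc_1 ≥ 0` when `k ≥ 1`. Then for any `v^0, …, v^{k+1} ∈ V`,
`Σ_{l=0}^{k} c_l ⟨v^{k−l+1} − v^{k−l}, σv^{k+1} + (1−σ)v^k⟩
  ≥ (1/2) Σ_{l=0}^{k} c_l (‖v^{k−l+1}‖² − ‖v^{k−l}‖²)`. -/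
theorem stmt_6 {V : Type*} [NormedAddCommGroup V] [InnerProductSpace ℝ V]
    (k : ℕ) (σ : ℝ) (hσ : σ ∈ Set.Icc (1/2 : ℝ) 1)
    (c : ℕ → ℝ) (hck : 0 < c k) (hmono : ∀ l < k, c (l + 1) < c l)
    (hc01 : 1 ≤ k → (2*σ - 1) * c 0 - σ * c 1 ≥ 0)
    (v : ℕ → V) :
    ∑ l ∈ Finset.range (k + 1),
        c l * (inner ℝ (v (k - l + 1) - v (k - l)) (σ • v (k + 1) + (1 - σ) • v k) : ℝ)
      ≥ (1/2) * ∑ l ∈ Finset.range (k + 1),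
          c l * (‖v (k - l + 1)‖ ^ 2 - ‖v (k - l)‖ ^ 2) := by
  obtain ⟨hσ1, hσ2⟩ := hσ
  have hle : ∀ i j, i ≤ j → j ≤ k → c j ≤ c i := by
    intro i j hij
    induction j, hij using Nat.le_induction with
    | base => intro _; exact le_rfl
    | succ n hn ih =>
      intro h
      exact le_trans (le_of_lt (hmono n (by omega))) (ih (by omega))
  have hpos : ∀ l, l ≤ k → 0 < c l := fun l hl =>
    lt_of_lt_of_le hck (hle l k hl le_rfl)
  set u : V := σ • v (k + 1) + (1 - σ) • v k with hu
  set t : ℕ → V := fun m => σ • (v (k + 1) - v k) + (v k - v (k - m)) with ht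
  have hb0 : ‖t 0‖ ^ 2 = σ ^ 2 * ‖v (k + 1) - v k‖ ^ 2 := by
    simp [ht, norm_smul, mul_pow, sq_abs]
  have hterm : ∀ l, 1 ≤ l → l ≤ k →
      c l * (inner ℝ (v (k - l + 1) - v (k - l)) u : ℝ)
        - 1/2 * (c l * (‖v (k - l + 1)‖ ^ 2 - ‖v (k - l)‖ ^ 2))
      = 1/2 * (c l * (‖t l‖ ^ 2 - ‖t (l - 1)‖ ^ 2)) := by
    intro l h1 h2
    have hk1 : k - (l - 1) = k - l + 1 := by omega
    have hTprev : t (l - 1) = t l - (v (k - l + 1) - v (k - l)) := by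
      simp only [ht, hk1]; abel
    have hueq : u = t l + v (k - l) := by
      simp only [hu, ht]; module
    rw [hueq, hTprev]
    simp only [← real_inner_self_eq_norm_sq, inner_sub_left, inner_sub_right,
      inner_add_left, inner_add_right]
    rw [real_inner_comm (t l) (v (k - l + 1)), real_inner_comm (t l) (v (k - l)),
      real_inner_comm (v (k - l)) (v (k - l + 1))]
    ring
  have hterm0 : c 0 * (inner ℝ (v (k + 1) - v k) u : ℝ)
      - 1/2 * (c 0 * (‖v (k + 1)‖ ^ 2 - ‖v k‖ ^ 2))
      = 1/2 * ((2*σ - 1) * c 0 * ‖v (k + 1) - v k‖ ^ 2) := by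
    have hueq0 : u = (σ - 1/2 : ℝ) • (v (k + 1) - v k)
        + (1/2 : ℝ) • (v (k + 1) + v k) := by
      simp only [hu]; module
    rw [hueq0]
    simp only [← real_inner_self_eq_norm_sq, inner_sub_left, inner_sub_right,
      inner_add_left, inner_add_right, real_inner_smul_right]
    rw [real_inner_comm (v k) (v (k + 1))]
    ring
  rw [ge_iff_le, ← sub_nonneg]
  have hsplit : (∑ l ∈ Finset.range (k + 1),
        c l * (inner ℝ (v (k - l + 1) - v (k - l)) u : ℝ))
      - (1/2) * ∑ l ∈ Finset.range (k + 1),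
          c l * (‖v (k - l + 1)‖ ^ 2 - ‖v (k - l)‖ ^ 2)
      = (∑ i ∈ Finset.range k, 1/2 * (c (i + 1) * (‖t (i + 1)‖ ^ 2 - ‖t i‖ ^ 2)))
        + 1/2 * ((2*σ - 1) * c 0 * ‖v (k + 1) - v k‖ ^ 2) := by
    rw [Finset.mul_sum, ← Finset.sum_sub_distrib, Finset.sum_range_succ']
    have e2 : c 0 * (inner ℝ (v (k - 0 + 1) - v (k - 0)) u : ℝ)
        - 1/2 * (c 0 * (‖v (k - 0 + 1)‖ ^ 2 - ‖v (k - 0)‖ ^ 2))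
        = 1/2 * ((2*σ - 1) * c 0 * ‖v (k + 1) - v k‖ ^ 2) := by
      simpa using hterm0
    rw [e2]
    congr 1
    refine Finset.sum_congr rfl fun i hi => ?_
    have hi' := Finset.mem_range.mp hi
    have h := hterm (i + 1) (by omega) (by omega)
    simpa using h
  rw [hsplit]
  rcases Nat.eq_zero_or_pos k with hk | hk
  · subst hk
    simp only [Finset.range_zero, Finset.sum_empty, zero_add]
    have := mul_nonneg (mul_nonneg (by linarith : (0:ℝ) ≤ 2*σ - 1)
      (le_of_lt (hpos 0 le_rfl))) (sq_nonneg ‖v (0 + 1) - v 0‖)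
    nlinarith [this]
  · obtain ⟨k', rfl⟩ : ∃ k', k = k' + 1 := ⟨k - 1, by omega⟩
    have habel := abel_aux c (fun m => ‖t m‖ ^ 2) (fun j => sq_nonneg _) k'
      (fun j hj1 hj2 => le_of_lt (hmono j (by omega)))
    simp only [hb0] at habel
    have hW : 0 ≤ ((2*σ - 1) * c 0 - σ ^ 2 * c 1) * ‖v (k' + 1 + 1) - v (k' + 1)‖ ^ 2 := by
      apply mul_nonneg _ (sq_nonneg _)
      have h01 := hc01 (by omega)
      have h1 : 0 < c 1 := hpos 1 (by omega)
      nlinarith [mul_nonneg (mul_nonneg (by linarith : (0:ℝ) ≤ σ)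
        (by linarith : (0:ℝ) ≤ 1 - σ)) h1.le]
    have htk : 0 ≤ c (k' + 1) * ‖t (k' + 1)‖ ^ 2 := mul_nonneg (le_of_lt hck) (sq_nonneg _)
    rw [← Finset.mul_sum]
    nlinarith [habel, hW, htk]
end

section
/- On the space °U of grid functions vanishing on the boundary of the d-dimensional grid, the map (u, w) ↦ (A_h u, −Δ_h w) is an inner product: it is bilinear, symmetric, and (A_h u, −Δ_h u) > 0 for every nonzero u ∈ °U. -/
open Classical

noncomputable section

/-- an index `j` is interior if `1 ≤ j k ≤ m k − 1` in every coordinate. -/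
def interiorIdx (d : ℕ) (m : Fin d → ℕ) (j : Fin d → ℕ) : Prop :=
  ∀ k, 1 ≤ j k ∧ j k ≤ m k - 1

/-- the shift `j + δ_k`. -/
def up {d : ℕ} (k : Fin d) (j : Fin d → ℕ) : Fin d → ℕ :=
  Function.update j k (j k + 1)

/-- the shift `j − δ_k`. -/
def down {d : ℕ} (k : Fin d) (j : Fin d → ℕ) : Fin d → ℕ :=
  Function.update j k (j k - 1)

/-- the second difference operator `δ_k²`. -/
def d2 {d : ℕ} (Δx : Fin d → ℝ) (k : Fin d) (u : (Fin d → ℕ) → ℝ) : (Fin d → ℕ) → ℝ :=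
  fun j => (u (up k j) - 2 * u j + u (down k j)) / (Δx k) ^ 2

/-- the averaging operator `A_k` (identity at boundary indices). -/
def Aop {d : ℕ} (m : Fin d → ℕ) (k : Fin d) (u : (Fin d → ℕ) → ℝ) : (Fin d → ℕ) → ℝ :=
  fun j => if interiorIdx d m j then (u (down k j) + 10 * u j + u (up k j)) / 12 else u j

/-- the discrete Laplacian `Δ_h = Σ_k δ_k²`. -/
def lapH {d : ℕ} (Δx : Fin d → ℝ) (u : (Fin d → ℕ) → ℝ) : (Fin d → ℕ) → ℝ :=
  fun j => ∑ k, d2 Δx k u j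

/-- the compact operator `A_h = ∏_k A_k`. -/
def Ah {d : ℕ} (m : Fin d → ℕ) (u : (Fin d → ℕ) → ℝ) : (Fin d → ℕ) → ℝ :=
  (List.finRange d).foldr (fun k v => Aop m k v) u

/-- the operator `Λ_h = Σ_k (∏_{l≠k} A_l) δ_k²`. -/
def LamH {d : ℕ} (m : Fin d → ℕ) (Δx : Fin d → ℝ) (u : (Fin d → ℕ) → ℝ) :
    (Fin d → ℕ) → ℝ :=
  fun j => ∑ k,
    ((List.finRange d).foldr (fun l v => if l = k then v else Aop m l v) (d2 Δx k u)) j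

/-- the discrete inner product `(u,w) = (∏_r Δx^{(r)}) Σ_{j interior} u_j w_j`. -/
def ip {d : ℕ} (m : Fin d → ℕ) (Δx : Fin d → ℝ) (u w : (Fin d → ℕ) → ℝ) : ℝ :=
  (∏ r, Δx r) * ∑ j ∈ Fintype.piFinset (fun k => Finset.Icc 1 (m k - 1)), u j * w j

/-- membership in `°U`: the grid function vanishes at every non-interior index. -/
def zeroBnd {d : ℕ} (m : Fin d → ℕ) (u : (Fin d → ℕ) → ℝ) : Prop :=
  ∀ j, ¬ interiorIdx d m j → u j = 0

/-- the squared seminorm `|u|²_{1,k}`. -/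
def semi1sq {d : ℕ} (m : Fin d → ℕ) (Δx : Fin d → ℝ) (k : Fin d)
    (u : (Fin d → ℕ) → ℝ) : ℝ :=
  (∏ r, Δx r) *
    ∑ j ∈ Fintype.piFinset
      (fun l => if l = k then Finset.range (m l) else Finset.Icc 1 (m l - 1)),
      ((u (up k j) - u j) / Δx k) ^ 2

/-- the squared seminorm `|u|₁² = Σ_k |u|²_{1,k}`. -/
def norm1sq {d : ℕ} (m : Fin d → ℕ) (Δx : Fin d → ℝ) (u : (Fin d → ℕ) → ℝ) : ℝ :=
  ∑ k, semi1sq m Δx k u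

open RealInnerProductSpace

section Abstract

variable {F : Type*} [NormedAddCommGroup F] [InnerProductSpace ℝ F]

lemma symm_mul_of_commute {S T : F →ₗ[ℝ] F} (hS : S.IsSymmetric) (hT : T.IsSymmetric)
    (h : S * T = T * S) : (S * T).IsSymmetric := fun x y => by
  calc ⟪(S * T) x, y⟫ = ⟪S (T x), y⟫ := rfl
    _ = ⟪T x, S y⟫ := hS _ _
    _ = ⟪x, T (S y)⟫ := hT _ _
    _ = ⟪x, (T * S) y⟫ := rfl
    _ = ⟪x, (S * T) y⟫ := by rw [← h]

lemma posdef_comp [FiniteDimensional ℝ F] {S T : F →ₗ[ℝ] F}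
    (hS : S.IsSymmetric) (hT : T.IsSymmetric) (hST : S * T = T * S)
    (hSpos : ∀ x, x ≠ 0 → 0 < ⟪S x, x⟫) (hTpos : ∀ x, x ≠ 0 → 0 < ⟪T x, x⟫) :
    ∀ x, x ≠ 0 → 0 < ⟪(S * T) x, x⟫ := by
  have hR : (S * T).IsSymmetric := symm_mul_of_commute hS hT hST
  have hTne : ∀ v : F, v ≠ 0 → T v ≠ 0 := by
    intro v hv hTv
    have := hTpos v hv
    rw [hTv] at this
    simp at this
  have hn : Module.finrank ℝ F = Module.finrank ℝ F := rfl
  set b := hR.eigenvectorBasis hn with hb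
  set μ := hR.eigenvalues hn with hμdef
  have happ : ∀ i, (S * T) (b i) = μ i • b i := fun i => by
    exact_mod_cast hR.apply_eigenvectorBasis hn i
  have hμpos : ∀ i, 0 < μ i := by
    intro i
    have hv : b i ≠ 0 := b.toBasis.ne_zero i
    have h1 : ⟪(S * T) (b i), T (b i)⟫ = μ i * ⟪b i, T (b i)⟫ := by
      rw [happ i, real_inner_smul_left]
    have h2 : 0 < ⟪(S * T) (b i), T (b i)⟫ := hSpos (T (b i)) (hTne _ hv)
    have h3 : 0 < ⟪b i, T (b i)⟫ := by
      rw [real_inner_comm]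
      exact hTpos _ hv
    by_contra hle
    push_neg at hle
    have : μ i * ⟪b i, T (b i)⟫ ≤ 0 := mul_nonpos_of_nonpos_of_nonneg hle h3.le
    rw [← h1] at this
    exact absurd h2 (not_lt.2 this)
  intro x hx
  have hrepr : ∑ i, b.repr x i • b i = x := b.sum_repr x
  have hexp : ⟪(S * T) x, x⟫ = ∑ i, μ i * (b.repr x i) ^ 2 := by
    have h1 : (S * T) x = ∑ i, (μ i * b.repr x i) • b i := by
      conv_lhs => rw [← hrepr]
      rw [map_sum]
      exact Finset.sum_congr rfl fun i _ => by rw [map_smul, happ i, smul_smul, mul_comm]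
    rw [h1, sum_inner]
    refine Finset.sum_congr rfl fun i _ => ?_
    rw [real_inner_smul_left, ← b.repr_apply_apply x i]
    ring
  rw [hexp]
  have hex : ∃ i, b.repr x i ≠ 0 := by
    by_contra hc
    push_neg at hc
    apply hx
    rw [← hrepr]
    simp [hc]
  obtain ⟨i0, hi0⟩ := hex
  refine Finset.sum_pos' (fun i _ => ?_) ⟨i0, Finset.mem_univ _, ?_⟩
  · exact mul_nonneg (hμpos i).le (sq_nonneg _)
  · exact mul_pos (hμpos i0) (by positivity)

lemma inner_self_pos' {x : F} (hx : x ≠ 0) : 0 < ⟪x, x⟫ := by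
  rw [real_inner_self_eq_norm_sq]
  exact pow_pos (norm_pos_iff.2 hx) 2

end Abstract

namespace Stmt7Aux

variable {d : ℕ} (m : Fin d → ℕ)

/-- the interior index finset -/
def Igrid : Finset (Fin d → ℕ) := Fintype.piFinset fun k => Finset.Icc 1 (m k - 1)

lemma mem_Igrid {j : Fin d → ℕ} : j ∈ Igrid m ↔ interiorIdx d m j := by
  simp [Igrid, interiorIdx, Fintype.mem_piFinset, Finset.mem_Icc]

variable {m}

@[simp] lemma up_apply_self (k : Fin d) (j : Fin d → ℕ) : up k j k = j k + 1 := by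
  simp [up]

@[simp] lemma down_apply_self (k : Fin d) (j : Fin d → ℕ) : down k j k = j k - 1 := by
  simp [down]

lemma up_apply_ne {k l : Fin d} (h : l ≠ k) (j : Fin d → ℕ) : up k j l = j l := by
  simp [up, Function.update_of_ne h]

lemma down_apply_ne {k l : Fin d} (h : l ≠ k) (j : Fin d → ℕ) : down k j l = j l := by
  simp [down, Function.update_of_ne h]

@[simp] lemma down_up (k : Fin d) (j : Fin d → ℕ) : down k (up k j) = j := by
  funext l
  rcases eq_or_ne l k with rfl | h
  · simp
  · simp [up_apply_ne h, down_apply_ne h]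

lemma up_down (k : Fin d) {j : Fin d → ℕ} (h : 1 ≤ j k) : up k (down k j) = j := by
  funext l
  rcases eq_or_ne l k with rfl | hl
  · simp; omega
  · simp [up_apply_ne hl, down_apply_ne hl]

/-- generic commutation of coordinatewise shifts at distinct coordinates -/
lemma shift_comm {k l : Fin d} (h : k ≠ l) (f g : ℕ → ℕ) (j : Fin d → ℕ) :
    Function.update (Function.update j l (g (j l))) k (f (j k))
      = Function.update (Function.update j k (f (j k))) l (g (j l)) := by
  rw [Function.update_comm h]

lemma up_up_comm {k l : Fin d} (h : k ≠ l) (j : Fin d → ℕ) :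
    up k (up l j) = up l (up k j) := by
  simp only [up, Function.update_of_ne h, Function.update_of_ne h.symm]
  exact (Function.update_comm h _ _ _).symm

lemma up_down_comm {k l : Fin d} (h : k ≠ l) (j : Fin d → ℕ) :
    up k (down l j) = down l (up k j) := by
  simp only [up, down, Function.update_of_ne h, Function.update_of_ne h.symm]
  exact (Function.update_comm h _ _ _).symm

lemma down_down_comm {k l : Fin d} (h : k ≠ l) (j : Fin d → ℕ) :
    down k (down l j) = down l (down k j) := by
  simp only [down, Function.update_of_ne h, Function.update_of_ne h.symm]
  exact (Function.update_comm h _ _ _).symm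


variable (m) in
/-- zero-extension of a function on interior indices -/
def extf : (↥(Igrid m) → ℝ) →ₗ[ℝ] ((Fin d → ℕ) → ℝ) where
  toFun x j := if h : j ∈ Igrid m then x ⟨j, h⟩ else 0
  map_add' x y := by funext j; by_cases h : j ∈ Igrid m <;> simp [h]
  map_smul' c x := by funext j; by_cases h : j ∈ Igrid m <;> simp [h]

lemma extf_mem (x : ↥(Igrid m) → ℝ) {j : Fin d → ℕ} (h : j ∈ Igrid m) :
    extf m x j = x ⟨j, h⟩ := dif_pos h

lemma extf_coe (x : ↥(Igrid m) → ℝ) (i : ↥(Igrid m)) : extf m x i.1 = x i := by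
  rw [extf_mem x i.2]

lemma extf_not_mem (x : ↥(Igrid m) → ℝ) {j : Fin d → ℕ} (h : j ∉ Igrid m) :
    extf m x j = 0 := dif_neg h

lemma zeroBnd_extf (x : ↥(Igrid m) → ℝ) (j : Fin d → ℕ) (h : ¬ interiorIdx d m j) :
    extf m x j = 0 := extf_not_mem x (fun hj => h ((mem_Igrid m).1 hj))

variable (m) in
abbrev E : Type _ := EuclideanSpace ℝ ↥(Igrid m)

variable (m) (Δx : Fin d → ℝ) in
/-- the operator `−δ_k²` with Dirichlet truncation, on interior functions -/
def Pop (k : Fin d) : Module.End ℝ (E m) where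
  toFun x := WithLp.toLp 2 fun i => (2 * x i - extf m x (up k i.1) - extf m x (down k i.1)) / Δx k ^ 2
  map_add' x y := by
    ext i
    show (2 * (x + y) i - extf m (x + y) (up k i.1) - extf m (x + y) (down k i.1)) / Δx k ^ 2 = _
    rw [map_add]
    show _ = (2 * x i - extf m x (up k i.1) - extf m x (down k i.1)) / Δx k ^ 2
      + (2 * y i - extf m y (up k i.1) - extf m y (down k i.1)) / Δx k ^ 2
    simp only [PiLp.add_apply, Pi.add_apply]
    ring
  map_smul' c x := by
    ext i
    show (2 * (c • x) i - extf m (c • x) (up k i.1) - extf m (c • x) (down k i.1)) / Δx k ^ 2 = _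
    rw [map_smul]
    show _ = c * ((2 * x i - extf m x (up k i.1) - extf m x (down k i.1)) / Δx k ^ 2)
    simp only [PiLp.smul_apply, Pi.smul_apply, smul_eq_mul]
    ring

lemma Pop_apply (k : Fin d) (x : E m) (i : ↥(Igrid m)) :
    Pop m Δx k x i = (2 * x i - extf m x (up k i.1) - extf m x (down k i.1)) / Δx k ^ 2 := rfl

variable (m) (Δx) in
/-- the operator `A_k` on interior functions -/
def Aopt (k : Fin d) : Module.End ℝ (E m) :=
  LinearMap.id - (Δx k ^ 2 / 12) • Pop m Δx k

variable {Δx : Fin d → ℝ}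


lemma inner_eq_sum (x y : E m) :
    ⟪x, y⟫ = ∑ j ∈ Igrid m, extf m x j * extf m y j := by
  have h1 : ⟪x, y⟫ = ∑ i : ↥(Igrid m), x i * y i := by
    simp [PiLp.inner_apply, RCLike.inner_apply, mul_comm]
  rw [h1, ← Finset.sum_coe_sort (Igrid m) (fun j => extf m x j * extf m y j)]
  exact Finset.sum_congr rfl fun i _ => by rw [extf_coe, extf_coe]

lemma one_le_of_interior {j : Fin d → ℕ} (h : j ∈ Igrid m) (k : Fin d) : 1 ≤ j k :=
  (((mem_Igrid m).1 h) k).1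

lemma le_of_interior {j : Fin d → ℕ} (h : j ∈ Igrid m) (k : Fin d) : j k ≤ m k - 1 :=
  (((mem_Igrid m).1 h) k).2

/-- summation by parts / shift lemma -/
lemma sum_shift (k : Fin d) (u v : (Fin d → ℕ) → ℝ)
    (hu : ∀ j, ¬ interiorIdx d m j → u j = 0) (hv : ∀ j, ¬ interiorIdx d m j → v j = 0) :
    ∑ j ∈ Igrid m, u (up k j) * v j = ∑ j ∈ Igrid m, u j * v (down k j) := by
  have hL : ∑ j ∈ (Igrid m).filter (fun j => up k j ∈ Igrid m), u (up k j) * v j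
      = ∑ j ∈ Igrid m, u (up k j) * v j := by
    apply Finset.sum_filter_of_ne
    intro j _ hne
    by_contra hmem
    exact hne (by rw [hu _ (fun hi => hmem ((mem_Igrid m).2 hi)), zero_mul])
  have hR : ∑ j ∈ (Igrid m).filter (fun j => down k j ∈ Igrid m), u j * v (down k j)
      = ∑ j ∈ Igrid m, u j * v (down k j) := by
    apply Finset.sum_filter_of_ne
    intro j _ hne
    by_contra hmem
    exact hne (by rw [hv _ (fun hi => hmem ((mem_Igrid m).2 hi)), mul_zero])
  rw [← hL, ← hR]
  refine Finset.sum_nbij' (up k) (down k) ?_ ?_ ?_ ?_ ?_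
  · intro j hj
    rw [Finset.mem_filter] at hj ⊢
    exact ⟨hj.2, by rw [down_up]; exact hj.1⟩
  · intro j hj
    rw [Finset.mem_filter] at hj ⊢
    exact ⟨hj.2, by rw [up_down k (one_le_of_interior hj.1 k)]; exact hj.1⟩
  · intro j _; exact down_up k j
  · intro j hj
    rw [Finset.mem_filter] at hj
    exact up_down k (one_le_of_interior hj.1 k)
  · intro j _; rw [down_up]

variable (m) in
def Rgrid (k : Fin d) : Finset (Fin d → ℕ) :=
  Fintype.piFinset fun l => if l = k then Finset.range (m l) else Finset.Icc 1 (m l - 1)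

lemma mem_Rgrid {k : Fin d} {j : Fin d → ℕ} :
    j ∈ Rgrid m k ↔ j k < m k ∧ ∀ l, l ≠ k → (1 ≤ j l ∧ j l ≤ m l - 1) := by
  simp only [Rgrid, Fintype.mem_piFinset]
  constructor
  · intro h
    refine ⟨by simpa using h k, fun l hl => ?_⟩
    have := h l
    rw [if_neg hl] at this
    exact Finset.mem_Icc.1 this
  · rintro ⟨h1, h2⟩ l
    by_cases hl : l = k
    · subst hl; simpa using h1
    · rw [if_neg hl]; exact Finset.mem_Icc.2 (h2 l hl)

lemma Igrid_subset_Rgrid (hm : ∀ k, 2 ≤ m k) (k : Fin d) : Igrid m ⊆ Rgrid m k := by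
  intro j hj
  rw [mem_Rgrid]
  refine ⟨?_, fun l _ => ⟨one_le_of_interior hj l, le_of_interior hj l⟩⟩
  have := le_of_interior hj k
  have := hm k
  omega

/-- sum of shifted squares over interior is the sum of squares -/
lemma sum_up_sq (hm : ∀ k, 2 ≤ m k) (k : Fin d) (u : (Fin d → ℕ) → ℝ)
    (hu : ∀ j, ¬ interiorIdx d m j → u j = 0) :
    ∑ j ∈ Rgrid m k, u (up k j) ^ 2 = ∑ j ∈ Igrid m, u j ^ 2 := by
  have hL : ∑ j ∈ (Rgrid m k).filter (fun j => up k j ∈ Igrid m), u (up k j) ^ 2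
      = ∑ j ∈ Rgrid m k, u (up k j) ^ 2 := by
    apply Finset.sum_filter_of_ne
    intro j _ hne
    by_contra hmem
    exact hne (by rw [hu _ (fun hi => hmem ((mem_Igrid m).2 hi))]; ring)
  rw [← hL]
  refine Finset.sum_nbij' (up k) (down k) ?_ ?_ ?_ ?_ ?_
  · intro j hj; exact (Finset.mem_filter.1 hj).2
  · intro i hi
    rw [Finset.mem_filter]
    constructor
    · rw [mem_Rgrid]
      refine ⟨?_, fun l hl => ?_⟩
      · have := le_of_interior hi k
        have := hm k
        simp only [down_apply_self]
        omega
      · rw [down_apply_ne hl]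
        exact ⟨one_le_of_interior hi l, le_of_interior hi l⟩
    · rw [up_down k (one_le_of_interior hi k)]; exact hi
  · intro j _; exact down_up k j
  · intro i hi; exact up_down k (one_le_of_interior hi k)
  · intro j _; rfl

lemma sum_Rgrid_eq_Igrid (hm : ∀ k, 2 ≤ m k) (k : Fin d) (f : (Fin d → ℕ) → ℝ)
    (hf : ∀ j, ¬ interiorIdx d m j → f j = 0) :
    ∑ j ∈ Rgrid m k, f j = ∑ j ∈ Igrid m, f j := by
  refine (Finset.sum_subset (Igrid_subset_Rgrid hm k) ?_).symm
  intro j _ hj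
  exact hf j (fun hi => hj ((mem_Igrid m).2 hi))

/-- sum-of-squares identity for the Dirichlet quadratic form -/
lemma sos (hm : ∀ k, 2 ≤ m k) (k : Fin d) (u : (Fin d → ℕ) → ℝ)
    (hu : ∀ j, ¬ interiorIdx d m j → u j = 0) :
    ∑ j ∈ Rgrid m k, (u (up k j) - u j) ^ 2
      = 2 * ∑ j ∈ Igrid m, u j ^ 2 - 2 * ∑ j ∈ Igrid m, u (up k j) * u j := by
  have expand : ∑ j ∈ Rgrid m k, (u (up k j) - u j) ^ 2
      = ∑ j ∈ Rgrid m k, u (up k j) ^ 2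
        - 2 * ∑ j ∈ Rgrid m k, u (up k j) * u j + ∑ j ∈ Rgrid m k, u j ^ 2 := by
    rw [Finset.mul_sum, ← Finset.sum_sub_distrib, ← Finset.sum_add_distrib]
    exact Finset.sum_congr rfl fun j _ => by ring
  rw [expand, sum_up_sq hm k u hu,
    sum_Rgrid_eq_Igrid hm k (fun j => u (up k j) * u j)
      (fun j hj => by show u (up k j) * u j = 0; rw [hu j hj, mul_zero]),
    sum_Rgrid_eq_Igrid hm k (fun j => u j ^ 2) (fun j hj => by show u j ^ 2 = 0; rw [hu j hj]; ring)]
  ring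


lemma extf_Pop_mem (k : Fin d) (x : E m) {j : Fin d → ℕ} (h : j ∈ Igrid m) :
    extf m (Pop m Δx k x) j
      = (2 * extf m x j - extf m x (up k j) - extf m x (down k j)) / Δx k ^ 2 := by
  rw [extf_mem _ h, Pop_apply, extf_mem x h]

/-- "sum of squares" variant with a plus sign -/
lemma sos_plus (hm : ∀ k, 2 ≤ m k) (k : Fin d) (u : (Fin d → ℕ) → ℝ)
    (hu : ∀ j, ¬ interiorIdx d m j → u j = 0) :
    ∑ j ∈ Rgrid m k, (u (up k j) + u j) ^ 2
      = 2 * ∑ j ∈ Igrid m, u j ^ 2 + 2 * ∑ j ∈ Igrid m, u (up k j) * u j := by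
  have expand : ∑ j ∈ Rgrid m k, (u (up k j) + u j) ^ 2
      = ∑ j ∈ Rgrid m k, u (up k j) ^ 2
        + 2 * ∑ j ∈ Rgrid m k, u (up k j) * u j + ∑ j ∈ Rgrid m k, u j ^ 2 := by
    rw [Finset.mul_sum, ← Finset.sum_add_distrib, ← Finset.sum_add_distrib]
    exact Finset.sum_congr rfl fun j _ => by ring
  rw [expand, sum_up_sq hm k u hu,
    sum_Rgrid_eq_Igrid hm k (fun j => u (up k j) * u j)
      (fun j hj => by show u (up k j) * u j = 0; rw [hu j hj, mul_zero]),
    sum_Rgrid_eq_Igrid hm k (fun j => u j ^ 2)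
      (fun j hj => by show u j ^ 2 = 0; rw [hu j hj]; ring)]
  ring

lemma inner_Pop_eq (hm : ∀ k, 2 ≤ m k) (k : Fin d) (x : E m) :
    ⟪Pop m Δx k x, x⟫
      = (∑ j ∈ Rgrid m k, (extf m x (up k j) - extf m x j) ^ 2) / Δx k ^ 2 := by
  have hz : ∀ j, ¬ interiorIdx d m j → extf m x j = 0 := zeroBnd_extf x
  rw [inner_eq_sum, sos hm k (extf m x) hz]
  have h1 : ∀ j ∈ Igrid m, extf m (Pop m Δx k x) j * extf m x j
      = (2 * extf m x j ^ 2 - extf m x (up k j) * extf m x j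
         - extf m x (down k j) * extf m x j) / Δx k ^ 2 := fun j hj => by
    rw [extf_Pop_mem k x hj]; ring
  rw [Finset.sum_congr rfl h1, ← Finset.sum_div, Finset.sum_sub_distrib,
    Finset.sum_sub_distrib]
  have hsh : ∑ j ∈ Igrid m, extf m x (down k j) * extf m x j
      = ∑ j ∈ Igrid m, extf m x (up k j) * extf m x j := by
    calc ∑ j ∈ Igrid m, extf m x (down k j) * extf m x j
        = ∑ j ∈ Igrid m, extf m x j * extf m x (down k j) :=
          Finset.sum_congr rfl fun j _ => mul_comm _ _
      _ = _ := (sum_shift k (extf m x) (extf m x) hz hz).symm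
  rw [hsh, ← Finset.mul_sum]
  ring

lemma inner_Pop_nonneg (hm : ∀ k, 2 ≤ m k) (hΔx : ∀ k, 0 < Δx k) (k : Fin d) (x : E m) :
    0 ≤ ⟪Pop m Δx k x, x⟫ := by
  rw [inner_Pop_eq hm k x]
  apply div_nonneg
  · exact Finset.sum_nonneg fun j _ => sq_nonneg _
  · positivity

lemma Pop_symmetric (k : Fin d) : (Pop m Δx k).IsSymmetric := by
  intro x y
  have hx : ∀ j, ¬ interiorIdx d m j → extf m x j = 0 := zeroBnd_extf x
  have hy : ∀ j, ¬ interiorIdx d m j → extf m y j = 0 := zeroBnd_extf y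
  rw [inner_eq_sum, inner_eq_sum]
  have h1 : ∀ j ∈ Igrid m, extf m (Pop m Δx k x) j * extf m y j
      = (2 * extf m x j * extf m y j - extf m x (up k j) * extf m y j
         - extf m x (down k j) * extf m y j) / Δx k ^ 2 := fun j hj => by
    rw [extf_Pop_mem k x hj]; ring
  have h2 : ∀ j ∈ Igrid m, extf m x j * extf m (Pop m Δx k y) j
      = (2 * extf m x j * extf m y j - extf m x j * extf m y (up k j)
         - extf m x j * extf m y (down k j)) / Δx k ^ 2 := fun j hj => by
    rw [extf_Pop_mem k y hj]; ring
  rw [Finset.sum_congr rfl h1, Finset.sum_congr rfl h2, ← Finset.sum_div, ← Finset.sum_div,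
    Finset.sum_sub_distrib, Finset.sum_sub_distrib, Finset.sum_sub_distrib,
    Finset.sum_sub_distrib]
  have e1 : ∑ j ∈ Igrid m, extf m x (up k j) * extf m y j
      = ∑ j ∈ Igrid m, extf m x j * extf m y (down k j) :=
    sum_shift k (extf m x) (extf m y) hx hy
  have e2 : ∑ j ∈ Igrid m, extf m x (down k j) * extf m y j
      = ∑ j ∈ Igrid m, extf m x j * extf m y (up k j) := by
    calc ∑ j ∈ Igrid m, extf m x (down k j) * extf m y j
        = ∑ j ∈ Igrid m, extf m y j * extf m x (down k j) :=
          Finset.sum_congr rfl fun j _ => mul_comm _ _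
      _ = ∑ j ∈ Igrid m, extf m y (up k j) * extf m x j :=
          (sum_shift k (extf m y) (extf m x) hy hx).symm
      _ = _ := Finset.sum_congr rfl fun j _ => mul_comm _ _
  rw [e1, e2]
  ring


lemma extf_Pop_aux {k l : Fin d} (hkl : l ≠ k) (x : E m) (p : Fin d → ℕ)
    (hp : ∀ r, r ≠ k → 1 ≤ p r ∧ p r ≤ m r - 1) :
    extf m (Pop m Δx l x) p
      = (2 * extf m x p - extf m x (up l p) - extf m x (down l p)) / Δx l ^ 2 := by
  by_cases h : p ∈ Igrid m
  · exact extf_Pop_mem l x h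
  · have hknot : ¬(1 ≤ p k ∧ p k ≤ m k - 1) := by
      intro hc
      exact h ((mem_Igrid m).2 fun r => by
        by_cases hr : r = k
        · subst hr; exact hc
        · exact hp r hr)
    have hup : up l p ∉ Igrid m := fun hmem => by
      have := (mem_Igrid m).1 hmem k
      rw [up_apply_ne hkl.symm] at this
      exact hknot this
    have hdown : down l p ∉ Igrid m := fun hmem => by
      have := (mem_Igrid m).1 hmem k
      rw [down_apply_ne hkl.symm] at this
      exact hknot this
    rw [extf_not_mem _ h, extf_not_mem _ h, extf_not_mem _ hup, extf_not_mem _ hdown]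
    simp

lemma Pop_comm (k l : Fin d) :
    Pop m Δx k * Pop m Δx l = Pop m Δx l * Pop m Δx k := by
  rcases eq_or_ne k l with rfl | hkl
  · rfl
  · apply LinearMap.ext
    intro x
    ext i
    have hik : ∀ r, r ≠ k → 1 ≤ up k i.1 r ∧ up k i.1 r ≤ m r - 1 := fun r hr => by
      rw [up_apply_ne hr]
      exact ⟨one_le_of_interior i.2 r, le_of_interior i.2 r⟩
    have hik' : ∀ r, r ≠ k → 1 ≤ down k i.1 r ∧ down k i.1 r ≤ m r - 1 := fun r hr => by
      rw [down_apply_ne hr]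
      exact ⟨one_le_of_interior i.2 r, le_of_interior i.2 r⟩
    have hil : ∀ r, r ≠ l → 1 ≤ up l i.1 r ∧ up l i.1 r ≤ m r - 1 := fun r hr => by
      rw [up_apply_ne hr]
      exact ⟨one_le_of_interior i.2 r, le_of_interior i.2 r⟩
    have hil' : ∀ r, r ≠ l → 1 ≤ down l i.1 r ∧ down l i.1 r ≤ m r - 1 := fun r hr => by
      rw [down_apply_ne hr]
      exact ⟨one_le_of_interior i.2 r, le_of_interior i.2 r⟩
    show Pop m Δx k (Pop m Δx l x) i = Pop m Δx l (Pop m Δx k x) i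
    simp only [Pop_apply]
    rw [extf_Pop_aux hkl.symm x (up k i.1) hik, extf_Pop_aux hkl.symm x (down k i.1) hik',
      extf_Pop_aux hkl x (up l i.1) hil, extf_Pop_aux hkl x (down l i.1) hil']
    rw [← extf_coe x i, up_up_comm hkl.symm, ← up_down_comm hkl.symm,
      up_down_comm hkl, down_down_comm hkl.symm]
    ring

lemma Aopt_symmetric (k : Fin d) : (Aopt m Δx k).IsSymmetric := by
  intro x y
  simp only [Aopt, LinearMap.sub_apply, LinearMap.smul_apply, LinearMap.id_apply,
    inner_sub_left, inner_sub_right, real_inner_smul_left, real_inner_smul_right]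
  rw [Pop_symmetric k x y]

lemma Aopt_comm_Pop (k l : Fin d) : Commute (Aopt m Δx k) (Pop m Δx l) := by
  have h : Commute (Pop m Δx k) (Pop m Δx l) := Pop_comm k l
  unfold Aopt
  have : (LinearMap.id : Module.End ℝ (E m)) = 1 := rfl
  rw [this]
  exact (Commute.one_left _).sub_left (h.smul_left _)

lemma Aopt_comm_Aopt (k l : Fin d) : Commute (Aopt m Δx k) (Aopt m Δx l) := by
  have h := (Aopt_comm_Pop (m := m) (Δx := Δx) k l).smul_right (Δx l ^ 2 / 12)
  have h1 : Commute (Aopt m Δx k) (1 : Module.End ℝ (E m)) := Commute.one_right _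
  exact h1.sub_right h

lemma Aopt_apply (k : Fin d) (x : E m) (i : ↥(Igrid m)) :
    Aopt m Δx k x i = x i - Δx k ^ 2 / 12 * Pop m Δx k x i := by
  simp only [Aopt, LinearMap.sub_apply, LinearMap.smul_apply, LinearMap.id_apply,
    PiLp.sub_apply, PiLp.smul_apply, smul_eq_mul]

lemma Aop_extf (hΔx : ∀ k, 0 < Δx k) (k : Fin d) (y : E m) :
    Aop m k (extf m y) = extf m (Aopt m Δx k y) := by
  funext j
  by_cases h : j ∈ Igrid m
  · have hi : interiorIdx d m j := (mem_Igrid m).1 h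
    show (if interiorIdx d m j then
        (extf m y (down k j) + 10 * extf m y j + extf m y (up k j)) / 12
      else extf m y j) = _
    rw [if_pos hi, extf_mem (Aopt m Δx k y) h, Aopt_apply, Pop_apply, extf_mem y h]
    have hne : Δx k ≠ 0 := (hΔx k).ne'
    field_simp
    ring
  · have hi : ¬ interiorIdx d m j := fun hc => h ((mem_Igrid m).2 hc)
    show (if interiorIdx d m j then
        (extf m y (down k j) + 10 * extf m y j + extf m y (up k j)) / 12
      else extf m y j) = _
    rw [if_neg hi, extf_not_mem _ h, extf_not_mem _ h]

variable (m Δx) in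
def AHl (L : List (Fin d)) : Module.End ℝ (E m) :=
  L.foldr (fun k T => Aopt m Δx k ∘ₗ T) LinearMap.id

lemma AHl_cons (a : Fin d) (L : List (Fin d)) :
    AHl m Δx (a :: L) = Aopt m Δx a * AHl m Δx L := rfl

lemma AHl_nil : AHl m Δx ([] : List (Fin d)) = 1 := rfl

lemma foldr_Aop_extf (hΔx : ∀ k, 0 < Δx k) (L : List (Fin d)) (y : E m) :
    L.foldr (fun k v => Aop m k v) (extf m y) = extf m (AHl m Δx L y) := by
  induction L with
  | nil => rfl
  | cons a L ih =>
      show Aop m a (L.foldr (fun k v => Aop m k v) (extf m y)) = _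
      rw [ih, Aop_extf hΔx a]
      rfl

set_option maxHeartbeats 1000000 in
lemma Aopt_comm_AHl (k : Fin d) (L : List (Fin d)) :
    Commute (Aopt m Δx k) (AHl m Δx L) := by
  induction L with
  | nil => rw [AHl_nil]; exact Commute.one_right _
  | cons a L ih => rw [AHl_cons]; exact (Aopt_comm_Aopt k a).mul_right ih

set_option maxHeartbeats 1000000 in
lemma Pop_comm_AHl (k : Fin d) (L : List (Fin d)) :
    Commute (Pop m Δx k) (AHl m Δx L) := by
  induction L with
  | nil => rw [AHl_nil]; exact Commute.one_right _
  | cons a L ih => rw [AHl_cons]; exact ((Aopt_comm_Pop a k).symm).mul_right ih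

lemma AHl_symmetric (L : List (Fin d)) : (AHl m Δx L).IsSymmetric := by
  induction L with
  | nil => exact fun x y => rfl
  | cons a L ih =>
      rw [AHl_cons]
      exact symm_mul_of_commute (Aopt_symmetric a) ih (Aopt_comm_AHl a L)

lemma Aopt_posdef (hm : ∀ k, 2 ≤ m k) (hΔx : ∀ k, 0 < Δx k) (k : Fin d) :
    ∀ x : E m, x ≠ 0 → 0 < ⟪Aopt m Δx k x, x⟫ := by
  intro x hx
  have hz : ∀ j, ¬ interiorIdx d m j → extf m x j = 0 := zeroBnd_extf x
  set Ssq := ∑ j ∈ Igrid m, extf m x j ^ 2 with hSsq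
  set C := ∑ j ∈ Igrid m, extf m x (up k j) * extf m x j with hC
  have hxx : ⟪x, x⟫ = Ssq := by
    rw [inner_eq_sum]
    exact Finset.sum_congr rfl fun j _ => (pow_two _).symm
  have hPx : ⟪Pop m Δx k x, x⟫ = (2 * Ssq - 2 * C) / Δx k ^ 2 := by
    rw [inner_Pop_eq hm k x, sos hm k (extf m x) hz]
  have hplus : 0 ≤ 2 * Ssq + 2 * C := by
    rw [← sos_plus hm k (extf m x) hz]
    exact Finset.sum_nonneg fun j _ => sq_nonneg _
  have hA : ⟪Aopt m Δx k x, x⟫ = ⟪x, x⟫ - Δx k ^ 2 / 12 * ⟪Pop m Δx k x, x⟫ := by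
    simp only [Aopt, LinearMap.sub_apply, LinearMap.smul_apply, LinearMap.id_apply,
      inner_sub_left, real_inner_smul_left]
  have hne : Δx k ≠ 0 := (hΔx k).ne'
  have hcancel : Δx k ^ 2 / 12 * ((2 * Ssq - 2 * C) / Δx k ^ 2) = (2 * Ssq - 2 * C) / 12 := by
    field_simp
  have hpos : 0 < Ssq := by rw [← hxx]; exact inner_self_pos' hx
  rw [hA, hxx, hPx, hcancel]
  linarith

lemma AHl_posdef (hm : ∀ k, 2 ≤ m k) (hΔx : ∀ k, 0 < Δx k) (L : List (Fin d)) :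
    ∀ x : E m, x ≠ 0 → 0 < ⟪AHl m Δx L x, x⟫ := by
  induction L with
  | nil => exact fun x hx => inner_self_pos' hx
  | cons a L ih =>
      rw [AHl_cons]
      exact posdef_comp (Aopt_symmetric a) (AHl_symmetric L) (Aopt_comm_AHl a L)
        (Aopt_posdef hm hΔx a) ih


lemma eq_zero_of_const (k : Fin d) (x : E m)
    (hzero : ∀ j ∈ Rgrid m k, extf m x (up k j) = extf m x j) : x = 0 := by
  have key : ∀ n : ℕ, ∀ j : Fin d → ℕ, (∀ l, l ≠ k → 1 ≤ j l ∧ j l ≤ m l - 1) →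
      extf m x (Function.update j k n) = 0 := by
    intro n
    induction n with
    | zero =>
      intro j hj
      apply extf_not_mem
      intro hmem
      have h1 := one_le_of_interior hmem k
      rw [Function.update_self] at h1
      omega
    | succ n ih =>
      intro j hj
      by_cases hn : n < m k
      · have hmemR : Function.update j k n ∈ Rgrid m k := by
          rw [mem_Rgrid]
          refine ⟨by rw [Function.update_self]; exact hn, fun l hl => ?_⟩
          rw [Function.update_of_ne hl]
          exact hj l hl
        have hz := hzero _ hmemR
        have hupd : up k (Function.update j k n) = Function.update j k (n + 1) := by
          funext l
          rcases eq_or_ne l k with rfl | hl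
          · rw [up_apply_self, Function.update_self, Function.update_self]
          · rw [up_apply_ne hl, Function.update_of_ne hl, Function.update_of_ne hl]
        rw [hupd] at hz
        rw [hz]
        exact ih j hj
      · apply extf_not_mem
        intro hmem
        have h2 := le_of_interior hmem k
        rw [Function.update_self] at h2
        omega
  ext i
  have h3 : Function.update i.1 k (i.1 k) = i.1 := Function.update_eq_self _ _
  have h4 := key (i.1 k) i.1 (fun l _ => ⟨one_le_of_interior i.2 l, le_of_interior i.2 l⟩)
  rw [h3, extf_coe] at h4
  exact h4

variable (m Δx) in
def LSum : Module.End ℝ (E m) := ∑ k, Pop m Δx k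

lemma LSum_symmetric : (LSum m Δx).IsSymmetric := by
  intro x y
  simp only [LSum, LinearMap.sum_apply, sum_inner, inner_sum]
  exact Finset.sum_congr rfl fun k _ => Pop_symmetric k x y

lemma LSum_comm_AHl (L : List (Fin d)) : Commute (AHl m Δx L) (LSum m Δx) := by
  refine Commute.sum_right _ _ _ fun k _ => ?_
  exact (Pop_comm_AHl k L).symm

lemma LSum_posdef (hd : 1 ≤ d) (hm : ∀ k, 2 ≤ m k) (hΔx : ∀ k, 0 < Δx k) :
    ∀ x : E m, x ≠ 0 → 0 < ⟪LSum m Δx x, x⟫ := by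
  intro x hx
  have hL : ⟪LSum m Δx x, x⟫ = ∑ k, ⟪Pop m Δx k x, x⟫ := by
    simp only [LSum, LinearMap.sum_apply, sum_inner]
  set k0 : Fin d := ⟨0, hd⟩
  have h0 : 0 < ⟪Pop m Δx k0 x, x⟫ := by
    rcases (inner_Pop_nonneg hm hΔx k0 x).lt_or_eq with h | h
    · exact h
    · exfalso
      apply hx
      apply eq_zero_of_const k0 x
      have hS : ∑ j ∈ Rgrid m k0, (extf m x (up k0 j) - extf m x j) ^ 2 = 0 := by
        have := h.symm
        rw [inner_Pop_eq hm k0 x] at this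
        have hne : Δx k0 ^ 2 ≠ 0 := pow_ne_zero 2 (hΔx k0).ne'
        field_simp at this
        exact (div_eq_zero_iff.1 this).resolve_right hne
      intro j hj
      have := (Finset.sum_eq_zero_iff_of_nonneg (fun j _ => sq_nonneg _)).1 hS j hj
      have h5 := pow_eq_zero_iff (n := 2) (by norm_num) |>.1 this
      linarith [sub_eq_zero.1 h5]
  rw [hL]
  refine Finset.sum_pos' (fun k _ => inner_Pop_nonneg hm hΔx k x) ⟨k0, Finset.mem_univ _, h0⟩

variable (m) in
def resf (u : (Fin d → ℕ) → ℝ) : E m := WithLp.toLp 2 fun i => u i.1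

lemma extf_resf (u : (Fin d → ℕ) → ℝ) (hu : zeroBnd m u) : extf m (resf m u) = u := by
  funext j
  by_cases h : j ∈ Igrid m
  · rw [extf_mem _ h]; rfl
  · rw [extf_not_mem _ h]
    exact (hu j (fun hc => h ((mem_Igrid m).2 hc))).symm

lemma eval_sum {γ : Type*} (s : Finset γ) (f : γ → E m) (i : ↥(Igrid m)) :
    (∑ c ∈ s, f c) i = ∑ c ∈ s, f c i := by
  induction s using Finset.cons_induction with
  | empty => rfl
  | cons a s ha ih => rw [Finset.sum_cons, Finset.sum_cons, PiLp.add_apply, ih]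

lemma lapH_extf (y : E m) {j : Fin d → ℕ} (h : j ∈ Igrid m) :
    (-(lapH Δx (extf m y))) j = extf m (LSum m Δx y) j := by
  have h1 : extf m (LSum m Δx y) j = ∑ k, Pop m Δx k y ⟨j, h⟩ := by
    rw [extf_mem _ h]
    show (∑ k, Pop m Δx k) y ⟨j, h⟩ = _
    rw [LinearMap.sum_apply, eval_sum]
  have h2 : ∀ k, Pop m Δx k y ⟨j, h⟩ = -(d2 Δx k (extf m y) j) := fun k => by
    rw [Pop_apply]
    show _ = -((extf m y (up k j) - 2 * extf m y j + extf m y (down k j)) / Δx k ^ 2)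
    rw [extf_mem y h]
    ring
  calc (-(lapH Δx (extf m y))) j = -(∑ k, d2 Δx k (extf m y) j) := rfl
    _ = ∑ k, -(d2 Δx k (extf m y) j) := (Finset.sum_neg_distrib _).symm
    _ = ∑ k, Pop m Δx k y ⟨j, h⟩ := Finset.sum_congr rfl fun k _ => (h2 k).symm
    _ = extf m (LSum m Δx y) j := h1.symm

lemma Ah_extf (hΔx : ∀ k, 0 < Δx k) (y : E m) :
    Ah m (extf m y) = extf m (AHl m Δx (List.finRange d) y) :=
  foldr_Aop_extf hΔx _ y

lemma ip_bridge (hΔx : ∀ k, 0 < Δx k) (u w : (Fin d → ℕ) → ℝ)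
    (hu : zeroBnd m u) (hw : zeroBnd m w) :
    ip m Δx (Ah m u) (-(lapH Δx w))
      = (∏ r, Δx r) * ⟪AHl m Δx (List.finRange d) (resf m u), LSum m Δx (resf m w)⟫ := by
  rw [inner_eq_sum]
  show (∏ r, Δx r) * ∑ j ∈ Igrid m, Ah m u j * (-(lapH Δx w)) j = _
  congr 1
  refine Finset.sum_congr rfl fun j hj => ?_
  conv_lhs => rw [← extf_resf u hu, ← extf_resf w hw]
  rw [Ah_extf hΔx (resf m u), lapH_extf (resf m w) hj]

lemma Aop_lin (k : Fin d) (a : ℝ) (u v : (Fin d → ℕ) → ℝ) :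
    Aop m k (a • u + v) = a • Aop m k u + Aop m k v := by
  funext j
  by_cases h : interiorIdx d m j <;>
    simp [Aop, h, Pi.add_apply, Pi.smul_apply, smul_eq_mul] <;> ring

lemma Ah_lin (a : ℝ) (u v : (Fin d → ℕ) → ℝ) :
    Ah m (a • u + v) = a • Ah m u + Ah m v := by
  have aux : ∀ L : List (Fin d), L.foldr (fun k v => Aop m k v) (a • u + v)
      = a • L.foldr (fun k v => Aop m k v) u + L.foldr (fun k v => Aop m k v) v := by
    intro L
    induction L with
    | nil => rfl
    | cons b L ih =>
        show Aop m b (L.foldr (fun k v => Aop m k v) (a • u + v)) = _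
        rw [ih, Aop_lin]
        rfl
  exact aux _

end Stmt7Aux

open Stmt7Aux


/-- On the space `°U` of grid functions vanishing on the boundary, the map
`(u, w) ↦ (A_h u, −Δ_h w)` is an inner product: it is symmetric, bilinear, and
positive definite. -/
theorem stmt_7 (d : ℕ) (hd : 1 ≤ d) (m : Fin d → ℕ) (hm : ∀ k, 2 ≤ m k)
    (Δx : Fin d → ℝ) (hΔx : ∀ k, 0 < Δx k) :
    (∀ u w : (Fin d → ℕ) → ℝ, zeroBnd m u → zeroBnd m w →
      ip m Δx (Ah m u) (-(lapH Δx w)) = ip m Δx (Ah m w) (-(lapH Δx u)))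
    ∧ (∀ (a : ℝ) (u v w : (Fin d → ℕ) → ℝ), zeroBnd m u → zeroBnd m v → zeroBnd m w →
      ip m Δx (Ah m (a • u + v)) (-(lapH Δx w))
        = a * ip m Δx (Ah m u) (-(lapH Δx w)) + ip m Δx (Ah m v) (-(lapH Δx w)))
    ∧ (∀ u : (Fin d → ℕ) → ℝ, zeroBnd m u → u ≠ 0 →
      0 < ip m Δx (Ah m u) (-(lapH Δx u))) := by

  have hA := AHl_symmetric (m := m) (Δx := Δx) (List.finRange d)
  have hL := LSum_symmetric (m := m) (Δx := Δx)
  have hC := LSum_comm_AHl (m := m) (Δx := Δx) (List.finRange d)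
  refine ⟨?_, ?_, ?_⟩
  · intro u w hu hw
    rw [ip_bridge hΔx u w hu hw, ip_bridge hΔx w u hw hu]
    congr 1
    set x := resf m u
    set y := resf m w
    calc ⟪AHl m Δx (List.finRange d) x, LSum m Δx y⟫
        = ⟪x, AHl m Δx (List.finRange d) (LSum m Δx y)⟫ := hA x _
      _ = ⟪x, (AHl m Δx (List.finRange d) * LSum m Δx) y⟫ := rfl
      _ = ⟪x, (LSum m Δx * AHl m Δx (List.finRange d)) y⟫ := by rw [hC]
      _ = ⟪x, LSum m Δx (AHl m Δx (List.finRange d) y)⟫ := rfl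
      _ = ⟪LSum m Δx x, AHl m Δx (List.finRange d) y⟫ := (hL x _).symm
      _ = ⟪AHl m Δx (List.finRange d) y, LSum m Δx x⟫ := real_inner_comm _ _
  · intro a u v w _ _ _
    rw [Ah_lin a u v]
    unfold ip
    have hsum : ∑ j ∈ Fintype.piFinset (fun k => Finset.Icc 1 (m k - 1)),
        (a • Ah m u + Ah m v) j * (-(lapH Δx w)) j
        = a * ∑ j ∈ Fintype.piFinset (fun k => Finset.Icc 1 (m k - 1)),
            Ah m u j * (-(lapH Δx w)) j
          + ∑ j ∈ Fintype.piFinset (fun k => Finset.Icc 1 (m k - 1)),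
            Ah m v j * (-(lapH Δx w)) j := by
      rw [Finset.mul_sum, ← Finset.sum_add_distrib]
      refine Finset.sum_congr rfl fun j _ => ?_
      simp only [Pi.add_apply, Pi.smul_apply, smul_eq_mul]
      ring
    rw [hsum]
    ring
  · intro u hu hne
    rw [ip_bridge hΔx u u hu hu]
    have hx : resf m u ≠ 0 := by
      intro h0
      apply hne
      rw [← extf_resf u hu, h0, WithLp.ofLp_zero, map_zero]
    have hpd := posdef_comp hA hL hC (AHl_posdef hm hΔx _) (LSum_posdef hd hm hΔx)
      (resf m u) hx
    have heq : ⟪(AHl m Δx (List.finRange d) * LSum m Δx) (resf m u), resf m u⟫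
        = ⟪AHl m Δx (List.finRange d) (resf m u), LSum m Δx (resf m u)⟫ := by
      calc ⟪(AHl m Δx (List.finRange d) * LSum m Δx) (resf m u), resf m u⟫
          = ⟪AHl m Δx (List.finRange d) (LSum m Δx (resf m u)), resf m u⟫ := rfl
        _ = ⟪LSum m Δx (resf m u), AHl m Δx (List.finRange d) (resf m u)⟫ := hA _ _
        _ = _ := real_inner_comm _ _
    rw [← heq]
    exact mul_pos (Finset.prod_pos fun k _ => hΔx k) hpd


end
end

section
/- For every u in the space °U of grid functions vanishing on the boundary of the d-dimensional grid: (2/3)^d |u|_1² ≤ (A_h u, −Δ_h u) ≤ |u|_1². -/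
open Classical

noncomputable section

namespace Stmt8

variable {d : ℕ} (m : Fin d → ℕ) (Δx : Fin d → ℝ)

def J : Finset (Fin d → ℕ) := Fintype.piFinset fun k => Finset.Icc 1 (m k - 1)

lemma mem_J {j : Fin d → ℕ} : j ∈ J m ↔ interiorIdx d m j := by
  simp [J, Fintype.mem_piFinset, interiorIdx, Finset.mem_Icc]

lemma up_self (k : Fin d) (j : Fin d → ℕ) : up k j k = j k + 1 :=
  Function.update_self _ _ _

lemma up_ne {k l : Fin d} (h : l ≠ k) (j : Fin d → ℕ) : up k j l = j l :=
  Function.update_of_ne h _ _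

lemma down_self (k : Fin d) (j : Fin d → ℕ) : down k j k = j k - 1 :=
  Function.update_self _ _ _

lemma down_ne {k l : Fin d} (h : l ≠ k) (j : Fin d → ℕ) : down k j l = j l :=
  Function.update_of_ne h _ _

lemma down_up (k : Fin d) (j : Fin d → ℕ) : down k (up k j) = j := by
  funext l
  rcases eq_or_ne l k with rfl | h
  · simp [down_self, up_self]
  · simp [down_ne h, up_ne h]

lemma up_down {k : Fin d} {j : Fin d → ℕ} (h : 1 ≤ j k) : up k (down k j) = j := by
  funext l
  rcases eq_or_ne l k with rfl | hl
  · simp [up_self, down_self]; omega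
  · simp [up_ne hl, down_ne hl]

def Jk (k : Fin d) : Finset (Fin d → ℕ) :=
  Fintype.piFinset fun l => if l = k then Finset.range (m l) else Finset.Icc 1 (m l - 1)

def Jk' (k : Fin d) : Finset (Fin d → ℕ) :=
  Fintype.piFinset fun l => if l = k then Finset.Icc 1 (m l) else Finset.Icc 1 (m l - 1)

lemma mem_Jk {k : Fin d} {j : Fin d → ℕ} :
    j ∈ Jk m k ↔ (j k < m k ∧ ∀ l, l ≠ k → (1 ≤ j l ∧ j l ≤ m l - 1)) := by
  simp only [Jk, Fintype.mem_piFinset]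
  constructor
  · intro h
    refine ⟨by simpa using h k, fun l hl => by simpa [hl] using h l⟩
  · intro ⟨h1, h2⟩ l
    rcases eq_or_ne l k with rfl | hl
    · simpa using h1
    · simpa [hl] using h2 l hl

lemma mem_Jk' {k : Fin d} {j : Fin d → ℕ} :
    j ∈ Jk' m k ↔ ((1 ≤ j k ∧ j k ≤ m k) ∧ ∀ l, l ≠ k → (1 ≤ j l ∧ j l ≤ m l - 1)) := by
  simp only [Jk', Fintype.mem_piFinset]
  constructor
  · intro h
    refine ⟨by simpa using h k, fun l hl => by simpa [hl] using h l⟩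
  · intro ⟨h1, h2⟩ l
    rcases eq_or_ne l k with rfl | hl
    · simpa using h1
    · simpa [hl] using h2 l hl

lemma J_subset_Jk (hm : ∀ k, 2 ≤ m k) (k : Fin d) : J m ⊆ Jk m k := by
  intro j hj
  rw [mem_J] at hj
  rw [mem_Jk]
  refine ⟨?_, fun l _ => hj l⟩
  have := hj k
  have := hm k
  omega

lemma J_subset_Jk' (k : Fin d) : J m ⊆ Jk' m k := by
  intro j hj
  rw [mem_J] at hj
  rw [mem_Jk']
  refine ⟨?_, fun l _ => hj l⟩
  have := hj k
  omega

/-- reindexing along `up k`. -/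
lemma sum_up (k : Fin d) (F : (Fin d → ℕ) → ℝ) :
    ∑ j ∈ Jk m k, F (up k j) = ∑ j ∈ Jk' m k, F j := by
  apply Finset.sum_bij' (fun j _ => up k j) (fun j _ => down k j)
  · intro j hj
    rw [mem_Jk] at hj
    rw [mem_Jk']
    refine ⟨?_, fun l hl => ?_⟩
    · rw [up_self]; omega
    · rw [up_ne hl]; exact hj.2 l hl
  · intro j hj
    rw [mem_Jk'] at hj
    rw [mem_Jk]
    refine ⟨?_, fun l hl => ?_⟩
    · rw [down_self]; omega
    · rw [down_ne hl]; exact hj.2 l hl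
  · intro j _
    exact down_up k j
  · intro j hj
    rw [mem_Jk'] at hj
    exact up_down hj.1.1
  · intro j _
    rfl

lemma sum_trunc {S : Finset (Fin d → ℕ)} (hS : J m ⊆ S) {F : (Fin d → ℕ) → ℝ}
    (hF : ∀ j ∈ S, j ∉ J m → F j = 0) :
    ∑ j ∈ S, F j = ∑ j ∈ J m, F j :=
  (Finset.sum_subset hS hF).symm

section four
variable (k : Fin d) (u w : (Fin d → ℕ) → ℝ)

lemma uzero (hu : zeroBnd m u) {j : Fin d → ℕ} (hj : j ∉ J m) : u j = 0 :=
  hu j (fun h => hj ((mem_J m).2 h))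

lemma sumA (hu : zeroBnd m u) : ∑ j ∈ Jk m k, u (up k j) * w (up k j) = ∑ j ∈ J m, u j * w j := by
  rw [sum_up m k (fun j => u j * w j)]
  exact sum_trunc m (J_subset_Jk' m k) (fun j _ hj => by rw [uzero m u hu hj, zero_mul])

lemma sumB (hu : zeroBnd m u) : ∑ j ∈ Jk m k, u (up k j) * w j = ∑ j ∈ J m, u j * w (down k j) := by
  have : ∀ j ∈ Jk m k, u (up k j) * w j = u (up k j) * w (down k (up k j)) := by
    intro j _; rw [down_up k]
  rw [Finset.sum_congr rfl this, sum_up m k (fun j => u j * w (down k j))]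
  exact sum_trunc m (J_subset_Jk' m k) (fun j _ hj => by rw [uzero m u hu hj, zero_mul])

lemma sumC (hm : ∀ k, 2 ≤ m k) (hu : zeroBnd m u) : ∑ j ∈ Jk m k, u j * w (up k j) = ∑ j ∈ J m, u j * w (up k j) :=
  sum_trunc m (J_subset_Jk m hm k) (fun j _ hj => by rw [uzero m u hu hj, zero_mul])

lemma sumD (hm : ∀ k, 2 ≤ m k) (hu : zeroBnd m u) : ∑ j ∈ Jk m k, u j * w j = ∑ j ∈ J m, u j * w j :=
  sum_trunc m (J_subset_Jk m hm k) (fun j _ hj => by rw [uzero m u hu hj, zero_mul])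

/-- summation by parts -/
lemma sbp (hm : ∀ k, 2 ≤ m k) (hΔx : ∀ k, 0 < Δx k) (hu : zeroBnd m u) :
    ∑ j ∈ J m, u j * (-(d2 Δx k w j)) =
    ∑ j ∈ Jk m k, ((u (up k j) - u j)/Δx k) * ((w (up k j) - w j)/Δx k) := by
  have h2 : (Δx k)^2 ≠ 0 := pow_ne_zero 2 (hΔx k).ne'
  have e1 : ∀ j, u j * (-(d2 Δx k w j)) =
      (2*(u j*w j) - u j * w (up k j) - u j * w (down k j)) / (Δx k)^2 := by
    intro j; rw [d2]; field_simp; ring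
  have e2 : ∀ j, ((u (up k j) - u j)/Δx k) * ((w (up k j) - w j)/Δx k)
      = (u (up k j)*w (up k j) - u (up k j)*w j - u j*w (up k j) + u j*w j)/(Δx k)^2 := by
    intro j; rw [div_mul_div_comm, ← pow_two]; ring_nf
  rw [Finset.sum_congr rfl (fun j _ => e1 j), Finset.sum_congr rfl (fun j _ => e2 j),
    ← Finset.sum_div, ← Finset.sum_div]
  congr 1
  have expand : ∀ S : Finset (Fin d → ℕ),
      ∑ j ∈ S, (u (up k j)*w (up k j) - u (up k j)*w j - u j*w (up k j) + u j*w j)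
      = (∑ j ∈ S, u (up k j)*w (up k j)) - (∑ j ∈ S, u (up k j)*w j)
        - (∑ j ∈ S, u j*w (up k j)) + (∑ j ∈ S, u j*w j) := by
    intro S; rw [Finset.sum_add_distrib, Finset.sum_sub_distrib, Finset.sum_sub_distrib]
  have expandL : ∑ j ∈ J m, (2*(u j*w j) - u j * w (up k j) - u j * w (down k j))
      = 2*(∑ j ∈ J m, u j*w j) - (∑ j ∈ J m, u j * w (up k j))
        - (∑ j ∈ J m, u j * w (down k j)) := by
    rw [Finset.sum_sub_distrib, Finset.sum_sub_distrib, Finset.mul_sum]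
  rw [expand, expandL, sumA m k u w hu, sumB m k u w hu, sumC m k u w hm hu, sumD m k u w hm hu]
  ring

/-- upper bound for the form -/
lemma form_le (hm : ∀ k, 2 ≤ m k) (hΔx : ∀ k, 0 < Δx k) (hu : zeroBnd m u) :
    ∑ j ∈ Jk m k, ((u (up k j) - u j)/Δx k) * ((u (up k j) - u j)/Δx k)
    ≤ 4/(Δx k)^2 * ∑ j ∈ J m, u j * u j := by
  have h2 : (0:ℝ) < (Δx k)^2 := pow_pos (hΔx k) 2
  have step : ∀ j, ((u (up k j) - u j)/Δx k) * ((u (up k j) - u j)/Δx k)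
      ≤ (2*(u (up k j)*u (up k j)) + 2*(u j*u j))/(Δx k)^2 := by
    intro j
    have hnum : (u (up k j) - u j)*(u (up k j) - u j)
        ≤ 2*(u (up k j)*u (up k j)) + 2*(u j*u j) := by
      nlinarith [sq_nonneg (u (up k j) + u j)]
    rw [div_mul_div_comm, ← pow_two (Δx k)]
    gcongr
  calc ∑ j ∈ Jk m k, ((u (up k j) - u j)/Δx k) * ((u (up k j) - u j)/Δx k)
      ≤ ∑ j ∈ Jk m k, (2*(u (up k j)*u (up k j)) + 2*(u j*u j))/(Δx k)^2 :=
        Finset.sum_le_sum (fun j _ => step j)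
    _ = (2*(∑ j ∈ Jk m k, u (up k j)*u (up k j)) + 2*(∑ j ∈ Jk m k, u j*u j))/(Δx k)^2 := by
        rw [← Finset.sum_div, Finset.sum_add_distrib, Finset.mul_sum, Finset.mul_sum]
    _ = (2*(∑ j ∈ J m, u j*u j) + 2*(∑ j ∈ J m, u j*u j))/(Δx k)^2 := by
        rw [sumA m k u u hu, sumD m k u u hm hu]
    _ = 4/(Δx k)^2 * ∑ j ∈ J m, u j * u j := by ring
end four

section Elayer

abbrev E := EuclideanSpace ℝ ↥(J m)

def ext (v : E m) : (Fin d → ℕ) → ℝ := fun j => if h : j ∈ J m then v ⟨j, h⟩ else 0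

def res (u : (Fin d → ℕ) → ℝ) : E m := WithLp.toLp 2 (fun i => u i.1)

lemma ext_zeroBnd (v : E m) : zeroBnd m (ext m v) :=
  fun j hj => dif_neg (fun h => hj ((mem_J m).1 h))

lemma ext_mem (v : E m) {j : Fin d → ℕ} (h : j ∈ J m) : ext m v j = v ⟨j, h⟩ := dif_pos h

lemma ext_coe (v : E m) (i : ↥(J m)) : ext m v i.1 = v i := by
  rw [ext_mem m v i.2]

lemma ext_res (u : (Fin d → ℕ) → ℝ) (hu : zeroBnd m u) : ext m (res m u) = u := by
  funext j
  by_cases h : j ∈ J m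
  · rw [ext_mem m _ h]; rfl
  · rw [show ext m (res m u) j = 0 from dif_neg h, uzero m u hu h]

lemma ext_add (v w : E m) (j : Fin d → ℕ) : ext m (v + w) j = ext m v j + ext m w j := by
  by_cases h : j ∈ J m
  · simp only [ext, dif_pos h]; rfl
  · simp only [ext, dif_neg h]; ring

lemma ext_smul (c : ℝ) (v : E m) (j : Fin d → ℕ) : ext m (c • v) j = c * ext m v j := by
  by_cases h : j ∈ J m
  · simp only [ext, dif_pos h]; rfl
  · simp only [ext, dif_neg h]; ring

def Top (k : Fin d) : E m →ₗ[ℝ] E m where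
  toFun v := res m (fun j => -(d2 Δx k (ext m v) j))
  map_add' v w := by
    apply PiLp.ext; intro i
    show -(d2 Δx k (ext m (v + w)) i.1) = _
    simp only [d2, ext_add]
    show _ = -(d2 Δx k (ext m v) i.1) + -(d2 Δx k (ext m w) i.1)
    simp only [d2]
    ring
  map_smul' c v := by
    apply PiLp.ext; intro i
    show -(d2 Δx k (ext m (c • v)) i.1) = _
    simp only [d2, ext_smul]
    show _ = c * -(d2 Δx k (ext m v) i.1)
    simp only [d2]
    ring

lemma Top_apply (k : Fin d) (v : E m) (i : ↥(J m)) :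
    Top m Δx k v i = -(d2 Δx k (ext m v) i.1) := rfl

lemma inner_eq (x y : E m) :
    (inner ℝ x y : ℝ) = ∑ j ∈ J m, ext m x j * ext m y j := by
  rw [← Finset.sum_coe_sort (J m) (fun j => ext m x j * ext m y j)]
  rw [PiLp.inner_apply]
  apply Finset.sum_congr rfl
  intro i _
  rw [ext_coe, ext_coe]
  simp [RCLike.inner_apply]
  ring

lemma ext_Top (k : Fin d) (y : E m) {j : Fin d → ℕ} (h : j ∈ J m) :
    ext m (Top m Δx k y) j = -(d2 Δx k (ext m y) j) := by
  rw [ext_mem m _ h]; rfl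

lemma inner_Top (hm : ∀ k, 2 ≤ m k) (hΔx : ∀ k, 0 < Δx k) (k : Fin d) (x y : E m) :
    (inner ℝ x (Top m Δx k y) : ℝ) =
      ∑ j ∈ Jk m k, ((ext m x (up k j) - ext m x j)/Δx k) *
        ((ext m y (up k j) - ext m y j)/Δx k) := by
  rw [inner_eq]
  rw [Finset.sum_congr rfl (fun j hj => by rw [ext_Top m Δx k y hj])]
  exact sbp m Δx k (ext m x) (ext m y) hm hΔx (ext_zeroBnd m x)

lemma Top_symm (hm : ∀ k, 2 ≤ m k) (hΔx : ∀ k, 0 < Δx k) (k : Fin d) :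
    (Top m Δx k).IsSymmetric := by
  intro x y
  rw [show (inner ℝ (Top m Δx k x) y : ℝ) = inner ℝ y (Top m Δx k x) from real_inner_comm _ _,
    inner_Top m Δx hm hΔx, inner_Top m Δx hm hΔx]
  exact Finset.sum_congr rfl (fun j _ => mul_comm _ _)

lemma inner_Top_nonneg (hm : ∀ k, 2 ≤ m k) (hΔx : ∀ k, 0 < Δx k) (k : Fin d) (x : E m) :
    0 ≤ (inner ℝ x (Top m Δx k x) : ℝ) := by
  rw [inner_Top m Δx hm hΔx]
  exact Finset.sum_nonneg (fun j _ => mul_self_nonneg _)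

lemma inner_Top_le (hm : ∀ k, 2 ≤ m k) (hΔx : ∀ k, 0 < Δx k) (k : Fin d) (x : E m) :
    (inner ℝ x (Top m Δx k x) : ℝ) ≤ 4/(Δx k)^2 * (inner ℝ x x : ℝ) := by
  rw [inner_Top m Δx hm hΔx, inner_eq]
  exact form_le m Δx k (ext m x) hm hΔx (ext_zeroBnd m x)

end Elayer

section Comm

lemma up_up_comm {k l : Fin d} (h : k ≠ l) (j : Fin d → ℕ) :
    up k (up l j) = up l (up k j) := by
  funext r
  by_cases h1 : r = k <;> by_cases h2 : r = l
  · exact absurd (h1.symm.trans h2) h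
  · simp [up, down, Function.update_apply, h1, h2, h, Ne.symm h]
  · simp [up, down, Function.update_apply, h1, h2, h, Ne.symm h]
  · simp [up, down, Function.update_apply, h1, h2, h, Ne.symm h]

lemma up_down_comm {k l : Fin d} (h : k ≠ l) (j : Fin d → ℕ) :
    up k (down l j) = down l (up k j) := by
  funext r
  by_cases h1 : r = k <;> by_cases h2 : r = l
  · exact absurd (h1.symm.trans h2) h
  · simp [up, down, Function.update_apply, h1, h2, h, Ne.symm h]
  · simp [up, down, Function.update_apply, h1, h2, h, Ne.symm h]
  · simp [up, down, Function.update_apply, h1, h2, h, Ne.symm h]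

lemma down_down_comm {k l : Fin d} (h : k ≠ l) (j : Fin d → ℕ) :
    down k (down l j) = down l (down k j) := by
  funext r
  by_cases h1 : r = k <;> by_cases h2 : r = l
  · exact absurd (h1.symm.trans h2) h
  · simp [up, down, Function.update_apply, h1, h2, h, Ne.symm h]
  · simp [up, down, Function.update_apply, h1, h2, h, Ne.symm h]
  · simp [up, down, Function.update_apply, h1, h2, h, Ne.symm h]

/-- raw second differences in distinct coordinates commute -/
lemma d2_comm_raw {k l : Fin d} (h : k ≠ l) (w : (Fin d → ℕ) → ℝ) (j : Fin d → ℕ) :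
    d2 Δx k (fun p => d2 Δx l w p) j = d2 Δx l (fun p => d2 Δx k w p) j := by
  simp only [d2]
  rw [up_up_comm h, up_down_comm h, up_down_comm (Ne.symm h), down_down_comm h]
  ring

/-- `d2` only depends on the values at `j`, `up k j`, `down k j` -/
lemma d2_congr3 (k : Fin d) (w w' : (Fin d → ℕ) → ℝ) (j : Fin d → ℕ)
    (h1 : w (up k j) = w' (up k j)) (h2 : w j = w' j) (h3 : w (down k j) = w' (down k j)) :
    d2 Δx k w j = d2 Δx k w' j := by
  simp only [d2, h1, h2, h3]

lemma d2_neg (k : Fin d) (w : (Fin d → ℕ) → ℝ) (j : Fin d → ℕ) :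
    d2 Δx k (fun p => -(w p)) j = -(d2 Δx k w j) := by
  simp only [d2]; ring

/-- if the `k`-th coordinate of `p` is out of range, `d2` in direction `l ≠ k` of an
extension vanishes at `p`. -/
lemma d2_ext_zero {k l : Fin d} (h : k ≠ l) (v : E m) {p : Fin d → ℕ}
    (hp : ¬ (1 ≤ p k ∧ p k ≤ m k - 1)) :
    d2 Δx l (ext m v) p = 0 := by
  have hz : ∀ q : Fin d → ℕ, q k = p k → ext m v q = 0 := by
    intro q hq
    apply uzero m _ (ext_zeroBnd m v)
    rw [mem_J]
    intro hint
    exact hp (hq ▸ hint k)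
  rw [d2]
  rw [hz (up l p) (up_ne h p), hz p rfl, hz (down l p) (down_ne h p)]
  ring

/-- agreement lemma: at points interior in every coordinate other than `k`,
`ext (Top l v)` agrees with the raw value. -/
lemma ext_Top_agree {k l : Fin d} (h : k ≠ l) (v : E m) {p : Fin d → ℕ}
    (hp : ∀ r, r ≠ k → (1 ≤ p r ∧ p r ≤ m r - 1)) :
    ext m (Top m Δx l v) p = -(d2 Δx l (ext m v) p) := by
  by_cases hmem : p ∈ J m
  · exact ext_Top m Δx l v hmem
  · rw [show ext m (Top m Δx l v) p = 0 from dif_neg hmem]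
    have hpk : ¬ (1 ≤ p k ∧ p k ≤ m k - 1) := by
      intro hk
      apply hmem
      rw [mem_J]
      intro r
      by_cases hr : r = k
      · exact hr ▸ hk
      · exact hp r hr
    rw [d2_ext_zero m Δx h v hpk, neg_zero]

lemma Top_comm (k l : Fin d) (v : E m) :
    Top m Δx k (Top m Δx l v) = Top m Δx l (Top m Δx k v) := by
  rcases eq_or_ne k l with rfl | h
  · rfl
  apply PiLp.ext; intro i
  obtain ⟨j, hj⟩ : ∃ j : Fin d → ℕ, i.1 = j ∧ j ∈ J m := ⟨i.1, rfl, i.2⟩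
  have hint : interiorIdx d m i.1 := (mem_J m).1 i.2
  have key : ∀ (k l : Fin d), k ≠ l →
      Top m Δx k (Top m Δx l v) i = -(d2 Δx k (fun p => -(d2 Δx l (ext m v) p)) i.1) := by
    intro k l hkl
    rw [Top_apply]
    congr 1
    apply d2_congr3
    · apply ext_Top_agree m Δx hkl v
      intro r hr
      rw [up_ne (fun hrr => hr hrr)]
      exact hint r
    · apply ext_Top_agree m Δx hkl v
      intro r _
      exact hint r
    · apply ext_Top_agree m Δx hkl v
      intro r hr
      rw [down_ne (fun hrr => hr hrr)]
      exact hint r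
  rw [key k l h, key l k (Ne.symm h)]
  have e1 : ∀ (a b : Fin d), -(d2 Δx a (fun p => -(d2 Δx b (ext m v) p)) i.1)
      = d2 Δx a (fun p => d2 Δx b (ext m v) p) i.1 := by
    intro a b
    rw [d2_neg, neg_neg]
  rw [e1, e1, d2_comm_raw Δx h]

end Comm

section Blayer

def Bop (k : Fin d) : E m →ₗ[ℝ] E m := LinearMap.id - ((Δx k)^2/12) • Top m Δx k

lemma Aop_ext (hΔx : ∀ k, 0 < Δx k) (k : Fin d) (v : E m) :
    Aop m k (ext m v) = ext m (Bop m Δx k v) := by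
  funext j
  by_cases h : j ∈ J m
  · have hint : interiorIdx d m j := (mem_J m).1 h
    rw [show Aop m k (ext m v) j
        = (ext m v (down k j) + 10 * ext m v j + ext m v (up k j)) / 12 from if_pos hint]
    rw [ext_mem m _ h, ext_mem m (Bop m Δx k v) h]
    have e1 : Bop m Δx k v ⟨j, h⟩
        = v ⟨j, h⟩ - ((Δx k)^2/12) * (Top m Δx k v ⟨j, h⟩) := by
      rw [Bop, LinearMap.sub_apply, LinearMap.smul_apply, LinearMap.id_apply]
      rfl
    rw [e1, Top_apply]
    rw [show v ⟨j, h⟩ = ext m v j from (ext_mem m v h).symm, d2]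
    have h2 : (Δx k)^2 ≠ 0 := pow_ne_zero 2 (hΔx k).ne'
    have h1 : Δx k ≠ 0 := (hΔx k).ne'
    field_simp
    ring
  · rw [show Aop m k (ext m v) j = ext m v j
        from if_neg (fun hint => h ((mem_J m).2 hint))]
    rw [show ext m v j = 0 from dif_neg h,
      show ext m (Bop m Δx k v) j = 0 from dif_neg h]

def Bfold (L : List (Fin d)) : E m →ₗ[ℝ] E m :=
  L.foldr (fun k g => Bop m Δx k ∘ₗ g) LinearMap.id

lemma foldr_Aop_ext (hΔx : ∀ k, 0 < Δx k) (L : List (Fin d)) (v : E m) :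
    L.foldr (fun k w => Aop m k w) (ext m v) = ext m (Bfold m Δx L v) := by
  induction L with
  | nil => simp [Bfold]
  | cons k L ih =>
    show Aop m k (L.foldr (fun k w => Aop m k w) (ext m v)) = _
    rw [ih, Aop_ext m Δx hΔx]
    rfl

lemma Bfold_eigen (L : List (Fin d)) (x : E m) (χ : Fin d → ℝ)
    (hx : ∀ k, Top m Δx k x = χ k • x) :
    Bfold m Δx L x = (L.map (fun k => 1 - (Δx k)^2/12 * χ k)).prod • x := by
  induction L with
  | nil => simp [Bfold]
  | cons k L ih =>
    show Bop m Δx k (Bfold m Δx L x) = _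
    rw [ih, map_smul, List.map_cons, List.prod_cons]
    rw [show Bop m Δx k x = x - ((Δx k)^2/12) • (Top m Δx k x) from rfl, hx k]
    rw [smul_smul, smul_sub, smul_smul]
    module

lemma list_prod_bound (L : List (Fin d)) (f : Fin d → ℝ)
    (h : ∀ k ∈ L, 2/3 ≤ f k ∧ f k ≤ 1) :
    (2/3 : ℝ)^(L.length) ≤ (L.map f).prod ∧ (L.map f).prod ≤ 1 := by
  induction L with
  | nil => simp
  | cons k L ih =>
    have hk := h k (List.mem_cons_self)
    have ih' := ih (fun l hl => h l (List.mem_cons_of_mem _ hl))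
    have hpos : (0:ℝ) ≤ (2/3)^L.length := by positivity
    have hfk : (0:ℝ) ≤ f k := le_trans (by norm_num) hk.1
    constructor
    · rw [List.length_cons, List.map_cons, List.prod_cons, pow_succ, mul_comm ((2/3 : ℝ)^L.length)]
      exact mul_le_mul hk.1 ih'.1 hpos hfk
    · rw [List.map_cons, List.prod_cons]
      calc f k * (L.map f).prod ≤ 1 * 1 :=
        mul_le_mul hk.2 ih'.2 (le_trans hpos ih'.1) (by norm_num)
      _ = 1 := by norm_num

lemma ip_def (u w : (Fin d → ℕ) → ℝ) :
    ip m Δx u w = (∏ r, Δx r) * ∑ j ∈ J m, u j * w j := rfl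

lemma inner_repr (a b : E m) : (inner ℝ a b : ℝ) = ∑ i : ↥(J m), a i * b i := by
  rw [PiLp.inner_apply]
  simp [RCLike.inner_apply]
  exact Finset.sum_congr rfl (fun i _ => mul_comm _ _)

end Blayer

section Spectral

open Module.End LinearMap

lemma core (hm : ∀ k, 2 ≤ m k) (hΔx : ∀ k, 0 < Δx k) (v : E m) :
    ((2:ℝ)/3)^d * (∑ k, (inner ℝ v (Top m Δx k v) : ℝ))
      ≤ (∑ k, (inner ℝ (Bfold m Δx (List.finRange d) v) (Top m Δx k v) : ℝ))
    ∧ (∑ k, (inner ℝ (Bfold m Δx (List.finRange d) v) (Top m Δx k v) : ℝ))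
      ≤ ∑ k, (inner ℝ v (Top m Δx k v) : ℝ) := by
  have hsymm : ∀ k, (Top m Δx k).IsSymmetric := fun k => Top_symm m Δx hm hΔx k
  have hcomm : Pairwise (Function.onFun Commute fun k => Top m Δx k) := by
    intro k l _
    exact LinearMap.ext (fun x => Top_comm m Δx k l x)
  have htop := LinearMap.IsSymmetric.iSup_iInf_eq_top_of_commute hsymm hcomm
  have hv : v ∈ ⨆ χ : Fin d → ℝ, ⨅ k, eigenspace (Top m Δx k) (χ k) := by
    rw [htop]; exact Submodule.mem_top
  obtain ⟨f, hf, hsum⟩ := (Submodule.mem_iSup_iff_exists_finsupp _ v).1 hv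
  have eig : ∀ χ k, Top m Δx k (f χ) = χ k • f χ := fun χ k =>
    mem_eigenspace_iff.1 ((Submodule.mem_iInf _).1 (hf χ) k)
  have vsum : ∑ χ ∈ f.support, f χ = v := hsum
  have orth : ∀ χ χ' : Fin d → ℝ, χ ≠ χ' → (inner ℝ (f χ) (f χ') : ℝ) = 0 := by
    intro χ χ' hne
    obtain ⟨a, ha⟩ := Function.ne_iff.1 hne
    have h1 : χ a * (inner ℝ (f χ) (f χ') : ℝ) = χ' a * (inner ℝ (f χ) (f χ') : ℝ) := by
      calc χ a * (inner ℝ (f χ) (f χ') : ℝ) = (inner ℝ (χ a • f χ) (f χ') : ℝ) :=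
            (real_inner_smul_left _ _ _).symm
        _ = (inner ℝ (Top m Δx a (f χ)) (f χ') : ℝ) := by rw [eig χ a]
        _ = (inner ℝ (f χ) (Top m Δx a (f χ')) : ℝ) := hsymm a _ _
        _ = (inner ℝ (f χ) (χ' a • f χ') : ℝ) := by rw [eig χ' a]
        _ = χ' a * (inner ℝ (f χ) (f χ') : ℝ) := real_inner_smul_right _ _ _
    have h2 : (χ a - χ' a) * (inner ℝ (f χ) (f χ') : ℝ) = 0 := by linarith
    exact (mul_eq_zero.1 h2).resolve_left (sub_ne_zero.2 ha)
  have keyχ : ∀ χ ∈ f.support, ∀ k, 0 ≤ χ k ∧ χ k ≤ 4/(Δx k)^2 := by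
    intro χ hχ k
    have hne : f χ ≠ 0 := Finsupp.mem_support_iff.1 hχ
    have hP0 : (inner ℝ (f χ) (f χ) : ℝ) ≠ 0 := fun h => hne (inner_self_eq_zero.1 h)
    have hP : (0:ℝ) < inner ℝ (f χ) (f χ) := lt_of_le_of_ne real_inner_self_nonneg (Ne.symm hP0)
    have he : (inner ℝ (f χ) (Top m Δx k (f χ)) : ℝ) = χ k * inner ℝ (f χ) (f χ) := by
      rw [eig χ k]; exact real_inner_smul_right _ _ _
    have h0 : 0 ≤ χ k * (inner ℝ (f χ) (f χ) : ℝ) := he ▸ inner_Top_nonneg m Δx hm hΔx k (f χ)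
    have h4 : χ k * (inner ℝ (f χ) (f χ) : ℝ) ≤ 4/(Δx k)^2 * inner ℝ (f χ) (f χ) :=
      he ▸ inner_Top_le m Δx hm hΔx k (f χ)
    constructor
    · by_contra hc
      push_neg at hc
      nlinarith
    · exact le_of_mul_le_mul_right (by linarith [h4]) hP
  set bχ : (Fin d → ℝ) → ℝ :=
    fun χ => ((List.finRange d).map (fun k => 1 - (Δx k)^2/12 * χ k)).prod with hbχ
  have hb : ∀ χ ∈ f.support, ((2:ℝ)/3)^d ≤ bχ χ ∧ bχ χ ≤ 1 := by
    intro χ hχ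
    have := list_prod_bound (List.finRange d) (fun k => 1 - (Δx k)^2/12 * χ k) ?_
    · rwa [List.length_finRange] at this
    · intro k _
      obtain ⟨h0, h4⟩ := keyχ χ hχ k
      have h2 : (0:ℝ) < (Δx k)^2 := pow_pos (hΔx k) 2
      constructor
      · have : (Δx k)^2/12 * χ k ≤ (Δx k)^2/12 * (4/(Δx k)^2) := by
          apply mul_le_mul_of_nonneg_left h4 (by positivity)
        have he : (Δx k)^2/12 * (4/(Δx k)^2) = 1/3 := by
          have h1 : Δx k ≠ 0 := (hΔx k).ne'
          field_simp; ring
        rw [he] at this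
        linarith
      · have : 0 ≤ (Δx k)^2/12 * χ k := by positivity
        linarith
  have hBf : Bfold m Δx (List.finRange d) v = ∑ χ ∈ f.support, bχ χ • f χ := by
    rw [← vsum, map_sum]
    exact Finset.sum_congr rfl fun χ _ => Bfold_eigen m Δx (List.finRange d) (f χ) χ (eig χ)
  have diag : ∀ χ ∈ f.support, ∀ k, (inner ℝ (f χ) (Top m Δx k v) : ℝ)
      = χ k * (inner ℝ (f χ) (f χ) : ℝ) := by
    intro χ hχ k
    rw [← vsum, map_sum, inner_sum]
    rw [Finset.sum_eq_single_of_mem χ hχ ?_]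
    · rw [eig χ k]; exact real_inner_smul_right _ _ _
    · intro χ' _ hne
      rw [eig χ' k, real_inner_smul_right, orth χ χ' (Ne.symm hne), mul_zero]
  have expandT : ∀ k, (inner ℝ v (Top m Δx k v) : ℝ)
      = ∑ χ ∈ f.support, χ k * (inner ℝ (f χ) (f χ) : ℝ) := by
    intro k
    calc (inner ℝ v (Top m Δx k v) : ℝ)
        = ∑ χ ∈ f.support, (inner ℝ (f χ) (Top m Δx k v) : ℝ) := by rw [← sum_inner, vsum]
      _ = ∑ χ ∈ f.support, χ k * (inner ℝ (f χ) (f χ) : ℝ) :=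
        Finset.sum_congr rfl (fun χ hχ => diag χ hχ k)
  have expandBT : ∀ k, (inner ℝ (Bfold m Δx (List.finRange d) v) (Top m Δx k v) : ℝ)
      = ∑ χ ∈ f.support, bχ χ * (χ k * (inner ℝ (f χ) (f χ) : ℝ)) := by
    intro k
    rw [hBf, sum_inner]
    apply Finset.sum_congr rfl
    intro χ hχ
    rw [real_inner_smul_left, diag χ hχ k]
  constructor
  · rw [Finset.mul_sum]
    apply Finset.sum_le_sum
    intro k _
    rw [expandT k, expandBT k, Finset.mul_sum]
    apply Finset.sum_le_sum
    intro χ hχ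
    have hterm : 0 ≤ χ k * (inner ℝ (f χ) (f χ) : ℝ) :=
      mul_nonneg (keyχ χ hχ k).1 real_inner_self_nonneg
    exact mul_le_mul_of_nonneg_right (hb χ hχ).1 hterm
  · apply Finset.sum_le_sum
    intro k _
    rw [expandT k, expandBT k]
    apply Finset.sum_le_sum
    intro χ hχ
    have hterm : 0 ≤ χ k * (inner ℝ (f χ) (f χ) : ℝ) :=
      mul_nonneg (keyχ χ hχ k).1 real_inner_self_nonneg
    calc bχ χ * (χ k * (inner ℝ (f χ) (f χ) : ℝ)) ≤ 1 * (χ k * (inner ℝ (f χ) (f χ) : ℝ)) :=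
          mul_le_mul_of_nonneg_right (hb χ hχ).2 hterm
      _ = χ k * (inner ℝ (f χ) (f χ) : ℝ) := one_mul _

end Spectral

section Final

lemma semi1sq_ext (hm : ∀ k, 2 ≤ m k) (hΔx : ∀ k, 0 < Δx k) (k : Fin d) (v : E m) :
    semi1sq m Δx k (ext m v) = (∏ r, Δx r) * (inner ℝ v (Top m Δx k v) : ℝ) := by
  rw [inner_Top m Δx hm hΔx]
  show (∏ r, Δx r) * ∑ j ∈ Jk m k, ((ext m v (up k j) - ext m v j) / Δx k)^2 = _
  congr 1
  exact Finset.sum_congr rfl (fun j _ => by rw [pow_two])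

lemma norm1sq_ext (hm : ∀ k, 2 ≤ m k) (hΔx : ∀ k, 0 < Δx k) (v : E m) :
    norm1sq m Δx (ext m v) = (∏ r, Δx r) * ∑ k, (inner ℝ v (Top m Δx k v) : ℝ) := by
  rw [norm1sq, Finset.mul_sum]
  exact Finset.sum_congr rfl (fun k _ => semi1sq_ext m Δx hm hΔx k v)

lemma neg_lapH (v : E m) (i : ↥(J m)) :
    -(lapH Δx (ext m v) i.1) = ∑ k, (Top m Δx k v) i := by
  show -(∑ k, d2 Δx k (ext m v) i.1) = _
  rw [← Finset.sum_neg_distrib]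
  exact Finset.sum_congr rfl (fun k _ => rfl)

lemma ip_main (hΔx : ∀ k, 0 < Δx k) (v : E m) :
    ip m Δx (Ah m (ext m v)) (-(lapH Δx (ext m v)))
      = (∏ r, Δx r) * ∑ k, (inner ℝ (Bfold m Δx (List.finRange d) v) (Top m Δx k v) : ℝ) := by
  have hAh : Ah m (ext m v) = ext m (Bfold m Δx (List.finRange d) v) :=
    foldr_Aop_ext m Δx hΔx (List.finRange d) v
  rw [hAh, ip_def]
  congr 1
  calc ∑ j ∈ J m, ext m (Bfold m Δx (List.finRange d) v) j * (-(lapH Δx (ext m v))) j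
      = ∑ i : ↥(J m), (Bfold m Δx (List.finRange d) v) i * ∑ k, (Top m Δx k v) i := by
        rw [← Finset.sum_coe_sort (J m)
          (fun j => ext m (Bfold m Δx (List.finRange d) v) j * (-(lapH Δx (ext m v))) j)]
        apply Finset.sum_congr rfl
        intro i _
        rw [ext_coe, Pi.neg_apply, neg_lapH m Δx v i]
    _ = ∑ i : ↥(J m), ∑ k, (Bfold m Δx (List.finRange d) v) i * (Top m Δx k v) i := by
        exact Finset.sum_congr rfl (fun i _ => Finset.mul_sum _ _ _)
    _ = ∑ k, ∑ i : ↥(J m), (Bfold m Δx (List.finRange d) v) i * (Top m Δx k v) i :=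
        Finset.sum_comm
    _ = ∑ k, (inner ℝ (Bfold m Δx (List.finRange d) v) (Top m Δx k v) : ℝ) :=
        Finset.sum_congr rfl (fun k _ => (inner_repr m _ _).symm)

end Final

end Stmt8

/-- For every `u ∈ °U`: `(2/3)^d |u|₁² ≤ (A_h u, −Δ_h u) ≤ |u|₁²`. -/
theorem stmt_8 (d : ℕ) (hd : 1 ≤ d) (m : Fin d → ℕ) (hm : ∀ k, 2 ≤ m k)
    (Δx : Fin d → ℝ) (hΔx : ∀ k, 0 < Δx k)
    (u : (Fin d → ℕ) → ℝ) (hu : zeroBnd m u) :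
    (2/3 : ℝ) ^ d * norm1sq m Δx u ≤ ip m Δx (Ah m u) (-(lapH Δx u))
    ∧ ip m Δx (Ah m u) (-(lapH Δx u)) ≤ norm1sq m Δx u := by
  have hvol : (0:ℝ) ≤ ∏ r, Δx r := Finset.prod_nonneg (fun r _ => (hΔx r).le)
  set v : Stmt8.E m := Stmt8.res m u with hv
  have hue : Stmt8.ext m v = u := Stmt8.ext_res m u hu
  obtain ⟨h1, h2⟩ := Stmt8.core m Δx hm hΔx v
  rw [← hue, Stmt8.ip_main m Δx hΔx v, Stmt8.norm1sq_ext m Δx hm hΔx v]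
  constructor
  · calc (2/3:ℝ)^d * ((∏ r, Δx r) * ∑ k, (inner ℝ v (Stmt8.Top m Δx k v) : ℝ))
        = (∏ r, Δx r) * ((2/3:ℝ)^d * ∑ k, (inner ℝ v (Stmt8.Top m Δx k v) : ℝ)) := by ring
      _ ≤ (∏ r, Δx r) *
            ∑ k, (inner ℝ (Stmt8.Bfold m Δx (List.finRange d) v) (Stmt8.Top m Δx k v) : ℝ) :=
          mul_le_mul_of_nonneg_left h1 hvol
  · exact mul_le_mul_of_nonneg_left h2 hvol

end
end

section
/- For every u in the space °U of grid functions vanishing on the boundary of the d-dimensional grid: (2/3)^{d−1} ‖Δ_h u‖² ≤ (Λ_h u, Δ_h u) ≤ ‖Δ_h u‖². -/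
open Classical

noncomputable section

section MatrixGeneral

open Matrix

variable {n : Type*} [Fintype n] [DecidableEq n]

lemma dot_shift (M : Matrix n n ℝ) (a b : n → ℝ) :
    (M *ᵥ a) ⬝ᵥ b = a ⬝ᵥ (Mᵀ *ᵥ b) := by
  simp only [dotProduct, Matrix.mulVec, dotProduct, Matrix.transpose_apply,
    Finset.sum_mul, Finset.mul_sum]
  rw [Finset.sum_comm]
  apply Finset.sum_congr rfl; intros; apply Finset.sum_congr rfl; intros; ring

lemma dot_shift' (M : Matrix n n ℝ) (a b : n → ℝ) :
    a ⬝ᵥ (M *ᵥ b) = (Mᵀ *ᵥ a) ⬝ᵥ b := by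
  rw [dot_shift Mᵀ a b, Matrix.transpose_transpose]

def myPSD (M : Matrix n n ℝ) : Prop := Mᵀ = M ∧ ∀ x : n → ℝ, 0 ≤ x ⬝ᵥ (M *ᵥ x)

lemma myPSD.posSemidef {M : Matrix n n ℝ} (h : myPSD M) : M.PosSemidef := by
  rw [Matrix.posSemidef_iff_dotProduct_mulVec]
  constructor
  · rw [Matrix.IsHermitian, conjTranspose_eq_transpose_of_trivial]; exact h.1
  · intro x; simpa using h.2 x

lemma myPSD_zero : myPSD (0 : Matrix n n ℝ) :=
  ⟨Matrix.transpose_zero, fun x => by simp⟩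

lemma myPSD_one : myPSD (1 : Matrix n n ℝ) := by
  refine ⟨Matrix.transpose_one, fun x => ?_⟩
  rw [Matrix.one_mulVec]
  exact Finset.sum_nonneg fun i _ => mul_self_nonneg (x i)

lemma myPSD_add {A B : Matrix n n ℝ} (hA : myPSD A) (hB : myPSD B) : myPSD (A + B) := by
  refine ⟨by rw [Matrix.transpose_add, hA.1, hB.1], fun x => ?_⟩
  rw [Matrix.add_mulVec, dotProduct_add]
  exact add_nonneg (hA.2 x) (hB.2 x)

lemma myPSD_smul {A : Matrix n n ℝ} {c : ℝ} (hc : 0 ≤ c) (hA : myPSD A) :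
    myPSD (c • A) := by
  refine ⟨by rw [Matrix.transpose_smul, hA.1], fun x => ?_⟩
  rw [Matrix.smul_mulVec, dotProduct_smul, smul_eq_mul]
  exact mul_nonneg hc (hA.2 x)

lemma myPSD_sum {ι : Type*} (s : Finset ι) (f : ι → Matrix n n ℝ)
    (h : ∀ i ∈ s, myPSD (f i)) : myPSD (∑ i ∈ s, f i) :=
  Finset.sum_induction f myPSD (fun _ _ ha hb => myPSD_add ha hb) myPSD_zero h

lemma myPSD_mul {A B : Matrix n n ℝ} (hA : myPSD A) (hB : myPSD B)
    (hc : A * B = B * A) : myPSD (A * B) := by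
  constructor
  · rw [Matrix.transpose_mul, hA.1, hB.1, hc]
  intro x
  have hBpsd := hB.posSemidef
  have hH := hBpsd.1
  set U : Matrix n n ℝ := (hH.eigenvectorUnitary : Matrix n n ℝ) with hUdef
  set μ : n → ℝ := hH.eigenvalues with hμdef
  have hstar : star U = Uᵀ := by
    rw [Matrix.star_eq_conjTranspose, conjTranspose_eq_transpose_of_trivial]
  have hU1 : U * Uᵀ = 1 := by
    rw [← hstar]; exact (Matrix.mem_unitaryGroup_iff).mp (hH.eigenvectorUnitary).2
  have hD : Uᵀ * B * U = Matrix.diagonal μ := by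
    have := hH.conjStarAlgAut_star_eigenvectorUnitary
    simp only [Unitary.conjStarAlgAut_star_apply, Unitary.coe_star] at this
    rw [hstar] at this
    rw [this]; rfl
  set A' : Matrix n n ℝ := Uᵀ * A * U with hA'def
  have hA'form : ∀ z : n → ℝ, 0 ≤ z ⬝ᵥ (A' *ᵥ z) := by
    intro z
    have h1 : z ⬝ᵥ (A' *ᵥ z) = (U *ᵥ z) ⬝ᵥ (A *ᵥ (U *ᵥ z)) := by
      rw [hA'def, ← Matrix.mulVec_mulVec, ← Matrix.mulVec_mulVec]
      rw [dot_shift' Uᵀ z (A *ᵥ (U *ᵥ z)), Matrix.transpose_transpose]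
    rw [h1]; exact hA.2 (U *ᵥ z)
  have hcomm' : A' * Matrix.diagonal μ = Matrix.diagonal μ * A' := by
    rw [← hD, hA'def]
    calc Uᵀ * A * U * (Uᵀ * B * U) = Uᵀ * (A * (U * Uᵀ) * B) * U := by
          simp only [Matrix.mul_assoc]
      _ = Uᵀ * (A * B) * U := by rw [hU1, Matrix.mul_one]
      _ = Uᵀ * (B * A) * U := by rw [hc]
      _ = Uᵀ * (B * (U * Uᵀ) * A) * U := by rw [hU1, Matrix.mul_one]
      _ = Uᵀ * B * U * (Uᵀ * A * U) := by simp only [Matrix.mul_assoc]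
  have hentry : ∀ i j, A' i j * μ j = μ i * A' i j := by
    intro i j
    have := congr_fun (congr_fun hcomm' i) j
    rwa [Matrix.mul_diagonal, Matrix.diagonal_mul] at this
  have hμ0 : ∀ i, 0 ≤ μ i := hBpsd.eigenvalues_nonneg
  have hABdecomp : A * B = U * (A' * Matrix.diagonal μ) * Uᵀ := by
    rw [hA'def, ← hD]
    calc A * B = (U * Uᵀ) * A * (U * Uᵀ) * B * (U * Uᵀ) := by
          rw [hU1]; simp [Matrix.mul_assoc]
      _ = U * (Uᵀ * A * U * (Uᵀ * B * U)) * Uᵀ := by simp only [Matrix.mul_assoc]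
  set y : n → ℝ := Uᵀ *ᵥ x with hydef
  have hxy : x ⬝ᵥ ((A * B) *ᵥ x) = y ⬝ᵥ ((A' * Matrix.diagonal μ) *ᵥ y) := by
    rw [hABdecomp, ← Matrix.mulVec_mulVec, ← Matrix.mulVec_mulVec]
    rw [dot_shift' U x ((A' * Matrix.diagonal μ) *ᵥ (Uᵀ *ᵥ x))]
  rw [hxy]
  set z : n → ℝ := fun i => Real.sqrt (μ i) * y i with hzdef
  have hterm : ∀ i j, y i * ((A' * Matrix.diagonal μ) i j * y j) = z i * (A' i j * z j) := by
    intro i j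
    rw [Matrix.mul_diagonal, hzdef]
    by_cases h0 : A' i j = 0
    · simp [h0]
    · have hij : μ j = μ i := by
        have h2 := hentry i j
        rw [mul_comm (μ i) (A' i j)] at h2
        exact mul_left_cancel₀ h0 h2
      have hs : Real.sqrt (μ i) * Real.sqrt (μ j) = μ j := by
        rw [hij]; exact Real.mul_self_sqrt (hμ0 i)
      have : Real.sqrt (μ i) * y i * (A' i j * (Real.sqrt (μ j) * y j))
          = (Real.sqrt (μ i) * Real.sqrt (μ j)) * (y i * (A' i j * y j)) := by ring
      rw [this, hs]; ring
  have hzz : y ⬝ᵥ ((A' * Matrix.diagonal μ) *ᵥ y) = z ⬝ᵥ (A' *ᵥ z) := by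
    simp only [dotProduct, Matrix.mulVec, dotProduct, Finset.mul_sum]
    apply Finset.sum_congr rfl; intro i _
    apply Finset.sum_congr rfl; intro j _
    exact hterm i j
  rw [hzz]; exact hA'form z

end MatrixGeneral


namespace S9

open Matrix

variable {d : ℕ}

/-! ### index shifts -/

lemma up_apply_self (k : Fin d) (p : Fin d → ℕ) : up k p k = p k + 1 := by
  simp [up]

lemma up_apply_ne {k l : Fin d} (h : l ≠ k) (p : Fin d → ℕ) : up k p l = p l := by
  simp [up, Function.update_of_ne h]

lemma down_apply_self (k : Fin d) (p : Fin d → ℕ) : down k p k = p k - 1 := by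
  simp [down]

lemma down_apply_ne {k l : Fin d} (h : l ≠ k) (p : Fin d → ℕ) : down k p l = p l := by
  simp [down, Function.update_of_ne h]

lemma down_up (k : Fin d) (p : Fin d → ℕ) : down k (up k p) = p := by
  funext l
  rcases eq_or_ne l k with rfl | h
  · simp [down_apply_self, up_apply_self]
  · simp [down_apply_ne h, up_apply_ne h]

lemma up_down {k : Fin d} {p : Fin d → ℕ} (h : 1 ≤ p k) : up k (down k p) = p := by
  funext l
  rcases eq_or_ne l k with rfl | hl
  · simp [up_apply_self, down_apply_self]; omega
  · simp [up_apply_ne hl, down_apply_ne hl]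

lemma up_inj {k : Fin d} {p q : Fin d → ℕ} (h : up k p = up k q) : p = q := by
  have := congrArg (down k) h
  rwa [down_up, down_up] at this

lemma eq_up_iff {k : Fin d} {i j : Fin d → ℕ} (hj : 1 ≤ j k) :
    j = up k i ↔ i = down k j := by
  constructor
  · rintro rfl; rw [down_up]
  · rintro rfl; rw [up_down hj]

lemma up_up_comm {k l : Fin d} (h : k ≠ l) (p : Fin d → ℕ) :
    up k (up l p) = up l (up k p) := by
  funext r
  rcases eq_or_ne r k with rfl | hk
  · rw [up_apply_self, up_apply_ne h, up_apply_ne h, up_apply_self]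
  · rcases eq_or_ne r l with rfl | hl
    · rw [up_apply_ne (Ne.symm h), up_apply_self, up_apply_self, up_apply_ne (Ne.symm h)]
    · rw [up_apply_ne hk, up_apply_ne hl, up_apply_ne hl, up_apply_ne hk]

lemma up_down_comm {k l : Fin d} (h : k ≠ l) (p : Fin d → ℕ) :
    up k (down l p) = down l (up k p) := by
  funext r
  rcases eq_or_ne r k with rfl | hk
  · rw [up_apply_self, down_apply_ne h, down_apply_ne h, up_apply_self]
  · rcases eq_or_ne r l with rfl | hl
    · rw [up_apply_ne (Ne.symm h), down_apply_self, down_apply_self, up_apply_ne (Ne.symm h)]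
    · rw [up_apply_ne hk, down_apply_ne hl, down_apply_ne hl, up_apply_ne hk]

lemma down_down_comm {k l : Fin d} (h : k ≠ l) (p : Fin d → ℕ) :
    down k (down l p) = down l (down k p) := by
  funext r
  rcases eq_or_ne r k with rfl | hk
  · rw [down_apply_self, down_apply_ne h, down_apply_ne h, down_apply_self]
  · rcases eq_or_ne r l with rfl | hl
    · rw [down_apply_ne (Ne.symm h), down_apply_self, down_apply_self,
        down_apply_ne (Ne.symm h)]
    · rw [down_apply_ne hk, down_apply_ne hl, down_apply_ne hl, down_apply_ne hk]

/-! ### the interior index set -/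

def Ifin (d : ℕ) (m : Fin d → ℕ) : Finset (Fin d → ℕ) :=
  Fintype.piFinset fun k => Finset.Icc 1 (m k - 1)

lemma mem_Ifin {m : Fin d → ℕ} {j : Fin d → ℕ} :
    j ∈ Ifin d m ↔ interiorIdx d m j := by
  simp [Ifin, interiorIdx, Fintype.mem_piFinset, Finset.mem_Icc]

abbrev NI (d : ℕ) (m : Fin d → ℕ) := {j : Fin d → ℕ // j ∈ Ifin d m}

variable {m : Fin d → ℕ}

def extv (m : Fin d → ℕ) (v : NI d m → ℝ) : (Fin d → ℕ) → ℝ :=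
  fun p => if h : p ∈ Ifin d m then v ⟨p, h⟩ else 0

lemma extv_coe (v : NI d m → ℝ) (i : NI d m) : extv m v ↑i = v i := by
  simp [extv, i.2]

lemma extv_not_mem {v : NI d m → ℝ} {p : Fin d → ℕ} (h : p ∉ Ifin d m) :
    extv m v p = 0 := by simp [extv, h]

lemma sum_ite_coe (c : Fin d → ℕ) (r : ℝ) (v : NI d m → ℝ) :
    (∑ j : NI d m, (if (j : Fin d → ℕ) = c then r else 0) * v j) = r * extv m v c := by
  by_cases hc : c ∈ Ifin d m
  · rw [Finset.sum_eq_single (⟨c, hc⟩ : NI d m)]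
    · simp [extv, hc]
    · intro b _ hb
      have : (b : Fin d → ℕ) ≠ c := fun h => hb (Subtype.ext h)
      simp [this]
    · intro h; exact absurd (Finset.mem_univ _) h
  · rw [extv_not_mem hc]
    rw [Finset.sum_eq_zero]
    · ring
    · intro b _
      have : (b : Fin d → ℕ) ≠ c := fun h => hc (h ▸ b.2)
      simp [this]

lemma extv_eq_sum (c : Fin d → ℕ) (v : NI d m → ℝ) :
    extv m v c = ∑ j : NI d m, (if (j : Fin d → ℕ) = c then v j else 0) := by
  rw [show (∑ j : NI d m, (if (j : Fin d → ℕ) = c then v j else 0))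
      = ∑ j : NI d m, (if (j : Fin d → ℕ) = c then (1:ℝ) else 0) * v j by
    apply Finset.sum_congr rfl; intro j _; split <;> simp]
  rw [sum_ite_coe, one_mul]

variable (Δx : Fin d → ℝ)

/-- the matrix of `-δ_k²` on interior grid functions. -/
def Dm (m : Fin d → ℕ) (Δx : Fin d → ℝ) (k : Fin d) : Matrix (NI d m) (NI d m) ℝ :=
  fun i j =>
    ((if (j : Fin d → ℕ) = ↑i then (2:ℝ) else 0)
      - (if (j : Fin d → ℕ) = up k ↑i then 1 else 0)
      - (if (j : Fin d → ℕ) = down k ↑i then 1 else 0)) / Δx k ^ 2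

lemma mulVec_Dm (k : Fin d) (v : NI d m → ℝ) (i : NI d m) :
    (Dm m Δx k *ᵥ v) i
      = (2 * v i - extv m v (up k ↑i) - extv m v (down k ↑i)) / Δx k ^ 2 := by
  simp only [Matrix.mulVec, dotProduct, Dm]
  rw [show ∀ (f : NI d m → ℝ), (∑ j : NI d m, f j) = ∑ j : NI d m, f j from fun _ => rfl]
  have : ∀ j : NI d m,
      ((if (j : Fin d → ℕ) = ↑i then (2:ℝ) else 0)
        - (if (j : Fin d → ℕ) = up k ↑i then 1 else 0)
        - (if (j : Fin d → ℕ) = down k ↑i then 1 else 0)) / Δx k ^ 2 * v j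
      = ((if (j : Fin d → ℕ) = ↑i then (2:ℝ) else 0) * v j
        - (if (j : Fin d → ℕ) = up k ↑i then (1:ℝ) else 0) * v j
        - (if (j : Fin d → ℕ) = down k ↑i then (1:ℝ) else 0) * v j) / Δx k ^ 2 := by
    intro j; ring
  rw [Finset.sum_congr rfl fun j _ => this j, ← Finset.sum_div]
  rw [Finset.sum_sub_distrib, Finset.sum_sub_distrib, sum_ite_coe, sum_ite_coe, sum_ite_coe]
  rw [extv_coe, one_mul, one_mul]

/-- the grid-level operator `-δ_k²` (without boundary handling). -/
def Tg (Δx : Fin d → ℝ) (k : Fin d) (w : (Fin d → ℕ) → ℝ) : (Fin d → ℕ) → ℝ :=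
  fun p => (2 * w p - w (up k p) - w (down k p)) / Δx k ^ 2

lemma Tg_comm (k l : Fin d) (w : (Fin d → ℕ) → ℝ) (p : Fin d → ℕ) :
    Tg Δx k (Tg Δx l w) p = Tg Δx l (Tg Δx k w) p := by
  rcases eq_or_ne k l with rfl | hkl
  · rfl
  · simp only [Tg]
    rw [up_up_comm hkl, up_down_comm hkl, down_down_comm hkl,
      ← up_down_comm hkl.symm]
    ring

lemma mulVec_Dm_Tg (k : Fin d) (v : NI d m → ℝ) (i : NI d m) :
    (Dm m Δx k *ᵥ v) i = Tg Δx k (extv m v) ↑i := by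
  rw [mulVec_Dm, Tg, extv_coe]

def badAt (m : Fin d → ℕ) (r : Fin d) (p : Fin d → ℕ) : Prop :=
  ¬(1 ≤ p r ∧ p r ≤ m r - 1)

lemma not_mem_of_bad {r : Fin d} {p : Fin d → ℕ} (h : badAt m r p) : p ∉ Ifin d m := by
  rw [mem_Ifin]; intro hmem; exact h (hmem r)

lemma bad_up {r l : Fin d} (hlr : l ≠ r) {p : Fin d → ℕ} (h : badAt m r p) :
    badAt m r (up l p) := by
  unfold badAt at *; rwa [up_apply_ne (Ne.symm hlr)]

lemma bad_down {r l : Fin d} (hlr : l ≠ r) {p : Fin d → ℕ} (h : badAt m r p) :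
    badAt m r (down l p) := by
  unfold badAt at *; rwa [down_apply_ne (Ne.symm hlr)]

lemma Tg_extv_bad {l r : Fin d} (hlr : l ≠ r) {p : Fin d → ℕ} (hbad : badAt m r p)
    (v : NI d m → ℝ) : Tg Δx l (extv m v) p = 0 := by
  rw [Tg, extv_not_mem (not_mem_of_bad hbad),
    extv_not_mem (not_mem_of_bad (bad_up hlr hbad)),
    extv_not_mem (not_mem_of_bad (bad_down hlr hbad))]
  ring

lemma up_mem_or_bad (k : Fin d) (i : NI d m) :
    up k ↑i ∈ Ifin d m ∨ badAt m k (up k ↑i) := by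
  by_cases h : up k ↑i ∈ Ifin d m
  · exact Or.inl h
  · right
    intro hk
    apply h
    rw [mem_Ifin]
    intro r
    rcases eq_or_ne r k with rfl | hr
    · exact hk
    · rw [up_apply_ne hr]; exact (mem_Ifin.mp i.2) r

lemma down_mem_or_bad (k : Fin d) (i : NI d m) :
    down k ↑i ∈ Ifin d m ∨ badAt m k (down k ↑i) := by
  by_cases h : down k ↑i ∈ Ifin d m
  · exact Or.inl h
  · right
    intro hk
    apply h
    rw [mem_Ifin]
    intro r
    rcases eq_or_ne r k with rfl | hr
    · exact hk
    · rw [down_apply_ne hr]; exact (mem_Ifin.mp i.2) r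

lemma extv_DmMulVec_eq {k l : Fin d} (hkl : k ≠ l) (v : NI d m → ℝ) {p : Fin d → ℕ}
    (hp : p ∈ Ifin d m ∨ badAt m k p) :
    extv m (Dm m Δx l *ᵥ v) p = Tg Δx l (extv m v) p := by
  rcases hp with hp | hp
  · rw [show p = ((⟨p, hp⟩ : NI d m) : Fin d → ℕ) from rfl, extv_coe, mulVec_Dm_Tg]
  · rw [extv_not_mem (not_mem_of_bad hp), Tg_extv_bad Δx hkl.symm hp]

lemma mulVec_Dm_Dm {k l : Fin d} (hkl : k ≠ l) (v : NI d m → ℝ) (i : NI d m) :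
    (Dm m Δx k *ᵥ (Dm m Δx l *ᵥ v)) i = Tg Δx k (Tg Δx l (extv m v)) ↑i := by
  rw [mulVec_Dm]
  rw [extv_DmMulVec_eq Δx hkl v (up_mem_or_bad k i),
    extv_DmMulVec_eq Δx hkl v (down_mem_or_bad k i)]
  rw [show (2:ℝ) * (Dm m Δx l *ᵥ v) i = 2 * Tg Δx l (extv m v) ↑i by rw [mulVec_Dm_Tg]]
  rfl

lemma matrix_eq_of_mulVec {N : Type*} [Fintype N] [DecidableEq N]
    {M M' : Matrix N N ℝ} (h : ∀ v, M *ᵥ v = M' *ᵥ v) : M = M' := by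
  ext i j
  have := congr_fun (h (Pi.single j 1)) i
  simpa using this

lemma Dm_comm (k l : Fin d) : Dm m Δx k * Dm m Δx l = Dm m Δx l * Dm m Δx k := by
  rcases eq_or_ne k l with rfl | hkl
  · rfl
  · apply matrix_eq_of_mulVec
    intro v
    funext i
    rw [← Matrix.mulVec_mulVec, ← Matrix.mulVec_mulVec]
    rw [mulVec_Dm_Dm Δx hkl, mulVec_Dm_Dm Δx hkl.symm, Tg_comm]

lemma Dm_symm (k : Fin d) : (Dm m Δx k)ᵀ = Dm m Δx k := by
  ext i j
  have hik : 1 ≤ (i : Fin d → ℕ) k := ((mem_Ifin.mp i.2) k).1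
  have hjk : 1 ≤ (j : Fin d → ℕ) k := ((mem_Ifin.mp j.2) k).1
  simp only [Matrix.transpose_apply, Dm]
  have h1 : ((i : Fin d → ℕ) = ↑j) ↔ ((j : Fin d → ℕ) = ↑i) := eq_comm
  have h2 : ((i : Fin d → ℕ) = up k ↑j) ↔ ((j : Fin d → ℕ) = down k ↑i) := eq_up_iff hik
  have h3 : ((i : Fin d → ℕ) = down k ↑j) ↔ ((j : Fin d → ℕ) = up k ↑i) :=
    (eq_up_iff hjk).symm
  rw [if_congr h1 rfl rfl, if_congr h2 rfl rfl, if_congr h3 rfl rfl]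
  ring

lemma extv_sq (x : NI d m → ℝ) (c : Fin d → ℕ) :
    (extv m x c) ^ 2 = ∑ j : NI d m, (if (j : Fin d → ℕ) = c then x j ^ 2 else 0) := by
  by_cases hc : c ∈ Ifin d m
  · rw [Finset.sum_eq_single (⟨c, hc⟩ : NI d m)]
    · simp [extv, hc]
    · intro b _ hb
      have : (b : Fin d → ℕ) ≠ c := fun h => hb (Subtype.ext h)
      simp [this]
    · intro h; exact absurd (Finset.mem_univ _) h
  · rw [extv_not_mem hc, Finset.sum_eq_zero]
    · ring
    · intro b _
      have : (b : Fin d → ℕ) ≠ c := fun h => hc (h ▸ b.2)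
      simp [this]

lemma sq_sum_up_le (k : Fin d) (x : NI d m → ℝ) :
    ∑ i : NI d m, (extv m x (up k ↑i)) ^ 2 ≤ ∑ i : NI d m, x i ^ 2 := by
  have h0 : (∑ i : NI d m, (extv m x (up k ↑i)) ^ 2)
      = ∑ i : NI d m, ∑ j : NI d m, (if (j : Fin d → ℕ) = up k ↑i then x j ^ 2 else 0) :=
    Finset.sum_congr rfl fun (i : NI d m) _ => extv_sq x (up k ↑i)
  rw [h0, Finset.sum_comm]
  apply Finset.sum_le_sum
  intro j _
  by_cases hex : ∃ i0 : NI d m, (j : Fin d → ℕ) = up k ↑i0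
  · obtain ⟨i0, h0⟩ := hex
    rw [Finset.sum_eq_single i0]
    · rw [if_pos h0]
    · intro b _ hb
      rw [if_neg]
      intro hc
      exact hb (Subtype.ext (up_inj (hc ▸ h0 : up k ↑b = up k ↑i0)))
    · intro h; exact absurd (Finset.mem_univ _) h
  · rw [Finset.sum_eq_zero]
    · exact sq_nonneg _
    · intro b _
      rw [if_neg fun hc => hex ⟨b, hc⟩]

lemma Sup_bounds (k : Fin d) (x : NI d m → ℝ) :
    |∑ i : NI d m, x i * extv m x (up k ↑i)| ≤ ∑ i : NI d m, x i ^ 2 := by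
  have h1 := sq_sum_up_le (m := m) k x
  rw [abs_le]
  constructor
  · have h2 : ∑ i : NI d m, (-(x i ^ 2) - extv m x (up k ↑i) ^ 2)
        ≤ ∑ i : NI d m, 2 * (x i * extv m x (up k ↑i)) :=
      Finset.sum_le_sum fun i _ => by nlinarith [sq_nonneg (x i + extv m x (up k ↑i))]
    rw [Finset.sum_sub_distrib, ← Finset.mul_sum] at h2
    rw [Finset.sum_neg_distrib] at h2
    linarith
  · have h2 : ∑ i : NI d m, 2 * (x i * extv m x (up k ↑i))
        ≤ ∑ i : NI d m, (x i ^ 2 + extv m x (up k ↑i) ^ 2) :=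
      Finset.sum_le_sum fun i _ => by nlinarith [sq_nonneg (x i - extv m x (up k ↑i))]
    rw [Finset.sum_add_distrib, ← Finset.mul_sum] at h2
    linarith

lemma Sdown_eq_Sup (k : Fin d) (x : NI d m → ℝ) :
    ∑ i : NI d m, x i * extv m x (down k ↑i)
      = ∑ i : NI d m, x i * extv m x (up k ↑i) := by
  have lhs : ∀ i : NI d m, x i * extv m x (down k ↑i)
      = ∑ j : NI d m, (if (i : Fin d → ℕ) = up k ↑j then x i * x j else 0) := by
    intro i
    rw [extv_eq_sum, Finset.mul_sum]
    apply Finset.sum_congr rfl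
    intro j _
    have hik : 1 ≤ (i : Fin d → ℕ) k := ((mem_Ifin.mp i.2) k).1
    have hiff : ((i : Fin d → ℕ) = up k ↑j) ↔ ((j : Fin d → ℕ) = down k ↑i) := eq_up_iff hik
    rw [mul_ite, mul_zero, if_congr hiff.symm rfl rfl]
  have rhs : ∀ j : NI d m, x j * extv m x (up k ↑j)
      = ∑ i : NI d m, (if (i : Fin d → ℕ) = up k ↑j then x i * x j else 0) := by
    intro j
    rw [extv_eq_sum, Finset.mul_sum]
    apply Finset.sum_congr rfl
    intro i _
    rw [mul_ite, mul_zero, mul_comm (x j) (x i)]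
  calc ∑ i : NI d m, x i * extv m x (down k ↑i)
      = ∑ i : NI d m, ∑ j : NI d m,
          (if (i : Fin d → ℕ) = up k ↑j then x i * x j else 0) :=
        Finset.sum_congr rfl fun (i : NI d m) _ => lhs i
    _ = ∑ j : NI d m, ∑ i : NI d m,
          (if (i : Fin d → ℕ) = up k ↑j then x i * x j else 0) := Finset.sum_comm
    _ = ∑ j : NI d m, x j * extv m x (up k ↑j) :=
        Finset.sum_congr rfl fun (j : NI d m) _ => (rhs j).symm

lemma form_Dm (k : Fin d) (x : NI d m → ℝ) :
    x ⬝ᵥ (Dm m Δx k *ᵥ x)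
      = (2 * (∑ i : NI d m, x i ^ 2) - 2 * (∑ i : NI d m, x i * extv m x (up k ↑i)))
        / Δx k ^ 2 := by
  have hterm : ∀ i : NI d m, x i * (Dm m Δx k *ᵥ x) i
      = (2 * x i ^ 2 - x i * extv m x (up k ↑i) - x i * extv m x (down k ↑i))
          / Δx k ^ 2 := by
    intro i
    rw [mulVec_Dm Δx k x i]
    ring
  calc x ⬝ᵥ (Dm m Δx k *ᵥ x)
      = ∑ i : NI d m, (2 * x i ^ 2 - x i * extv m x (up k ↑i)
          - x i * extv m x (down k ↑i)) / Δx k ^ 2 :=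
        Finset.sum_congr rfl fun (i : NI d m) _ => hterm i
    _ = (∑ i : NI d m, (2 * x i ^ 2 - x i * extv m x (up k ↑i)
          - x i * extv m x (down k ↑i))) / Δx k ^ 2 := by rw [Finset.sum_div]
    _ = (2 * (∑ i : NI d m, x i ^ 2) - 2 * (∑ i : NI d m, x i * extv m x (up k ↑i)))
          / Δx k ^ 2 := by
        rw [Finset.sum_sub_distrib, Finset.sum_sub_distrib, Sdown_eq_Sup, ← Finset.mul_sum]
        ring

lemma psd_Dm {k : Fin d} (hk : 0 < Δx k) : myPSD (Dm m Δx k) := by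
  refine ⟨Dm_symm Δx k, fun x => ?_⟩
  rw [form_Dm]
  apply div_nonneg
  · have := Sup_bounds (m := m) k x
    rw [abs_le] at this
    linarith [this.2]
  · positivity

lemma psd_DmBound {k : Fin d} (hk : 0 < Δx k) :
    myPSD ((4 / Δx k ^ 2) • (1 : Matrix (NI d m) (NI d m) ℝ) - Dm m Δx k) := by
  constructor
  · rw [Matrix.transpose_sub, Matrix.transpose_smul, Matrix.transpose_one, Dm_symm]
  intro x
  rw [Matrix.sub_mulVec, dotProduct_sub, Matrix.smul_mulVec, Matrix.one_mulVec,
    dotProduct_smul, smul_eq_mul, form_Dm]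
  have hxx : x ⬝ᵥ x = ∑ i : NI d m, x i ^ 2 := by
    simp only [dotProduct]
    exact Finset.sum_congr rfl fun i _ => (sq (x i)).symm
  rw [hxx]
  have hq : (0:ℝ) < Δx k ^ 2 := by positivity
  have habs := Sup_bounds (m := m) k x
  rw [abs_le] at habs
  set N := ∑ i : NI d m, x i ^ 2
  set S := ∑ i : NI d m, x i * extv m x (up k ↑i)
  have hid : 4 / Δx k ^ 2 * N - (2 * N - 2 * S) / Δx k ^ 2 = (2 * N + 2 * S) / Δx k ^ 2 := by
    field_simp
    ring
  rw [hid]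
  apply div_nonneg _ hq.le
  linarith [habs.1]

/-- the matrix of the averaging operator `A_l`. -/
def Am (m : Fin d → ℕ) (Δx : Fin d → ℝ) (l : Fin d) : Matrix (NI d m) (NI d m) ℝ :=
  1 - (Δx l ^ 2 / 12) • Dm m Δx l

lemma comm_Dm_Dm (r s : Fin d) : Commute (Dm m Δx r) (Dm m Δx s) := Dm_comm Δx r s

lemma comm_Dm_Am (r l : Fin d) : Commute (Dm m Δx r) (Am m Δx l) :=
  (Commute.one_right _).sub_right ((comm_Dm_Dm Δx r l).smul_right _)

lemma comm_Am_Am (r l : Fin d) : Commute (Am m Δx r) (Am m Δx l) :=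
  (Commute.one_left _).sub_left ((comm_Dm_Am Δx r l).smul_left _)

lemma Am_symm (l : Fin d) : (Am m Δx l)ᵀ = Am m Δx l := by
  rw [Am, Matrix.transpose_sub, Matrix.transpose_one, Matrix.transpose_smul, Dm_symm]

lemma psd_Am_lower {l : Fin d} (hl : 0 < Δx l) :
    myPSD (Am m Δx l - (2/3 : ℝ) • 1) := by
  have hkey : Am m Δx l - (2/3 : ℝ) • 1
      = (Δx l ^ 2 / 12) • ((4 / Δx l ^ 2) • (1 : Matrix (NI d m) (NI d m) ℝ)
          - Dm m Δx l) := by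
    rw [Am, smul_sub, smul_smul]
    have h1 : Δx l ^ 2 / 12 * (4 / Δx l ^ 2) = (1/3 : ℝ) := by
      field_simp
      ring
    rw [h1]
    have h2 : (1 : Matrix (NI d m) (NI d m) ℝ) - (2/3 : ℝ) • 1 = (1/3 : ℝ) • 1 := by
      rw [show ((1 : Matrix (NI d m) (NI d m) ℝ)) = (1:ℝ) • (1 : Matrix (NI d m) (NI d m) ℝ)
        from (one_smul _ _).symm]
      rw [smul_smul, ← sub_smul]
      norm_num
    rw [sub_right_comm, h2]
  rw [hkey]
  exact myPSD_smul (by positivity) (psd_DmBound Δx hl)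

lemma psd_Am {l : Fin d} (hl : 0 < Δx l) : myPSD (Am m Δx l) := by
  have : Am m Δx l = (Am m Δx l - (2/3 : ℝ) • 1) + (2/3 : ℝ) • 1 := by abel
  rw [this]
  exact myPSD_add (psd_Am_lower Δx hl) (myPSD_smul (by norm_num) myPSD_one)

lemma psd_Am_upper {l : Fin d} (hl : 0 < Δx l) : myPSD (1 - Am m Δx l) := by
  have : (1 : Matrix (NI d m) (NI d m) ℝ) - Am m Δx l = (Δx l ^ 2 / 12) • Dm m Δx l := by
    rw [Am]; abel
  rw [this]
  exact myPSD_smul (by positivity) (psd_Dm Δx hl)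

/-- the matrix of `∏_{l ∈ L, l ≠ k} A_l`. -/
def matP (m : Fin d → ℕ) (Δx : Fin d → ℝ) (L : List (Fin d)) (k : Fin d) :
    Matrix (NI d m) (NI d m) ℝ :=
  L.foldr (fun l M => if l = k then M else Am m Δx l * M) 1

lemma matP_nil (k : Fin d) : matP m Δx [] k = 1 := rfl

lemma matP_cons (l : Fin d) (L : List (Fin d)) (k : Fin d) :
    matP m Δx (l :: L) k
      = if l = k then matP m Δx L k else Am m Δx l * matP m Δx L k := rfl

lemma comm_Dm_matP (r : Fin d) (L : List (Fin d)) (k : Fin d) :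
    Commute (Dm m Δx r) (matP m Δx L k) := by
  induction L with
  | nil => exact Commute.one_right _
  | cons l L ih =>
    rw [matP_cons]
    split
    · exact ih
    · exact (comm_Dm_Am Δx r l).mul_right ih

lemma comm_Am_matP (r : Fin d) (L : List (Fin d)) (k : Fin d) :
    Commute (Am m Δx r) (matP m Δx L k) := by
  induction L with
  | nil => exact Commute.one_right _
  | cons l L ih =>
    rw [matP_cons]
    split
    · exact ih
    · exact (comm_Am_Am Δx r l).mul_right ih

lemma matP_symm (L : List (Fin d)) (k : Fin d) : (matP m Δx L k)ᵀ = matP m Δx L k := by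
  induction L with
  | nil => exact Matrix.transpose_one
  | cons l L ih =>
    rw [matP_cons]
    split
    · exact ih
    · rw [Matrix.transpose_mul, ih, Am_symm, (comm_Am_matP Δx l L k).eq]

lemma psd_step (hΔx : ∀ r, 0 < Δx r) {l : Fin d} {M : Matrix (NI d m) (NI d m) ℝ} {c : ℝ}
    (hc : 0 ≤ c) (hcomm : Commute (Am m Δx l) M) (hMc : myPSD (M - c • 1)) :
    myPSD (Am m Δx l * M - (2/3 * c : ℝ) • 1) := by
  have hid : Am m Δx l * M - (2/3 * c : ℝ) • 1
      = Am m Δx l * (M - c • 1) + c • (Am m Δx l - (2/3 : ℝ) • 1) := by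
    rw [Matrix.mul_sub, Matrix.mul_smul, Matrix.mul_one, smul_sub, smul_smul]
    rw [mul_comm c (2/3 : ℝ)]
    abel
  rw [hid]
  refine myPSD_add (myPSD_mul (psd_Am Δx (hΔx l)) hMc ?_) (myPSD_smul hc (psd_Am_lower Δx (hΔx l)))
  exact (hcomm.sub_right ((Commute.one_right _).smul_right c)).eq

lemma matP_lower_len (hΔx : ∀ r, 0 < Δx r) (L : List (Fin d)) (k : Fin d) :
    myPSD (matP m Δx L k - ((2:ℝ)/3) ^ L.length • 1) := by
  induction L with
  | nil => simpa [matP_nil] using myPSD_zero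
  | cons l L ih =>
    rw [matP_cons, List.length_cons]
    by_cases hlk : l = k
    · rw [if_pos hlk]
      have hid : matP m Δx L k - ((2:ℝ)/3) ^ (L.length + 1) • 1
          = (matP m Δx L k - ((2:ℝ)/3) ^ L.length • 1)
            + (((2:ℝ)/3) ^ L.length - ((2:ℝ)/3) ^ (L.length + 1)) • 1 := by
        rw [sub_smul]; abel
      rw [hid]
      refine myPSD_add ih (myPSD_smul ?_ myPSD_one)
      have h1 : ((2:ℝ)/3) ^ (L.length + 1) = ((2:ℝ)/3) ^ L.length * (2/3) := pow_succ _ _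
      have h2 : (0:ℝ) ≤ ((2:ℝ)/3) ^ L.length := by positivity
      nlinarith
    · rw [if_neg hlk]
      have := psd_step Δx hΔx (l := l) (by positivity : (0:ℝ) ≤ ((2:ℝ)/3) ^ L.length)
        (comm_Am_matP Δx l L k) ih
      have hpow : (2/3 * ((2:ℝ)/3) ^ L.length : ℝ) = ((2:ℝ)/3) ^ (L.length + 1) := by
        rw [pow_succ]; ring
      rwa [hpow] at this

lemma matP_lower_mem (hΔx : ∀ r, 0 < Δx r) {L : List (Fin d)} {k : Fin d} (hk : k ∈ L) :
    myPSD (matP m Δx L k - ((2:ℝ)/3) ^ (L.length - 1) • 1) := by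
  induction L with
  | nil => exact absurd hk (List.not_mem_nil)
  | cons l L ih =>
    rw [matP_cons, List.length_cons, Nat.add_sub_cancel]
    by_cases hlk : l = k
    · rw [if_pos hlk]
      exact matP_lower_len Δx hΔx L k
    · rw [if_neg hlk]
      have hkL : k ∈ L := by
        rcases List.mem_cons.mp hk with h | h
        · exact absurd h.symm hlk
        · exact h
      have hL1 : 1 ≤ L.length := List.length_pos_iff.mpr (List.ne_nil_of_mem hkL)
      have := psd_step Δx hΔx (l := l)
        (by positivity : (0:ℝ) ≤ ((2:ℝ)/3) ^ (L.length - 1))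
        (comm_Am_matP Δx l L k) (ih hkL)
      obtain ⟨nn, hnn⟩ : ∃ nn, L.length = nn + 1 := ⟨L.length - 1, by omega⟩
      have hpow : (2/3 * ((2:ℝ)/3) ^ (L.length - 1) : ℝ) = ((2:ℝ)/3) ^ L.length := by
        rw [hnn, Nat.add_sub_cancel, pow_succ]
        ring
      rwa [hpow] at this

lemma matP_upper (hΔx : ∀ r, 0 < Δx r) (L : List (Fin d)) (k : Fin d) :
    myPSD (1 - matP m Δx L k) := by
  induction L with
  | nil => simpa [matP_nil] using myPSD_zero
  | cons l L ih =>
    rw [matP_cons]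
    by_cases hlk : l = k
    · rw [if_pos hlk]; exact ih
    · rw [if_neg hlk]
      have hid : (1 : Matrix (NI d m) (NI d m) ℝ) - Am m Δx l * matP m Δx L k
          = (1 - Am m Δx l) + Am m Δx l * (1 - matP m Δx L k) := by
        rw [Matrix.mul_sub, Matrix.mul_one]; abel
      rw [hid]
      refine myPSD_add (psd_Am_upper Δx (hΔx l)) (myPSD_mul (psd_Am Δx (hΔx l)) ih ?_)
      exact ((Commute.one_right _).sub_right (comm_Am_matP Δx l L k)).eq

lemma psd_matP (hΔx : ∀ r, 0 < Δx r) (L : List (Fin d)) (k : Fin d) :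
    myPSD (matP m Δx L k) := by
  have hid : matP m Δx L k
      = (matP m Δx L k - ((2:ℝ)/3) ^ L.length • 1) + ((2:ℝ)/3) ^ L.length • 1 := by abel
  rw [hid]
  exact myPSD_add (matP_lower_len Δx hΔx L k) (myPSD_smul (by positivity) myPSD_one)

lemma sum_mulVec {N : Type*} [Fintype N] {ι : Type*} (s : Finset ι)
    (A : ι → Matrix N N ℝ) (v : N → ℝ) :
    ((∑ i ∈ s, A i) *ᵥ v) = ∑ i ∈ s, (A i *ᵥ v) := by
  funext j
  simp only [Matrix.mulVec, dotProduct, Finset.sum_apply, Finset.sum_mul, Matrix.sum_apply]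
  rw [Finset.sum_comm]

/-- `w` agrees with the interior vector `v` on interior points, and vanishes at any point
which is bad in some direction other than `k`. -/
def Models (m : Fin d → ℕ) (k : Fin d) (w : (Fin d → ℕ) → ℝ) (v : NI d m → ℝ) : Prop :=
  (∀ j : NI d m, w ↑j = v j) ∧
  (∀ p : Fin d → ℕ, (∃ r, r ≠ k ∧ badAt m r p) → w p = 0)

lemma models_at_up {k l : Fin d} {w : (Fin d → ℕ) → ℝ} {v : NI d m → ℝ}
    (h : Models m k w v) (hlk : l ≠ k) (j : NI d m) :
    w (up l ↑j) = extv m v (up l ↑j) := by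
  rcases up_mem_or_bad l j with hmem | hbad
  · rw [show up l ↑j = ((⟨up l ↑j, hmem⟩ : NI d m) : Fin d → ℕ) from rfl, h.1, extv_coe]
  · rw [h.2 _ ⟨l, hlk, hbad⟩, extv_not_mem (not_mem_of_bad hbad)]

lemma models_at_down {k l : Fin d} {w : (Fin d → ℕ) → ℝ} {v : NI d m → ℝ}
    (h : Models m k w v) (hlk : l ≠ k) (j : NI d m) :
    w (down l ↑j) = extv m v (down l ↑j) := by
  rcases down_mem_or_bad l j with hmem | hbad
  · rw [show down l ↑j = ((⟨down l ↑j, hmem⟩ : NI d m) : Fin d → ℕ) from rfl, h.1, extv_coe]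
  · rw [h.2 _ ⟨l, hlk, hbad⟩, extv_not_mem (not_mem_of_bad hbad)]

lemma models_Aop {k l : Fin d} (hl : Δx l ≠ 0) (hlk : l ≠ k)
    {w : (Fin d → ℕ) → ℝ} {v : NI d m → ℝ} (h : Models m k w v) :
    Models m k (Aop m l w) (Am m Δx l *ᵥ v) := by
  constructor
  · intro j
    have hj : interiorIdx d m ↑j := mem_Ifin.mp j.2
    rw [Aop, if_pos hj, models_at_up h hlk j, models_at_down h hlk j, h.1 j]
    rw [Am, Matrix.sub_mulVec, Matrix.one_mulVec, Matrix.smul_mulVec]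
    rw [Pi.sub_apply, Pi.smul_apply, smul_eq_mul, mulVec_Dm]
    field_simp
    ring
  · intro p hp
    obtain ⟨r, hrk, hbad⟩ := hp
    have hnint : ¬ interiorIdx d m p := fun hint => hbad (hint r)
    rw [Aop, if_neg hnint]
    exact h.2 p ⟨r, hrk, hbad⟩

lemma models_foldr (hΔx : ∀ r, 0 < Δx r) {k : Fin d} (L : List (Fin d))
    {w : (Fin d → ℕ) → ℝ} {v : NI d m → ℝ} (h : Models m k w v) :
    Models m k (L.foldr (fun l w' => if l = k then w' else Aop m l w') w)
      (matP m Δx L k *ᵥ v) := by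
  induction L with
  | nil => rw [matP_nil, Matrix.one_mulVec]; exact h
  | cons l L ih =>
    rw [List.foldr_cons, matP_cons]
    by_cases hlk : l = k
    · rw [if_pos hlk, if_pos hlk]; exact ih
    · rw [if_neg hlk, if_neg hlk, ← Matrix.mulVec_mulVec]
      exact models_Aop Δx (hΔx l).ne' hlk ih

end S9

open S9 Matrix in
/-- For every `u ∈ °U`: `(2/3)^{d−1} ‖Δ_h u‖² ≤ (Λ_h u, Δ_h u) ≤ ‖Δ_h u‖²`. -/
theorem stmt_9 (d : ℕ) (hd : 1 ≤ d) (m : Fin d → ℕ) (hm : ∀ k, 2 ≤ m k)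
    (Δx : Fin d → ℝ) (hΔx : ∀ k, 0 < Δx k)
    (u : (Fin d → ℕ) → ℝ) (hu : zeroBnd m u) :
    (2/3 : ℝ) ^ (d - 1) * ip m Δx (lapH Δx u) (lapH Δx u)
        ≤ ip m Δx (LamH m Δx u) (lapH Δx u)
    ∧ ip m Δx (LamH m Δx u) (lapH Δx u) ≤ ip m Δx (lapH Δx u) (lapH Δx u) := by
  classical
  set uv : NI d m → ℝ := fun j => u ↑j with huvdef
  have hext : ∀ p, u p = extv m uv p := by
    intro p
    by_cases hp : p ∈ Ifin d m
    · simp [extv, hp, huvdef]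
    · rw [extv_not_mem hp, hu p (fun hint => hp (mem_Ifin.mpr hint))]
  have models_d2 : ∀ k : Fin d, Models m k (d2 Δx k u) (-(Dm m Δx k *ᵥ uv)) := by
    intro k
    constructor
    · intro j
      show (u (up k ↑j) - 2 * u ↑j + u (down k ↑j)) / Δx k ^ 2 = _
      rw [hext (up k ↑j), hext (down k ↑j), hext ↑j]
      rw [Pi.neg_apply, mulVec_Dm, extv_coe]
      rw [show uv j = extv m uv ↑j from (extv_coe uv j).symm]
      ring
    · intro p hp
      obtain ⟨r, hrk, hbad⟩ := hp
      have h1 : u p = 0 := hu p fun hint => hbad (hint r)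
      have h2 : u (up k p) = 0 := hu _ fun hint => hbad (by
        have := hint r
        rwa [up_apply_ne hrk] at this)
      have h3 : u (down k p) = 0 := hu _ fun hint => hbad (by
        have := hint r
        rwa [down_apply_ne hrk] at this)
      show (u (up k p) - 2 * u p + u (down k p)) / Δx k ^ 2 = 0
      rw [h1, h2, h3]
      ring
  set L : List (Fin d) := List.finRange d with hLdef
  set E : Matrix (NI d m) (NI d m) ℝ := ∑ k, matP m Δx L k * Dm m Δx k with hEdef
  set DS : Matrix (NI d m) (NI d m) ℝ := ∑ k, Dm m Δx k with hDSdef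
  have hlap : ∀ j : NI d m, lapH Δx u ↑j = -((DS *ᵥ uv) j) := by
    intro j
    show (∑ k, d2 Δx k u ↑j) = _
    rw [hDSdef, S9.sum_mulVec, Finset.sum_apply, ← Finset.sum_neg_distrib]
    exact Finset.sum_congr rfl fun k _ => by
      rw [(models_d2 k).1 j, Pi.neg_apply]
  have hlam : ∀ j : NI d m, LamH m Δx u ↑j = -((E *ᵥ uv) j) := by
    intro j
    show (∑ k, (L.foldr (fun l v => if l = k then v else Aop m l v) (d2 Δx k u)) ↑j) = _
    rw [hEdef, S9.sum_mulVec, Finset.sum_apply, ← Finset.sum_neg_distrib]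
    refine Finset.sum_congr rfl fun k _ => ?_
    rw [(models_foldr Δx hΔx L (models_d2 k)).1 j]
    rw [Matrix.mulVec_neg, Matrix.mulVec_mulVec, Pi.neg_apply]
  have hprod : (0:ℝ) < ∏ r, Δx r := Finset.prod_pos fun r _ => hΔx r
  have hsum_sub : ∀ f g : (Fin d → ℕ) → ℝ,
      ip m Δx f g = (∏ r, Δx r) * ∑ j : NI d m, f ↑j * g ↑j := by
    intro f g
    rw [ip]
    congr 1
    exact (Finset.sum_coe_sort (Ifin d m) (fun j => f j * g j)).symm
  have hip1 : ip m Δx (LamH m Δx u) (lapH Δx u)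
      = (∏ r, Δx r) * ((E *ᵥ uv) ⬝ᵥ (DS *ᵥ uv)) := by
    rw [hsum_sub]
    congr 1
    refine Finset.sum_congr rfl fun j _ => ?_
    rw [hlam j, hlap j]
    ring
  have hip2 : ip m Δx (lapH Δx u) (lapH Δx u)
      = (∏ r, Δx r) * ((DS *ᵥ uv) ⬝ᵥ (DS *ᵥ uv)) := by
    rw [hsum_sub]
    congr 1
    refine Finset.sum_congr rfl fun j _ => ?_
    rw [hlap j]
    ring
  have hEsymm : Eᵀ = E := by
    rw [hEdef, Matrix.transpose_sum]
    refine Finset.sum_congr rfl fun k _ => ?_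
    rw [Matrix.transpose_mul, matP_symm, Dm_symm, (comm_Dm_matP Δx k L k).eq]
  have hDSsymm : DSᵀ = DS := by
    rw [hDSdef, Matrix.transpose_sum]
    exact Finset.sum_congr rfl fun k _ => Dm_symm Δx k
  have hupper : myPSD ((DS - E) * DS) := by
    have hDSE : DS - E = ∑ k, (1 - matP m Δx L k) * Dm m Δx k := by
      rw [hDSdef, hEdef, ← Finset.sum_sub_distrib]
      refine Finset.sum_congr rfl fun k _ => ?_
      rw [Matrix.sub_mul, Matrix.one_mul]
    rw [hDSE]
    refine myPSD_mul ?_ (myPSD_sum _ _ fun k _ => psd_Dm Δx (hΔx k)) ?_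
    · exact myPSD_sum _ _ fun k _ =>
        myPSD_mul (matP_upper Δx hΔx L k) (psd_Dm Δx (hΔx k))
          ((Commute.one_left _).sub_left (comm_Dm_matP Δx k L k).symm).eq
    · refine (Commute.sum_left _ _ _ fun k _ => ?_).eq
      rw [hDSdef]
      refine Commute.sum_right _ _ _ fun r _ => ?_
      exact Commute.mul_left
        ((Commute.one_left _).sub_left (comm_Dm_matP Δx r L k).symm)
        (comm_Dm_Dm Δx k r)
  have hlower : myPSD ((E - ((2:ℝ)/3) ^ (d - 1) • DS) * DS) := by
    have hQ : ∀ k : Fin d, myPSD (matP m Δx L k - ((2:ℝ)/3) ^ (d - 1) • 1) := by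
      intro k
      have hmem : k ∈ L := by rw [hLdef]; exact List.mem_finRange k
      have := matP_lower_mem (m := m) Δx hΔx hmem
      rwa [hLdef, List.length_finRange] at this
    have hEDS : E - ((2:ℝ)/3) ^ (d - 1) • DS
        = ∑ k, (matP m Δx L k - ((2:ℝ)/3) ^ (d - 1) • 1) * Dm m Δx k := by
      rw [hEdef, hDSdef, Finset.smul_sum, ← Finset.sum_sub_distrib]
      refine Finset.sum_congr rfl fun k _ => ?_
      rw [Matrix.sub_mul, Matrix.smul_mul, Matrix.one_mul]
    rw [hEDS]
    refine myPSD_mul ?_ (myPSD_sum _ _ fun k _ => psd_Dm Δx (hΔx k)) ?_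
    · exact myPSD_sum _ _ fun k _ =>
        myPSD_mul (hQ k) (psd_Dm Δx (hΔx k))
          ((comm_Dm_matP Δx k L k).symm.sub_left
            ((Commute.one_left _).smul_left _)).eq
    · refine (Commute.sum_left _ _ _ fun k _ => ?_).eq
      rw [hDSdef]
      refine Commute.sum_right _ _ _ fun r _ => ?_
      exact Commute.mul_left
        ((comm_Dm_matP Δx r L k).symm.sub_left ((Commute.one_left _).smul_left _))
        (comm_Dm_Dm Δx k r)
  have h1 : (E *ᵥ uv) ⬝ᵥ (DS *ᵥ uv) = uv ⬝ᵥ ((E * DS) *ᵥ uv) := by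
    rw [dot_shift, hEsymm, Matrix.mulVec_mulVec]
  have h2 : (DS *ᵥ uv) ⬝ᵥ (DS *ᵥ uv) = uv ⬝ᵥ ((DS * DS) *ᵥ uv) := by
    rw [dot_shift, hDSsymm, Matrix.mulVec_mulVec]
  have hup' := hupper.2 uv
  rw [Matrix.sub_mul, Matrix.sub_mulVec, dotProduct_sub] at hup'
  have hlo' := hlower.2 uv
  rw [Matrix.sub_mul, Matrix.smul_mul, Matrix.sub_mulVec, dotProduct_sub,
    Matrix.smul_mulVec, dotProduct_smul, smul_eq_mul] at hlo'
  constructor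
  · rw [hip1, hip2]
    rw [show (2/3:ℝ) ^ (d-1) * ((∏ r, Δx r) * ((DS *ᵥ uv) ⬝ᵥ (DS *ᵥ uv)))
        = (∏ r, Δx r) * ((2/3:ℝ) ^ (d-1) * ((DS *ᵥ uv) ⬝ᵥ (DS *ᵥ uv))) from by ring]
    apply mul_le_mul_of_nonneg_left _ hprod.le
    rw [h1, h2]
    linarith
  · rw [hip1, hip2]
    apply mul_le_mul_of_nonneg_left _ hprod.le
    rw [h1, h2]
    linarith

end
end

section
/- Recurrence for the history term: let 1 ≤ k ≤ n−1, λ > 0, and u ∈ C⁰([0,T]) (with values u(t_l) at grid points). Define H^{(k)} = ∫₀^{t_k} (L₂u)'(τ) e^{−λ(t_{k+σ_k}−τ)/T} dτ, where for τ ∈ [t_{l−1}, t_l] (1 ≤ l ≤ k) L₂u is the quadratic interpolant of u at t_{l−1}, t_l, t_{l+1}, and H^{(0)} = 0. Then H^{(k)} = e^{−λ(1+σ_k−σ_{k−1})Δt/T} H^{(k−1)} + A(u(t_k) − u(t_{k−1})) + B(u(t_{k+1}) − u(t_k)), where A = ∫₀¹ (3/2 − s) e^{−λ(σ_k+1−s)Δt/T}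 ds and B = ∫₀¹ (s − 1/2) e^{−λ(σ_k+1−s)Δt/T} ds. -/
private lemma quad_hasDeriv (p q D τ : ℝ) :
    HasDerivAt (fun x : ℝ => (x - p) * (x - q) / D) ((2 * τ - p - q) / D) τ := by
  have h1 : HasDerivAt (fun x : ℝ => (x - p) * (x - q))
      (1 * (τ - q) + (τ - p) * 1) τ :=
    ((hasDerivAt_id τ).sub_const p).mul ((hasDerivAt_id τ).sub_const q)
  have := h1.div_const D
  rw [show (2 * τ - p - q) / D = (1 * (τ - q) + (τ - p) * 1) / D by ring]
  exact this

/-- Recurrence for the history term: with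
`H^{(k)} = ∫₀^{t_k}(L₂u)'(τ)e^{−λ(t_{k+σ_k}−τ)/T}dτ` (and `H^{(0)} = 0`) one has
`H^{(k)} = e^{−λ(1+σ_k−σ_{k−1})Δt/T} H^{(k−1)} + A(u(t_k)−u(t_{k−1})) + B(u(t_{k+1})−u(t_k))`,
where `A = ∫₀¹(3/2−s)e^{−λ(σ_k+1−s)Δt/T}ds`, `B = ∫₀¹(s−1/2)e^{−λ(σ_k+1−s)Δt/T}ds`. -/
theorem stmt_12
    (T : ℝ) (hT : 1 ≤ T) (n : ℕ) (hn : 0 < n)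
    (Δt : ℝ) (hΔt : Δt = T / n)
    (t : ℕ → ℝ) (ht : ∀ j, t j = (j : ℝ) * Δt)
    (σ : ℕ → ℝ) (hσ : ∀ k, k ≤ n - 1 → σ k ∈ Set.Ioo (1/2 : ℝ) 1)
    (k : ℕ) (hk1 : 1 ≤ k) (hk2 : k ≤ n - 1)
    (lam : ℝ) (hlam : 0 < lam)
    (u : ℝ → ℝ) (hu : ContinuousOn u (Set.Icc 0 T))
    -- `P l` is the quadratic (Lagrange) interpolant of `u` at `t_{l−1}, t_l, t_{l+1}`
    (P : ℕ → ℝ → ℝ)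
    (hP : ∀ l τ, P l τ =
        u (t (l-1)) * ((τ - t l) * (τ - t (l+1)) / ((t (l-1) - t l) * (t (l-1) - t (l+1))))
      + u (t l) * ((τ - t (l-1)) * (τ - t (l+1)) / ((t l - t (l-1)) * (t l - t (l+1))))
      + u (t (l+1)) * ((τ - t (l-1)) * (τ - t l) / ((t (l+1) - t (l-1)) * (t (l+1) - t l))))
    (H : ℕ → ℝ)
    (hH : ∀ k', H k' = ∑ l ∈ Finset.Icc 1 k',
        ∫ τ in t (l-1)..t l, deriv (P l) τ * Real.exp (-lam * ((t k' + σ k' * Δt) - τ) / T))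
    (A B : ℝ)
    (hA : A = ∫ x in (0:ℝ)..1, (3/2 - x) * Real.exp (-lam * (σ k + 1 - x) * Δt / T))
    (hB : B = ∫ x in (0:ℝ)..1, (x - 1/2) * Real.exp (-lam * (σ k + 1 - x) * Δt / T)) :
    H k = Real.exp (-lam * (1 + σ k - σ (k-1)) * Δt / T) * H (k-1)
      + A * (u (t k) - u (t (k-1))) + B * (u (t (k+1)) - u (t k)) := by
  have hT0 : (0:ℝ) < T := lt_of_lt_of_le one_pos hT
  have hΔt0 : 0 < Δt := by rw [hΔt]; positivity
  have hΔne : Δt ≠ 0 := ne_of_gt hΔt0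
  set a := t (k-1) with ha
  set b := t k with hb
  set c := t (k+1) with hc
  have hcast : ((k-1 : ℕ) : ℝ) = (k : ℝ) - 1 := by
    have := Nat.cast_sub hk1 (R := ℝ); simpa using this
  have hab : b = a + Δt := by
    show t k = t (k-1) + Δt
    rw [ht, ht, hcast]; ring
  have hcb : c = a + 2 * Δt := by
    show t (k+1) = t (k-1) + 2 * Δt
    rw [ht, ht, hcast]; push_cast; ring
  -- derivative of the interpolant P k
  have hPk : P k = fun τ =>
      u a * ((τ - b) * (τ - c) / ((a - b) * (a - c)))
      + u b * ((τ - a) * (τ - c) / ((b - a) * (b - c)))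
      + u c * ((τ - a) * (τ - b) / ((c - a) * (c - b))) := funext (hP k)
  have hD : ∀ τ, deriv (P k) τ =
      u a * ((2*τ - b - c) / ((a - b) * (a - c)))
      + u b * ((2*τ - a - c) / ((b - a) * (b - c)))
      + u c * ((2*τ - a - b) / ((c - a) * (c - b))) := by
    intro τ
    have h : HasDerivAt (P k)
        (u a * ((2*τ - b - c) / ((a - b) * (a - c)))
        + u b * ((2*τ - a - c) / ((b - a) * (b - c)))
        + u c * ((2*τ - a - b) / ((c - a) * (c - b)))) τ := by
      rw [hPk]
      exact (((quad_hasDeriv b c ((a-b)*(a-c)) τ).const_mul (u a)).add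
        ((quad_hasDeriv a c ((b-a)*(b-c)) τ).const_mul (u b))).add
        ((quad_hasDeriv a b ((c-a)*(c-b)) τ).const_mul (u c))
    exact h.deriv
  -- split the sum
  have hsplit : Finset.Icc 1 k = insert k (Finset.Icc 1 (k-1)) := by
    ext x; simp only [Finset.mem_Icc, Finset.mem_insert]; omega
  have hnot : k ∉ Finset.Icc 1 (k-1) := by simp only [Finset.mem_Icc]; omega
  rw [hH k, hH (k-1), hsplit, Finset.sum_insert hnot]
  -- kernel factorization
  have hker : ∀ τ, Real.exp (-lam * ((b + σ k * Δt) - τ) / T)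
      = Real.exp (-lam * (1 + σ k - σ (k-1)) * Δt / T)
        * Real.exp (-lam * ((a + σ (k-1) * Δt) - τ) / T) := by
    intro τ
    rw [← Real.exp_add]
    congr 1
    rw [hab]
    field_simp
    ring
  have hsum : (∑ l ∈ Finset.Icc 1 (k-1),
      ∫ τ in t (l-1)..t l, deriv (P l) τ * Real.exp (-lam * ((b + σ k * Δt) - τ) / T))
      = Real.exp (-lam * (1 + σ k - σ (k-1)) * Δt / T) *
        ∑ l ∈ Finset.Icc 1 (k-1),
      ∫ τ in t (l-1)..t l, deriv (P l) τ * Real.exp (-lam * ((a + σ (k-1) * Δt) - τ) / T) := by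
    rw [Finset.mul_sum]
    refine Finset.sum_congr rfl fun l _ => ?_
    rw [← intervalIntegral.integral_const_mul]
    refine intervalIntegral.integral_congr fun τ _ => ?_
    rw [hker τ]; ring
  -- the last term
  set C := Real.exp (-lam * (1 + σ k - σ (k-1)) * Δt / T)
  have hlast : (∫ τ in a..b, deriv (P k) τ * Real.exp (-lam * ((b + σ k * Δt) - τ) / T))
      = A * (u b - u a) + B * (u c - u b) := by
    set F : ℝ → ℝ := fun τ => deriv (P k) τ * Real.exp (-lam * ((b + σ k * Δt) - τ) / T)
      with hF
    set g : ℝ → ℝ := fun s =>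
      ((3/2 - s) * Real.exp (-lam * (σ k + 1 - s) * Δt / T)) * (u b - u a)
      + ((s - 1/2) * Real.exp (-lam * (σ k + 1 - s) * Δt / T)) * (u c - u b) with hg
    have hpoint : ∀ s : ℝ, F (Δt * s + a) = Δt⁻¹ * g s := by
      intro s
      rw [hF]
      simp only
      rw [hD, hg]
      have hexp : Real.exp (-lam * ((b + σ k * Δt) - (Δt * s + a)) / T)
          = Real.exp (-lam * (σ k + 1 - s) * Δt / T) := by
        congr 1; rw [hab]; ring
      rw [hexp, inv_mul_eq_div, eq_div_iff hΔne]
      generalize u a = ua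
      rw [hab, hcb]
      generalize u (a + Δt) = ub
      generalize u (a + 2 * Δt) = uc
      have e1 : a - (a + Δt) = -Δt := by ring
      have e2 : a - (a + 2*Δt) = -(2*Δt) := by ring
      have e3 : (a + Δt) - a = Δt := by ring
      have e4 : (a + Δt) - (a + 2*Δt) = -Δt := by ring
      have e5 : (a + 2*Δt) - a = 2*Δt := by ring
      have e6 : (a + 2*Δt) - (a + Δt) = Δt := by ring
      rw [e1, e2, e3, e4, e5, e6]
      field_simp
      ring
    have hsub : (∫ s in (0:ℝ)..1, F (Δt * s + a)) = Δt⁻¹ • ∫ τ in a..b, F τ := by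
      have h := intervalIntegral.integral_comp_mul_add F hΔne a (a := (0:ℝ)) (b := 1)
      have e0 : Δt * 0 + a = a := by ring
      have e1 : Δt * 1 + a = b := by rw [hab]; ring
      rw [e0, e1] at h
      exact h
    have hint : (∫ τ in a..b, F τ) = ∫ s in (0:ℝ)..1, g s := by
      have h1 : (∫ s in (0:ℝ)..1, F (Δt * s + a)) = Δt⁻¹ * ∫ s in (0:ℝ)..1, g s := by
        rw [show (fun s => F (Δt * s + a)) = fun s => Δt⁻¹ * g s from funext hpoint]
        exact intervalIntegral.integral_const_mul _ _
      rw [hsub, smul_eq_mul] at h1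
      exact mul_left_cancel₀ (inv_ne_zero hΔne) h1
    rw [hint, hg]
    have hlin : Continuous fun s : ℝ => -lam * (σ k + 1 - s) * Δt / T :=
      ((continuous_const.mul (continuous_const.sub continuous_id)).mul
        continuous_const).div_const T
    have hce : Continuous fun s : ℝ => Real.exp (-lam * (σ k + 1 - s) * Δt / T) :=
      Real.continuous_exp.comp hlin
    have hc1 : Continuous fun s : ℝ =>
        (3/2 - s) * Real.exp (-lam * (σ k + 1 - s) * Δt / T) :=
      (continuous_const.sub continuous_id).mul hce
    have hc2 : Continuous fun s : ℝ =>
        (s - 1/2) * Real.exp (-lam * (σ k + 1 - s) * Δt / T) :=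
      (continuous_id.sub continuous_const).mul hce
    beta_reduce
    rw [intervalIntegral.integral_add
      (f := fun s => (3/2 - s) * Real.exp (-lam * (σ k + 1 - s) * Δt / T) * (u b - u a))
      (g := fun s => (s - 1/2) * Real.exp (-lam * (σ k + 1 - s) * Δt / T) * (u c - u b))
      ((hc1.mul continuous_const).intervalIntegrable 0 1)
      ((hc2.mul continuous_const).intervalIntegrable 0 1),
      intervalIntegral.integral_mul_const, intervalIntegral.integral_mul_const,
      ← hA, ← hB]
  rw [hlast, hsum]
  ring
end

section
/- Summation-by-coefficients identity for the fast formula: let 1 ≤ k ≤ n−1, write α = α_{k+σ_k}, and let u ∈ C⁰([0,T]). Then (T^{−α}/Γ(1−α)) Σ_{i=N̲+1}^{N̄} θ_i^{(k)} ∫₀^{t_k} (L₂u)'(τ) e^{−λ_i(t_{k+σ_k}−τ)/T} dτ + s^{(k)} σ_k^{1−α} (u(t_{k+1}) − u(t_k)) = s^{(k)} Σ_{l=0}^{k} ρ_l^{(k)} (u(t_{k−l+1}) − u(t_{k−l})). -/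
lemma abel_aux_s13 (x a b : ℕ → ℝ) (m : ℕ) :
    ∑ j ∈ Finset.range (m+1), (x j * a j + (x (j+1) - x j) * b j)
      = ∑ j ∈ Finset.range m, (b j + a (j+1) - b (j+1)) * x (j+1)
        + (a 0 - b 0) * x 0 + b m * x (m+1) := by
  induction m with
  | zero => simp; ring
  | succ n ih =>
      rw [Finset.sum_range_succ, ih,
        Finset.sum_range_succ (fun j => (b j + a (j+1) - b (j+1)) * x (j+1))]
      ring

/-- Summation-by-coefficients identity for the fast FL2-1σ formula:
`(T^{−α}/Γ(1−α)) Σ_i θ_i^{(k)} ∫₀^{t_k}(L₂u)'(τ)e^{−λ_i(t_{k+σ_k}−τ)/T}dτ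
  + s^{(k)} σ_k^{1−α}(u(t_{k+1}) − u(t_k))
  = s^{(k)} Σ_{l=0}^{k} ρ_l^{(k)}(u(t_{k−l+1}) − u(t_{k−l}))`. -/
theorem stmt_13
    (T : ℝ) (hT : 1 ≤ T) (n : ℕ) (hn : 0 < n)
    (Δt : ℝ) (hΔt : Δt = T / n)
    (t : ℕ → ℝ) (ht : ∀ j, t j = (j : ℝ) * Δt)
    (αl αu : ℝ) (hαl : 0 < αl) (hαu : αu < 1)
    (α : ℝ → ℝ) (hαr : ∀ x ∈ Set.Icc (0 : ℝ) T, α x ∈ Set.Icc αl αu)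
    (k : ℕ) (hk1 : 1 ≤ k) (hk2 : k ≤ n - 1)
    (σ : ℝ) (hσ : σ ∈ Set.Ioo (1/2 : ℝ) 1)
    (tkσ αk : ℝ) (htkσ : tkσ = t k + σ * Δt) (hαk : αk = α tkσ)
    (s : ℝ) (hs : s = Δt ^ (-αk) / Real.Gamma (2 - αk))
    (Nl Nu : ℤ) (lam θ : ℤ → ℝ)
    (hlam : ∀ i ∈ Finset.Icc (Nl + 1) Nu, 0 < lam i)
    (hθ : ∀ i ∈ Finset.Icc (Nl + 1) Nu, 0 < θ i)
    (u : ℝ → ℝ) (hu : ContinuousOn u (Set.Icc 0 T))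
    -- `P l` is the quadratic (Lagrange) interpolant of `u` at `t_{l−1}, t_l, t_{l+1}`
    (P : ℕ → ℝ → ℝ)
    (hP : ∀ l τ, P l τ =
        u (t (l-1)) * ((τ - t l) * (τ - t (l+1)) / ((t (l-1) - t l) * (t (l-1) - t (l+1))))
      + u (t l) * ((τ - t (l-1)) * (τ - t (l+1)) / ((t l - t (l-1)) * (t l - t (l+1))))
      + u (t (l+1)) * ((τ - t (l-1)) * (τ - t l) / ((t (l+1) - t (l-1)) * (t (l+1) - t l))))
    -- the exponential-sum kernel
    (K : ℝ → ℝ)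
    (hK : ∀ τ, K τ = ∑ i ∈ Finset.Icc (Nl + 1) Nu, θ i * Real.exp (-lam i * (tkσ - τ) / T))
    -- the fast coefficients
    (ρ : ℕ → ℝ)
    (hρ0 : ρ 0 = Δt ^ (αk - 2) * (1 - αk) * T ^ (-αk) *
      ((∫ τ in t (k-1)..t k, (τ - ((k : ℝ) - 1/2) * Δt) * K τ) +
        T ^ αk * ∫ τ in t k..tkσ, Δt * (tkσ - τ) ^ (-αk)))
    (hρl : ∀ l, 1 ≤ l → l + 1 ≤ k → ρ l = Δt ^ (αk - 2) * (1 - αk) * T ^ (-αk) *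
      ((∫ τ in t (k-l-1)..t (k-l), (τ - ((k : ℝ) - (l : ℝ) - 1/2) * Δt) * K τ) +
        ∫ τ in t (k-l)..t (k-l+1), (((k : ℝ) - (l : ℝ) + 3/2) * Δt - τ) * K τ))
    (hρk : ρ k = Δt ^ (αk - 2) * (1 - αk) * T ^ (-αk) *
      ∫ τ in (t 0)..(t 1), ((3/2 : ℝ) * Δt - τ) * K τ) :
    T ^ (-αk) / Real.Gamma (1 - αk) *
        (∑ i ∈ Finset.Icc (Nl + 1) Nu, θ i * ∑ l ∈ Finset.Icc 1 k,
          ∫ τ in t (l-1)..t l, deriv (P l) τ * Real.exp (-lam i * (tkσ - τ) / T))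
      + s * σ ^ (1 - αk) * (u (t (k+1)) - u (t k))
      = s * ∑ l ∈ Finset.range (k + 1), ρ l * (u (t (k - l + 1)) - u (t (k - l))) := by
  obtain ⟨m, rfl⟩ : ∃ m, k = m + 1 := ⟨k - 1, (Nat.succ_pred_eq_of_pos hk1).symm⟩
  have hT0 : (0:ℝ) < T := by linarith
  have hn0 : (0:ℝ) < (n:ℝ) := by exact_mod_cast hn
  have hh : 0 < Δt := by rw [hΔt]; positivity
  have hσ0 : 0 < σ := by have := hσ.1; linarith
  have hσ1 : σ < 1 := hσ.2
  -- αk bounds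
  have hmem : tkσ ∈ Set.Icc (0:ℝ) T := by
    constructor
    · rw [htkσ, ht]; positivity
    · have hmn : ((m:ℝ) + 2) ≤ n := by exact_mod_cast (by omega : m + 2 ≤ n)
      rw [htkσ, ht]
      have h1 : (((m+1:ℕ):ℝ) + σ) * Δt ≤ (n:ℝ) * Δt := by
        apply mul_le_mul_of_nonneg_right _ hh.le
        push_cast; linarith
      have hnΔ : (n:ℝ) * Δt = T := by rw [hΔt]; field_simp
      nlinarith
  have hαk1 : αk < 1 := by
    rw [hαk]; exact lt_of_le_of_lt (hαr tkσ hmem).2 hαu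
  have h1a : (1:ℝ) - αk ≠ 0 := by linarith
  have hΓpos : 0 < Real.Gamma (1 - αk) := Real.Gamma_pos_of_pos (by linarith)
  have hΓ2 : Real.Gamma (2 - αk) = (1 - αk) * Real.Gamma (1 - αk) := by
    rw [show (2:ℝ) - αk = (1 - αk) + 1 by ring, Real.Gamma_add_one h1a]
  -- abbreviations
  set c := T ^ (-αk) / Real.Gamma (1 - αk) with hc
  set x : ℕ → ℝ := fun jj => u (t (jj+1)) - u (t jj) with hxd
  have hxx : ∀ jj, u (t (jj+1)) - u (t jj) = x jj := fun jj => rfl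
  set Af : ℕ → ℝ := fun j => ∫ τ in t j..t (j+1), K τ with hAf
  set Bf : ℕ → ℝ := fun j => ∫ τ in t j..t (j+1), (τ - ((j:ℝ) + 1/2) * Δt) * K τ with hBf
  have hAfx : ∀ jj : ℕ, Af jj = ∫ τ in t jj..t (jj+1), K τ := fun jj => rfl
  have hBfx : ∀ jj : ℕ, Bf jj = ∫ τ in t jj..t (jj+1), (τ - ((jj:ℝ) + 1/2) * Δt) * K τ :=
    fun jj => rfl
  -- continuity of K
  have hKc : Continuous K := by
    rw [funext hK]
    fun_prop
  have hKint : ∀ a b : ℝ, IntervalIntegrable K MeasureTheory.volume a b :=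
    fun a b => hKc.intervalIntegrable a b
  have hKint2 : ∀ (mid a b : ℝ),
      IntervalIntegrable (fun τ => (τ - mid) * K τ) MeasureTheory.volume a b :=
    fun mid a b => ((continuous_id.sub continuous_const).mul hKc).intervalIntegrable a b
  -- linear-integrand helpers
  have helper1 : ∀ (p q mid a b : ℝ),
      (∫ τ in a..b, (p + q * (τ - mid)) * K τ)
        = p * (∫ τ in a..b, K τ) + q * ∫ τ in a..b, (τ - mid) * K τ := by
    intro p q mid a b
    have hcg : ∀ τ ∈ Set.uIcc a b, (p + q * (τ - mid)) * K τ = p * K τ + q * ((τ - mid) * K τ) :=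
      fun τ _ => by ring
    rw [intervalIntegral.integral_congr hcg,
      intervalIntegral.integral_add ((hKint a b).const_mul p) ((hKint2 mid a b).const_mul q),
      intervalIntegral.integral_const_mul, intervalIntegral.integral_const_mul]
  have helper2 : ∀ (mid a b : ℝ),
      (∫ τ in a..b, (mid + Δt - τ) * K τ)
        = Δt * (∫ τ in a..b, K τ) - ∫ τ in a..b, (τ - mid) * K τ := by
    intro mid a b
    have hcg : ∀ τ ∈ Set.uIcc a b, (mid + Δt - τ) * K τ = Δt * K τ - (τ - mid) * K τ :=
      fun τ _ => by ring
    rw [intervalIntegral.integral_congr hcg,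
      intervalIntegral.integral_sub ((hKint a b).const_mul Δt) (hKint2 mid a b),
      intervalIntegral.integral_const_mul]
  -- derivative of the interpolant
  have hd : ∀ l : ℕ, 1 ≤ l → ∀ τ : ℝ, deriv (P l) τ =
      (u (t l) - u (t (l-1))) / Δt
        + ((u (t (l+1)) - u (t l)) - (u (t l) - u (t (l-1)))) / Δt^2
            * (τ - ((l:ℝ) - 1/2) * Δt) := by
    intro l hl τ
    have e0 : t (l-1) = ((l:ℝ) - 1) * Δt := by
      rw [ht, Nat.cast_sub hl]; push_cast; ring
    have e1 : t l = (l:ℝ) * Δt := ht l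
    have e2 : t (l+1) = ((l:ℝ) + 1) * Δt := by rw [ht]; push_cast; ring
    have hPf : P l = fun τ => u (t (l-1)) * ((τ - t l) * (τ - t (l+1)) / ((t (l-1) - t l) * (t (l-1) - t (l+1))))
        + u (t l) * ((τ - t (l-1)) * (τ - t (l+1)) / ((t l - t (l-1)) * (t l - t (l+1))))
        + u (t (l+1)) * ((τ - t (l-1)) * (τ - t l) / ((t (l+1) - t (l-1)) * (t (l+1) - t l))) :=
      funext (hP l)
    have h1 : HasDerivAt (fun τ : ℝ => (τ - t l) * (τ - t (l+1)) / ((t (l-1) - t l) * (t (l-1) - t (l+1))))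
        ((1 * (τ - t (l+1)) + (τ - t l) * 1) / ((t (l-1) - t l) * (t (l-1) - t (l+1)))) τ :=
      (((hasDerivAt_id τ).sub_const _).mul ((hasDerivAt_id τ).sub_const _)).div_const _
    have h2 : HasDerivAt (fun τ : ℝ => (τ - t (l-1)) * (τ - t (l+1)) / ((t l - t (l-1)) * (t l - t (l+1))))
        ((1 * (τ - t (l+1)) + (τ - t (l-1)) * 1) / ((t l - t (l-1)) * (t l - t (l+1)))) τ :=
      (((hasDerivAt_id τ).sub_const _).mul ((hasDerivAt_id τ).sub_const _)).div_const _
    have h3 : HasDerivAt (fun τ : ℝ => (τ - t (l-1)) * (τ - t l) / ((t (l+1) - t (l-1)) * (t (l+1) - t l)))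
        ((1 * (τ - t l) + (τ - t (l-1)) * 1) / ((t (l+1) - t (l-1)) * (t (l+1) - t l))) τ :=
      (((hasDerivAt_id τ).sub_const _).mul ((hasDerivAt_id τ).sub_const _)).div_const _
    have H : HasDerivAt (P l)
        (u (t (l-1)) * ((1 * (τ - t (l+1)) + (τ - t l) * 1) / ((t (l-1) - t l) * (t (l-1) - t (l+1))))
         + u (t l) * ((1 * (τ - t (l+1)) + (τ - t (l-1)) * 1) / ((t l - t (l-1)) * (t l - t (l+1))))
         + u (t (l+1)) * ((1 * (τ - t l) + (τ - t (l-1)) * 1) / ((t (l+1) - t (l-1)) * (t (l+1) - t l)))) τ := by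
      rw [hPf]
      exact ((h1.const_mul _).add (h2.const_mul _)).add (h3.const_mul _)
    rw [H.deriv, e0, e1, e2]
    rw [show (((l:ℝ) - 1) * Δt - (l:ℝ) * Δt) * (((l:ℝ) - 1) * Δt - ((l:ℝ) + 1) * Δt) = 2*Δt^2 by ring,
       show ((l:ℝ) * Δt - ((l:ℝ) - 1) * Δt) * ((l:ℝ) * Δt - ((l:ℝ) + 1) * Δt) = -(Δt^2) by ring,
       show (((l:ℝ) + 1) * Δt - ((l:ℝ) - 1) * Δt) * (((l:ℝ) + 1) * Δt - (l:ℝ) * Δt) = 2*Δt^2 by ring]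
    field_simp
    ring
  -- per-interval key identity
  have key : ∀ j : ℕ,
      (∑ i ∈ Finset.Icc (Nl + 1) Nu, θ i *
        ∫ τ in t j..t (j+1), deriv (P (j+1)) τ * Real.exp (-lam i * (tkσ - τ) / T))
      = x j / Δt * Af j + (x (j+1) - x j) / Δt^2 * Bf j := by
    intro j
    have hd' : ∀ τ, deriv (P (j+1)) τ
        = x j / Δt + (x (j+1) - x j) / Δt^2 * (τ - ((j:ℝ) + 1/2) * Δt) := by
      intro τ
      have h0 := hd (j+1) (Nat.le_add_left 1 j) τ
      simp only [Nat.add_sub_cancel] at h0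
      rw [h0, hxx j, hxx (j+1),
        show ((j+1:ℕ):ℝ) - 1/2 = (j:ℝ) + 1/2 by push_cast; ring]
    simp only [hd']
    calc (∑ i ∈ Finset.Icc (Nl + 1) Nu, θ i *
            ∫ τ in t j..t (j+1), (x j / Δt + (x (j+1) - x j) / Δt^2 * (τ - ((j:ℝ) + 1/2) * Δt))
              * Real.exp (-lam i * (tkσ - τ) / T))
        = ∑ i ∈ Finset.Icc (Nl + 1) Nu,
            ∫ τ in t j..t (j+1), θ i * ((x j / Δt + (x (j+1) - x j) / Δt^2 * (τ - ((j:ℝ) + 1/2) * Δt))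
              * Real.exp (-lam i * (tkσ - τ) / T)) :=
          Finset.sum_congr rfl fun i _ => (intervalIntegral.integral_const_mul _ _).symm
      _ = ∫ τ in t j..t (j+1), ∑ i ∈ Finset.Icc (Nl + 1) Nu,
            θ i * ((x j / Δt + (x (j+1) - x j) / Δt^2 * (τ - ((j:ℝ) + 1/2) * Δt))
              * Real.exp (-lam i * (tkσ - τ) / T)) := by
          refine (intervalIntegral.integral_finset_sum fun i _ =>
            Continuous.intervalIntegrable ?_ _ _).symm
          fun_prop
      _ = ∫ τ in t j..t (j+1), (x j / Δt + (x (j+1) - x j) / Δt^2 * (τ - ((j:ℝ) + 1/2) * Δt)) * K τ := by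
          refine intervalIntegral.integral_congr fun τ _ => ?_
          rw [hK, Finset.mul_sum]
          exact Finset.sum_congr rfl fun i _ => by ring
      _ = x j / Δt * Af j + (x (j+1) - x j) / Δt^2 * Bf j := by
          rw [helper1, hAfx j, hBfx j]
  -- transform the left-hand double sum
  have L : (∑ i ∈ Finset.Icc (Nl + 1) Nu, θ i * ∑ l ∈ Finset.Icc 1 (m+1),
        ∫ τ in t (l-1)..t l, deriv (P l) τ * Real.exp (-lam i * (tkσ - τ) / T))
      = ∑ j ∈ Finset.range (m+1), (x j / Δt * Af j + (x (j+1) - x j) / Δt^2 * Bf j) := by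
    simp_rw [Finset.mul_sum]
    rw [Finset.sum_comm]
    rw [show Finset.Icc 1 (m+1) = Finset.Ico 1 (m+1+1) from (Finset.Ico_add_one_right_eq_Icc (a := 1) (b := m+1)).symm,
      Finset.sum_Ico_eq_sum_range]
    simp only [Nat.add_sub_cancel]
    refine Finset.sum_congr rfl fun j _ => ?_
    rw [show 1 + j = j + 1 from Nat.add_comm 1 j]
    simp only [Nat.add_sub_cancel]
    exact key j
  -- scalar algebra facts
  have e_s : s * (Δt ^ (αk - 2) * (1 - αk) * T ^ (-αk)) = c / Δt ^ 2 := by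
    have hdt2 : Δt ^ (-αk) * Δt ^ (αk - 2) * Δt ^ 2 = 1 := by
      rw [show (Δt:ℝ)^2 = Δt ^ ((2:ℕ):ℝ) by rw [Real.rpow_natCast],
        ← Real.rpow_add hh, ← Real.rpow_add hh,
        show -αk + (αk - 2) + ((2:ℕ):ℝ) = 0 by push_cast; ring, Real.rpow_zero]
    rw [hs, hΓ2, hc]
    field_simp
    linear_combination hdt2
  have ec : c / Δt ^ 2 * Δt = c / Δt := by
    field_simp
  have e_sig : Δt ^ (αk - 2) * (1 - αk) * T ^ (-αk)
      * (T ^ αk * (Δt * ((σ * Δt) ^ (1 - αk) / (1 - αk)))) = σ ^ (1 - αk) := by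
    have hTT : T ^ (-αk) * T ^ αk = 1 := by
      rw [← Real.rpow_add hT0, show -αk + αk = 0 by ring, Real.rpow_zero]
    have hmulr : (σ * Δt) ^ (1 - αk) = σ ^ (1 - αk) * Δt ^ (1 - αk) :=
      Real.mul_rpow hσ0.le hh.le
    have hdd : Δt ^ (αk - 2) * Δt ^ (1:ℝ) * Δt ^ (1 - αk) = 1 := by
      rw [← Real.rpow_add hh, ← Real.rpow_add hh,
        show αk - 2 + 1 + (1 - αk) = 0 by ring, Real.rpow_zero]
    rw [Real.rpow_one] at hdd
    have hboth : (Δt ^ (αk - 2) * Δt * Δt ^ (1 - αk)) * (T ^ (-αk) * T ^ αk) = 1 := by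
      rw [hdd, hTT, mul_one]
    rw [hmulr]
    field_simp
    linear_combination hboth
  -- the rpow integral in ρ 0
  have hI : (∫ τ in t (m+1)..tkσ, (tkσ - τ) ^ (-αk)) = (σ * Δt) ^ (1 - αk) / (1 - αk) := by
    have h1 := intervalIntegral.integral_comp_sub_left (a := t (m+1)) (b := tkσ)
      (fun y : ℝ => y ^ (-αk)) tkσ
    simp only [sub_self] at h1
    rw [show tkσ - t (m+1) = σ * Δt by rw [htkσ]; ring] at h1
    rw [h1, integral_rpow (Or.inl (by linarith))]
    rw [Real.zero_rpow (by linarith : -αk + 1 ≠ 0), sub_zero,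
      show -αk + 1 = 1 - αk by ring]
  -- s·ρ₀
  have hr0 : s * ρ 0 = c / Δt ^ 2 * Bf m + s * σ ^ (1 - αk) := by
    rw [hρ0]
    simp only [Nat.add_sub_cancel]
    rw [show ((m+1:ℕ):ℝ) - 1/2 = (m:ℝ) + 1/2 by push_cast; ring]
    rw [intervalIntegral.integral_const_mul, hI, ← hBfx m]
    linear_combination Bf m * e_s + s * e_sig
  -- s·ρ_{m+1}
  have hAf0 : Af 0 = ∫ τ in (t 0)..(t 1), K τ := by
    rw [hAf]; try norm_num
  have hBf0 : Bf 0 = ∫ τ in (t 0)..(t 1), (τ - 1/2 * Δt) * K τ := by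
    rw [hBf]; try norm_num
  have hrk : s * ρ (m+1) = c / Δt * Af 0 - c / Δt ^ 2 * Bf 0 := by
    rw [hρk]
    rw [show (3/2 : ℝ) * Δt = 1/2 * Δt + Δt by ring]
    rw [helper2 (1/2 * Δt) (t 0) (t 1), ← hAf0, ← hBf0]
    linear_combination (Δt * Af 0 - Bf 0) * e_s + Af 0 * ec
  -- middle coefficients
  have hrl : ∀ j, j < m → s * ρ (j+1)
      = c / Δt ^ 2 * Bf (m-1-j) + c / Δt * Af (m-j) - c / Δt ^ 2 * Bf (m-j) := by
    intro j hj
    have ecast1 : ((m-1-j:ℕ):ℝ) = (m:ℝ) - 1 - (j:ℝ) := by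
      rw [Nat.cast_sub (by omega : j ≤ m - 1), Nat.cast_sub (by omega : 1 ≤ m)]
      norm_num
    have ecast2 : ((m-j:ℕ):ℝ) = (m:ℝ) - (j:ℝ) := Nat.cast_sub (by omega : j ≤ m)
    have h := hρl (j+1) (by omega) (by omega)
    simp only [Nat.add_sub_add_right] at h
    rw [show ((m+1:ℕ):ℝ) - ((j+1:ℕ):ℝ) - 1/2 = ((m-1-j:ℕ):ℝ) + 1/2 by
        rw [ecast1]; push_cast; ring] at h
    rw [show ((m+1:ℕ):ℝ) - ((j+1:ℕ):ℝ) + 3/2 = ((m-j:ℕ):ℝ) + 1/2 + 1 by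
        rw [ecast2]; push_cast; ring] at h
    rw [show (((m-j:ℕ):ℝ) + 1/2 + 1) * Δt = (((m-j:ℕ):ℝ) + 1/2) * Δt + Δt by ring] at h
    rw [helper2 ((((m-j:ℕ):ℝ) + 1/2) * Δt) (t (m-j)) (t (m-j+1)), ← hAfx (m-j), ← hBfx (m-j)] at h
    rw [h, hBfx (m-1-j)]
    rw [show (m-1-j+1 : ℕ) = m-j from by omega, show (m-j-1 : ℕ) = m-1-j from by omega]
    linear_combination ((∫ τ in t (m-1-j)..t (m-j), (τ - (((m-1-j:ℕ):ℝ) + 1/2) * Δt) * K τ)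
        + (Δt * Af (m-j) - Bf (m-j))) * e_s + Af (m-j) * ec
  -- the reflected middle sum
  have hmid : ∑ j ∈ Finset.range m, s * (ρ (j+1) * x (m-j))
      = ∑ j ∈ Finset.range m,
          (c/Δt^2 * Bf j + c/Δt * Af (j+1) - c/Δt^2 * Bf (j+1)) * x (j+1) := by
    rw [← Finset.sum_range_reflect
      (fun j => (c/Δt^2 * Bf j + c/Δt * Af (j+1) - c/Δt^2 * Bf (j+1)) * x (j+1)) m]
    refine Finset.sum_congr rfl fun j hj => ?_
    have hj' := Finset.mem_range.mp hj
    rw [show (m-1-j+1 : ℕ) = m-j from by omega]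
    conv_lhs => rw [← mul_assoc, hrl j hj']
  -- final assembly
  have hconv : c * (∑ j ∈ Finset.range (m+1),
        (x j / Δt * Af j + (x (j+1) - x j) / Δt^2 * Bf j))
      = ∑ j ∈ Finset.range (m+1),
        (x j * (c / Δt * Af j) + (x (j+1) - x j) * (c / Δt^2 * Bf j)) := by
    rw [Finset.mul_sum]
    exact Finset.sum_congr rfl fun j _ => by ring
  have final := abel_aux_s13 x (fun jj => c / Δt * Af jj) (fun jj => c / Δt^2 * Bf jj) m
  simp only [hxx]
  rw [Finset.sum_range_succ, Finset.sum_range_succ']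
  simp only [Nat.add_sub_add_right, Nat.sub_self, Nat.sub_zero]
  rw [mul_add, mul_add,
    show s * ∑ j ∈ Finset.range m, ρ (j+1) * x (m-j)
      = ∑ j ∈ Finset.range m, s * (ρ (j+1) * x (m-j)) from Finset.mul_sum _ _ _,
    hmid, L]
  linear_combination hconv + final - x (m+1) * hr0 - x 0 * hrk
end

section
/- Closed form for the first-step coefficient combination (k = 1): let α ∈ (0,1) and σ = 1 − α/2. With g₀ = (1−α)∫₀¹ (s − 1/2)(σ + 1 − s)^{−α} ds + σ^{1−α} and g₁ = (1−α)∫₀¹ (3/2 − s)(σ + 1 − s)^{−α} ds, one has (2σ−1)g₀ − σg₁ = ((2σ−1)(1−σ)/(2σ)) (1+σ)^{1−α}; in particular (2σ−1)g₀ − σg₁ > 0. -/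
lemma aux_integral_15 (σ α a b : ℝ) (hσ : 0 < σ) (h1 : (1:ℝ) - α ≠ 0) (h2 : (2:ℝ) - α ≠ 0) :
    ∫ s in (0:ℝ)..1, (a*s + b) * (σ + 1 - s) ^ (-α)
      = (-(a*(σ+1)+b)/(1-α)) * (σ ^ (1-α) - (σ+1) ^ (1-α))
        + (a/(2-α)) * (σ ^ (2-α) - (σ+1) ^ (2-α)) := by
  have key : ∀ s ∈ Set.uIcc (0:ℝ) 1,
      HasDerivAt (fun s => (-(a*(σ+1)+b)/(1-α)) * (σ+1-s)^(1-α) + (a/(2-α)) * (σ+1-s)^(2-α))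
        ((a*s + b) * (σ + 1 - s) ^ (-α)) s := by
    intro s hs
    rw [Set.uIcc_of_le (by norm_num)] at hs
    have hu : 0 < σ + 1 - s := by linarith [hs.2]
    have hd : HasDerivAt (fun s : ℝ => σ + 1 - s) (-1) s := by
      simpa using (hasDerivAt_id' s).const_sub (σ+1)
    have h3 := (hd.rpow_const (p := 1-α) (Or.inl hu.ne')).const_mul (-(a*(σ+1)+b)/(1-α))
    have h4 := (hd.rpow_const (p := 2-α) (Or.inl hu.ne')).const_mul (a/(2-α))
    refine (h3.add h4).congr_deriv ?_
    rw [show (1:ℝ)-α-1 = -α by ring, show (2:ℝ)-α-1 = 1-α by ring,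
      show (1:ℝ)-α = 1 + -α by ring, Real.rpow_add hu, Real.rpow_one]
    have c1 : -(a*(σ+1)+b)/(1 + -α) * (-1*(1 + -α)*(σ+1-s)^(-α))
        = (a*(σ+1)+b) * (σ+1-s)^(-α) := by
      have h1' : (1:ℝ) + -α ≠ 0 := by rw [show (1:ℝ)+-α = 1-α by ring]; exact h1
      field_simp
    have c2 : a/(2-α) * (-1*(2-α)*((σ+1-s)*(σ+1-s)^(-α)))
        = -a * ((σ+1-s)*(σ+1-s)^(-α)) := by field_simp
    rw [c1, c2]; ring
  have hcont : ContinuousOn (fun s : ℝ => (a*s+b)*(σ+1-s)^(-α)) (Set.uIcc 0 1) := by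
    apply ContinuousOn.mul (by fun_prop)
    apply ContinuousOn.rpow_const (by fun_prop)
    intro s hs
    rw [Set.uIcc_of_le (by norm_num)] at hs
    left
    have : 0 < σ + 1 - s := by linarith [hs.2]
    exact this.ne'
  rw [intervalIntegral.integral_eq_sub_of_hasDerivAt key hcont.intervalIntegrable]
  norm_num
  ring

/-- Closed form for the first-step coefficient combination (k = 1) of the L2-1σ
scheme with weight `σ = 1 − α/2`:
`(2σ−1)g₀ − σg₁ = ((2σ−1)(1−σ)/(2σ)) (1+σ)^{1−α} > 0`. -/
theorem stmt_15 (α : ℝ) (hα : α ∈ Set.Ioo (0 : ℝ) 1) (σ g₀ g₁ : ℝ)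
    (hσ : σ = 1 - α / 2)
    (hg0 : g₀ = (1 - α) * (∫ s in (0:ℝ)..1, (s - 1/2) * (σ + 1 - s) ^ (-α)) + σ ^ (1 - α))
    (hg1 : g₁ = (1 - α) * ∫ s in (0:ℝ)..1, (3/2 - s) * (σ + 1 - s) ^ (-α)) :
    (2*σ - 1) * g₀ - σ * g₁ = ((2*σ - 1) * (1 - σ) / (2*σ)) * (1 + σ) ^ (1 - α)
    ∧ 0 < (2*σ - 1) * g₀ - σ * g₁ := by
  obtain ⟨hα0, hα1⟩ := hα
  subst hσ
  set σ : ℝ := 1 - α / 2 with hσdef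
  have hσpos : 0 < σ := by rw [hσdef]; linarith
  have h1 : (1:ℝ) - α ≠ 0 := by
    have : (0:ℝ) < 1 - α := by linarith
    exact this.ne'
  have h2 : (2:ℝ) - α ≠ 0 := by
    have : (0:ℝ) < 2 - α := by linarith
    exact this.ne'
  have e0 : (∫ s in (0:ℝ)..1, (s - 1/2) * (σ + 1 - s) ^ (-α))
      = ∫ s in (0:ℝ)..1, ((1:ℝ)*s + (-1/2)) * (σ + 1 - s) ^ (-α) :=
    intervalIntegral.integral_congr (fun s _ => by ring_nf)
  have e1 : (∫ s in (0:ℝ)..1, (3/2 - s) * (σ + 1 - s) ^ (-α))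
      = ∫ s in (0:ℝ)..1, ((-1:ℝ)*s + 3/2) * (σ + 1 - s) ^ (-α) :=
    intervalIntegral.integral_congr (fun s _ => by ring_nf)
  rw [e0, aux_integral_15 σ α 1 (-1/2) hσpos h1 h2] at hg0
  rw [e1, aux_integral_15 σ α (-1) (3/2) hσpos h1 h2] at hg1
  have hX : (σ+1) ^ ((2:ℝ)-α) = (σ+1) * (σ+1) ^ ((1:ℝ)-α) := by
    rw [show (2:ℝ)-α = 1+(1-α) by ring, Real.rpow_add (by linarith), Real.rpow_one]
  have hY : σ ^ ((2:ℝ)-α) = σ * σ ^ ((1:ℝ)-α) := by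
    rw [show (2:ℝ)-α = 1+(1-α) by ring, Real.rpow_add hσpos, Real.rpow_one]
  rw [hX, hY] at hg0 hg1
  have hflip : (1:ℝ) + σ = σ + 1 := by ring
  have hα2 : α = 2 - 2*σ := by rw [hσdef]; ring
  have hEq : (2*σ - 1) * g₀ - σ * g₁ = ((2*σ - 1) * (1 - σ) / (2*σ)) * (1 + σ) ^ (1 - α) := by
    rw [hg0, hg1, hflip]
    have hσ' : (2:ℝ)*σ ≠ 0 := by positivity
    have h1' : (1:ℝ) - (2 - 2*σ) ≠ 0 := by rw [← hα2]; exact h1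
    have h2' : (2:ℝ) - (2 - 2*σ) ≠ 0 := by rw [← hα2]; exact h2
    generalize σ ^ (1 - α) = P
    generalize (σ + 1) ^ (1 - α) = Q
    rw [hσdef]
    have h3 : (2:ℝ) * (1 - α / 2) ≠ 0 := by intro h; linarith
    field_simp
    ring
  refine ⟨hEq, ?_⟩
  rw [hEq]
  have hXpos : (0:ℝ) < (1 + σ) ^ (1 - α) := Real.rpow_pos_of_pos (by linarith) _
  have : (0:ℝ) < (2*σ - 1) * (1 - σ) / (2*σ) := by
    apply div_pos
    · apply mul_pos <;> [skip; skip] <;> rw [hσdef] <;> linarith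
    · positivity
  exact mul_pos this hXpos
end

section
/- Closed form for the coefficient combination at steps k ≥ 2: let α ∈ (0,1) and σ = 1 − α/2. With g₀ = (1−α)∫₀¹ (s − 1/2)(σ + 1 − s)^{−α} ds + σ^{1−α} and g₁ = (1−α)[∫₀¹ (s − 1/2)(σ + 2 − s)^{−α} ds + ∫₀¹ (3/2 − s)(σ + 1 − s)^{−α} ds], one has (2σ−1)g₀ − σg₁ = (1+σ)^{1−α} ((4σ−1)/(2σ) − ((2+σ)/(1+σ))^{1−α}), and moreover (2σ−1)g₀ − σg₁ ≥ (2σ−1)(1−σ)/(2σ(1+σ)^{α}) > 0. -/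
open Real

/-- Auxiliary integral computation. -/
lemma integ_aux (α c d : ℝ) (h0 : 0 < α) (h1 : α < 1) (hc : 1 < c) :
    (∫ s in (0:ℝ)..1, (s - d) * (c - s) ^ (-α))
      = ((d - c) * (c-1)^(1-α) / (1-α) + (c-1)^(2-α) / (2-α))
        - ((d - c) * c^(1-α) / (1-α) + c^(2-α) / (2-α)) := by
  have h1α : (1:ℝ) - α ≠ 0 := by linarith
  have h2α : (2:ℝ) - α ≠ 0 := by linarith
  have hderiv : ∀ s ∈ Set.uIcc (0:ℝ) 1,
      HasDerivAt (fun t => (d - c) * (c - t) ^ (1-α) / (1-α) + (c - t) ^ (2-α) / (2-α))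
        ((s - d) * (c - s) ^ (-α)) s := by
    intro s hs
    rw [Set.uIcc_of_le (by norm_num)] at hs
    have hpos : 0 < c - s := by cases hs; linarith
    have hne : c - s ≠ 0 := ne_of_gt hpos
    have hb : HasDerivAt (fun t : ℝ => c - t) (-1) s := by
      simpa using (hasDerivAt_id s).const_sub c
    have hd1 : HasDerivAt (fun t => (c - t) ^ (1-α)) (-1 * (1-α) * (c - s) ^ (1-α-1)) s :=
      hb.rpow_const (Or.inl hne)
    have hd2 : HasDerivAt (fun t => (c - t) ^ (2-α)) (-1 * (2-α) * (c - s) ^ (2-α-1)) s :=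
      hb.rpow_const (Or.inl hne)
    have := ((hd1.const_mul (d - c)).div_const (1-α)).add (hd2.div_const (2-α))
    refine HasDerivAt.congr_deriv this ?_
    have e1 : (1:ℝ)-α-1 = -α := by ring
    have e2 : (2:ℝ)-α-1 = 1-α := by ring
    have e3 : (c - s) ^ ((1:ℝ)-α) = (c - s) * (c - s) ^ (-α) := by
      rw [show (1:ℝ)-α = 1 + -α by ring, Real.rpow_add hpos, Real.rpow_one]
    rw [e1, e2, e3]
    field_simp
    ring
  have hint : IntervalIntegrable (fun s => (s - d) * (c - s) ^ (-α)) MeasureTheory.volume 0 1 := by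
    apply ContinuousOn.intervalIntegrable
    apply ContinuousOn.mul (by fun_prop)
    apply ContinuousOn.rpow_const (by fun_prop)
    intro x hx
    rw [Set.uIcc_of_le (by norm_num)] at hx
    left
    have : x ≤ 1 := hx.2
    intro h; nlinarith [hx.1]
  have := intervalIntegral.integral_eq_sub_of_hasDerivAt hderiv hint
  rw [this]
  norm_num

set_option maxHeartbeats 1600000 in
/-- Closed form for the L2-1σ coefficient combination at steps `k ≥ 2` with weight
`σ = 1 − α/2`:
`(2σ−1)g₀ − σg₁ = (1+σ)^{1−α}((4σ−1)/(2σ) − ((2+σ)/(1+σ))^{1−α})` and moreover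
`(2σ−1)g₀ − σg₁ ≥ (2σ−1)(1−σ)/(2σ(1+σ)^α) > 0`. -/
theorem stmt_16 (α : ℝ) (hα : α ∈ Set.Ioo (0 : ℝ) 1) (σ g₀ g₁ : ℝ)
    (hσ : σ = 1 - α / 2)
    (hg0 : g₀ = (1 - α) * (∫ s in (0:ℝ)..1, (s - 1/2) * (σ + 1 - s) ^ (-α)) + σ ^ (1 - α))
    (hg1 : g₁ = (1 - α) * ((∫ s in (0:ℝ)..1, (s - 1/2) * (σ + 2 - s) ^ (-α))
        + ∫ s in (0:ℝ)..1, (3/2 - s) * (σ + 1 - s) ^ (-α))) :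
    (2*σ - 1) * g₀ - σ * g₁
        = (1 + σ) ^ (1 - α) * ((4*σ - 1) / (2*σ) - ((2 + σ) / (1 + σ)) ^ (1 - α))
    ∧ (2*σ - 1) * g₀ - σ * g₁ ≥ (2*σ - 1) * (1 - σ) / (2 * σ * (1 + σ) ^ α)
    ∧ 0 < (2*σ - 1) * (1 - σ) / (2 * σ * (1 + σ) ^ α) := by
  obtain ⟨h0, h1⟩ := hα
  have hσ2 : 1/2 < σ := by rw [hσ]; linarith
  have hσ1 : σ < 1 := by rw [hσ]; linarith
  have hσpos : 0 < σ := by linarith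
  have h1σ : (0:ℝ) < 1 + σ := by linarith
  have h2σ : (0:ℝ) < 2 + σ := by linarith
  -- compute the three integrals
  have e1 : σ + 1 - 1 = σ := by ring
  have e2 : σ + 2 - 1 = 1 + σ := by ring
  have hi1 := integ_aux α (σ+1) (1/2) h0 h1 (by linarith)
  have hi2 := integ_aux α (σ+2) (1/2) h0 h1 (by linarith)
  have hi3' := integ_aux α (σ+1) (3/2) h0 h1 (by linarith)
  have hi3 : (∫ s in (0:ℝ)..1, (3/2 - s) * (σ + 1 - s) ^ (-α))
      = -(((3/2 - (σ+1)) * (σ+1-1)^(1-α) / (1-α) + (σ+1-1)^(2-α) / (2-α))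
        - ((3/2 - (σ+1)) * (σ+1)^(1-α) / (1-α) + (σ+1)^(2-α) / (2-α))) := by
    rw [← hi3', ← intervalIntegral.integral_neg]
    congr 1; funext s; ring
  rw [hi1] at hg0
  rw [hi2, hi3] at hg1
  clear hi1 hi2 hi3 hi3'
  rw [e1] at hg0 hg1
  rw [e2] at hg1
  have ha1 : σ + 1 = 1 + σ := by ring
  have ha2 : σ + 2 = 2 + σ := by ring
  rw [ha1] at hg0 hg1
  rw [ha2] at hg1
  -- rpow simplifications
  have pσ' : σ ^ ((2:ℝ)-α) = σ ^ ((1:ℝ)-α) * σ := by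
    rw [show (2:ℝ)-α = (1-α) + 1 by ring, Real.rpow_add_one (ne_of_gt hσpos)]
  have pB' : (1+σ) ^ ((2:ℝ)-α) = (1+σ) ^ ((1:ℝ)-α) * (1+σ) := by
    rw [show (2:ℝ)-α = (1-α) + 1 by ring, Real.rpow_add_one (ne_of_gt h1σ)]
  have pC' : (2+σ) ^ ((2:ℝ)-α) = (2+σ) ^ ((1:ℝ)-α) * (2+σ) := by
    rw [show (2:ℝ)-α = (1-α) + 1 by ring, Real.rpow_add_one (ne_of_gt h2σ)]
  rw [pσ', pB', pC'] at hg1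
  rw [pσ', pB'] at hg0
  obtain ⟨A, hA⟩ : ∃ A : ℝ, A = σ ^ ((1:ℝ)-α) := ⟨_, rfl⟩
  obtain ⟨B, hB⟩ : ∃ B : ℝ, B = (1+σ) ^ ((1:ℝ)-α) := ⟨_, rfl⟩
  obtain ⟨C, hC⟩ : ∃ C : ℝ, C = (2+σ) ^ ((1:ℝ)-α) := ⟨_, rfl⟩
  rw [← hA, ← hB] at hg0
  rw [← hA, ← hB, ← hC] at hg1
  have hApos : 0 < A := hA ▸ Real.rpow_pos_of_pos hσpos _
  have hBpos : 0 < B := hB ▸ Real.rpow_pos_of_pos h1σ _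
  have hCpos : 0 < C := hC ▸ Real.rpow_pos_of_pos h2σ _
  have h1α : (1:ℝ) - α ≠ 0 := by linarith
  have h2α : (2:ℝ) - α ≠ 0 := by linarith
  -- the main closed form
  have key : (2*σ - 1) * g₀ - σ * g₁ = B * (4*σ - 1) / (2*σ) - C := by
    rw [hg0, hg1, hσ]
    field_simp
    ring
  have hdiv : ((2 + σ) / (1 + σ)) ^ ((1:ℝ) - α) = C / B := by
    rw [hC, hB, ← Real.div_rpow (le_of_lt h2σ) (le_of_lt h1σ)]
  have part1 : (2*σ - 1) * g₀ - σ * g₁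
      = (1 + σ) ^ (1 - α) * ((4*σ - 1) / (2*σ) - ((2 + σ) / (1 + σ)) ^ (1 - α)) := by
    rw [key, hdiv, ← hB]
    field_simp
  refine ⟨part1, ?_, ?_⟩
  · -- Bernoulli: C ≤ 3σ/(1+σ) * B
    have hbern : ((2+σ)/(1+σ)) ^ ((1:ℝ)-α) ≤ 1 + (1-α) * (1/(1+σ)) := by
      have h : (2+σ)/(1+σ) = 1 + 1/(1+σ) := by field_simp; ring
      rw [h]
      have hs : (-1:ℝ) ≤ 1/(1+σ) := by
        have : (0:ℝ) ≤ 1/(1+σ) := by positivity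
        linarith
      exact rpow_one_add_le_one_add_mul_self hs (by linarith) (by linarith)
    have hα2σ : α = 2 - 2*σ := by rw [hσ]; ring
    have hbern' : C ≤ (3*σ/(1+σ)) * B := by
      rw [hdiv] at hbern
      have h2 : C / B ≤ 3*σ/(1+σ) := by
        refine hbern.trans (le_of_eq ?_)
        rw [hα2σ]; field_simp; ring
      calc C = (C / B) * B := by field_simp
        _ ≤ (3*σ/(1+σ)) * B := by
            apply mul_le_mul_of_nonneg_right h2 (le_of_lt hBpos)
    have hBα : (1+σ) ^ α * B = 1 + σ := by
      rw [hB, ← Real.rpow_add h1σ]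
      norm_num
    have hαB : (0:ℝ) < (1+σ) ^ α := Real.rpow_pos_of_pos h1σ _
    rw [key]
    rw [ge_iff_le, div_le_iff₀ (by positivity)]
    have expand : (B * (4*σ - 1) / (2*σ) - C) * (2 * σ * (1 + σ) ^ α)
        = (B * (4*σ-1) - 2*σ*C) * (1+σ)^α := by field_simp
    rw [expand]
    have : (2*σ - 1) * (1 - σ) = (B * (4*σ-1) - 2*σ*(3*σ/(1+σ))*B) * (1+σ)^α := by
      have : (B * (4*σ-1) - 2*σ*(3*σ/(1+σ))*B) * (1+σ)^α
          = (B * (1+σ)^α) * ((4*σ-1) - 6*σ^2/(1+σ)) := by ring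
      rw [this, mul_comm B _, hBα]
      field_simp
      ring
    rw [this]
    apply mul_le_mul_of_nonneg_right _ (le_of_lt hαB)
    nlinarith [hbern', hσpos]
  · have hnum : 0 < (2*σ - 1) * (1 - σ) := by nlinarith
    have hden : 0 < 2 * σ * (1 + σ) ^ α := by positivity
    exact div_pos hnum hden
end
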